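/- arXiv:2509.06841 — 4 statements merged into one kernel-verified Lean document; each statement's English description precedes it below -/
import Mathlib

section
/- Let G and H be finite simple graphs such that H has at least one vertex, and let h be a surjective p-morphism from Pos(G) onto Pos(H) satisfying h(V^G) ⊆ V^H. Then for every edge e = uv of G, the set {h(e_1), h(e_2)} equals {(g(u)g(v))_1, (g(u)g(v))_2}, where g : V^G → V^H is the restriction of h to V^G; in particular, g(u)g(v) is an edge of H. -/
/-- The carrier of the poset `Pos(G)`: vertices, two copies of the vertices,
two copies of the edges, and four auxiliary elements. -/
inductive PosElem (V E : Type) : Type where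
  | ver (v : V)
  | verA (v : V)
  | verB (v : V)
  | edge1 (e : E)
  | edge2 (e : E)
  | top1
  | top2
  | infA
  | infB

/-- The covering relation of the poset `Pos(G)`, for a graph `G` together with a
choice `ε` of an ordered pair of endpoints for each edge. -/
inductive PosCov {V : Type} (G : SimpleGraph V) (ε : ↥G.edgeSet → V × V) :
    PosElem V ↥G.edgeSet → PosElem V ↥G.edgeSet → Prop where
  | ver_verA (v : V) : PosCov G ε (.ver v) (.verA v)
  | ver_verB (v : V) : PosCov G ε (.ver v) (.verB v)
  | verA_infA (v : V) : PosCov G ε (.verA v) .infA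
  | verB_infB (v : V) : PosCov G ε (.verB v) .infB
  | edge1_top1 (e : ↥G.edgeSet) : PosCov G ε (.edge1 e) .top1
  | edge1_top2 (e : ↥G.edgeSet) : PosCov G ε (.edge1 e) .top2
  | edge2_top1 (e : ↥G.edgeSet) : PosCov G ε (.edge2 e) .top1
  | edge2_top2 (e : ↥G.edgeSet) : PosCov G ε (.edge2 e) .top2
  | isolA_top1 (v : V) (hv : ∀ w, ¬ G.Adj v w) : PosCov G ε (.verA v) .top1
  | isolA_top2 (v : V) (hv : ∀ w, ¬ G.Adj v w) : PosCov G ε (.verA v) .top2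
  | isolB_top1 (v : V) (hv : ∀ w, ¬ G.Adj v w) : PosCov G ε (.verB v) .top1
  | isolB_top2 (v : V) (hv : ∀ w, ¬ G.Adj v w) : PosCov G ε (.verB v) .top2
  | ua_edge1 (e : ↥G.edgeSet) : PosCov G ε (.verA (ε e).1) (.edge1 e)
  | vb_edge1 (e : ↥G.edgeSet) : PosCov G ε (.verB (ε e).2) (.edge1 e)
  | ub_edge2 (e : ↥G.edgeSet) : PosCov G ε (.verB (ε e).1) (.edge2 e)
  | va_edge2 (e : ↥G.edgeSet) : PosCov G ε (.verA (ε e).2) (.edge2 e)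

/-- The order of `Pos(G)`: the reflexive-transitive closure of the covering relation. -/
def PosLe {V : Type} (G : SimpleGraph V) (ε : ↥G.edgeSet → V × V)
    (x y : PosElem V ↥G.edgeSet) : Prop :=
  Relation.ReflTransGen (PosCov G ε) x y

/-- `ε` assigns to every edge an ordered pair of its two endpoints. -/
def OrientOK {V : Type} (G : SimpleGraph V) (ε : ↥G.edgeSet → V × V) : Prop :=
  ∀ e : ↥G.edgeSet, (e : Sym2 V) = s((ε e).1, (ε e).2)

/-- A p-morphism with respect to given order relations: the homomorphism property (HP)
and the backward property (BP). -/
def IsPMorphismRel {α β : Type} (leP : α → α → Prop) (leQ : β → β → Prop)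
    (h : α → β) : Prop :=
  (∀ x y, leP x y → leQ (h x) (h y)) ∧
  (∀ (x : α) (y : β), leQ (h x) y → ∃ z : α, leP x z ∧ h z = y)

section PosLemmas

open PosElem

variable {V : Type} {G : SimpleGraph V} {ε : ↥G.edgeSet → V × V}

lemma cov_le {x y : PosElem V ↥G.edgeSet} (hc : PosCov G ε x y) : PosLe G ε x y :=
  Relation.ReflTransGen.single hc

lemma le_ver {x : PosElem V ↥G.edgeSet} {w : V} (hle : PosLe G ε x (.ver w)) :
    x = .ver w := by
  induction hle using Relation.ReflTransGen.head_induction_on with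
  | refl => rfl
  | head h1 _ ih => subst ih; cases h1

lemma le_verA {x : PosElem V ↥G.edgeSet} {w : V} (hle : PosLe G ε x (.verA w)) :
    x = .verA w ∨ x = .ver w := by
  induction hle using Relation.ReflTransGen.head_induction_on with
  | refl => exact Or.inl rfl
  | head h1 _ ih =>
    rcases ih with h' | h'
    · subst h'; cases h1; exact Or.inr rfl
    · subst h'; cases h1

lemma le_verB {x : PosElem V ↥G.edgeSet} {w : V} (hle : PosLe G ε x (.verB w)) :
    x = .verB w ∨ x = .ver w := by
  induction hle using Relation.ReflTransGen.head_induction_on with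
  | refl => exact Or.inl rfl
  | head h1 _ ih =>
    rcases ih with h' | h'
    · subst h'; cases h1; exact Or.inr rfl
    · subst h'; cases h1

lemma le_edge1 {x : PosElem V ↥G.edgeSet} {f : ↥G.edgeSet}
    (hle : PosLe G ε x (.edge1 f)) :
    x = .edge1 f ∨ x = .verA (ε f).1 ∨ x = .verB (ε f).2 ∨
      x = .ver (ε f).1 ∨ x = .ver (ε f).2 := by
  induction hle using Relation.ReflTransGen.head_induction_on with
  | refl => exact Or.inl rfl
  | head h1 _ ih =>
    rcases ih with h' | h' | h' | h' | h' <;> subst h' <;> cases h1 <;> simp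

lemma le_edge2 {x : PosElem V ↥G.edgeSet} {f : ↥G.edgeSet}
    (hle : PosLe G ε x (.edge2 f)) :
    x = .edge2 f ∨ x = .verB (ε f).1 ∨ x = .verA (ε f).2 ∨
      x = .ver (ε f).1 ∨ x = .ver (ε f).2 := by
  induction hle using Relation.ReflTransGen.head_induction_on with
  | refl => exact Or.inl rfl
  | head h1 _ ih =>
    rcases ih with h' | h' | h' | h' | h' <;> subst h' <;> cases h1 <;> simp

lemma le_infA {x : PosElem V ↥G.edgeSet} (hle : PosLe G ε x .infA) :
    x = .infA ∨ (∃ w, x = .verA w) ∨ (∃ w, x = .ver w) := by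
  induction hle using Relation.ReflTransGen.head_induction_on with
  | refl => exact Or.inl rfl
  | head h1 _ ih =>
    rcases ih with h' | ⟨w, h'⟩ | ⟨w, h'⟩ <;> subst h' <;> cases h1 <;> simp

lemma le_infB {x : PosElem V ↥G.edgeSet} (hle : PosLe G ε x .infB) :
    x = .infB ∨ (∃ w, x = .verB w) ∨ (∃ w, x = .ver w) := by
  induction hle using Relation.ReflTransGen.head_induction_on with
  | refl => exact Or.inl rfl
  | head h1 _ ih =>
    rcases ih with h' | ⟨w, h'⟩ | ⟨w, h'⟩ <;> subst h' <;> cases h1 <;> simp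

end PosLemmas

section PosLemmas2

open PosElem

variable {V : Type} {G : SimpleGraph V} {ε : ↥G.edgeSet → V × V}

lemma top1_le {y : PosElem V ↥G.edgeSet} (hle : PosLe G ε .top1 y) : y = .top1 := by
  induction hle with
  | refl => rfl
  | tail _ h2 ih => subst ih; cases h2

lemma top2_le {y : PosElem V ↥G.edgeSet} (hle : PosLe G ε .top2 y) : y = .top2 := by
  induction hle with
  | refl => rfl
  | tail _ h2 ih => subst ih; cases h2

lemma infA_le {y : PosElem V ↥G.edgeSet} (hle : PosLe G ε .infA y) : y = .infA := by
  induction hle with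
  | refl => rfl
  | tail _ h2 ih => subst ih; cases h2

lemma infB_le {y : PosElem V ↥G.edgeSet} (hle : PosLe G ε .infB y) : y = .infB := by
  induction hle with
  | refl => rfl
  | tail _ h2 ih => subst ih; cases h2

lemma edge1_le {y : PosElem V ↥G.edgeSet} {e : ↥G.edgeSet}
    (hle : PosLe G ε (.edge1 e) y) : y = .edge1 e ∨ y = .top1 ∨ y = .top2 := by
  induction hle with
  | refl => exact Or.inl rfl
  | tail _ h2 ih => rcases ih with h' | h' | h' <;> subst h' <;> cases h2 <;> simp

lemma edge2_le {y : PosElem V ↥G.edgeSet} {e : ↥G.edgeSet}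
    (hle : PosLe G ε (.edge2 e) y) : y = .edge2 e ∨ y = .top1 ∨ y = .top2 := by
  induction hle with
  | refl => exact Or.inl rfl
  | tail _ h2 ih => rcases ih with h' | h' | h' <;> subst h' <;> cases h2 <;> simp

lemma verA_le {y : PosElem V ↥G.edgeSet} {a : V} (hle : PosLe G ε (.verA a) y) :
    y = .verA a ∨ y = .infA ∨ y = .top1 ∨ y = .top2 ∨
      (∃ f, y = .edge1 f) ∨ (∃ f, y = .edge2 f) := by
  induction hle with
  | refl => exact Or.inl rfl
  | tail _ h2 ih =>
    rcases ih with h' | h' | h' | h' | ⟨f, h'⟩ | ⟨f, h'⟩ <;> subst h' <;> cases h2 <;> simp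

lemma verB_le {y : PosElem V ↥G.edgeSet} {a : V} (hle : PosLe G ε (.verB a) y) :
    y = .verB a ∨ y = .infB ∨ y = .top1 ∨ y = .top2 ∨
      (∃ f, y = .edge1 f) ∨ (∃ f, y = .edge2 f) := by
  induction hle with
  | refl => exact Or.inl rfl
  | tail _ h2 ih =>
    rcases ih with h' | h' | h' | h' | ⟨f, h'⟩ | ⟨f, h'⟩ <;> subst h' <;> cases h2 <;> simp

lemma up_to_max (x : PosElem V ↥G.edgeSet) :
    PosLe G ε x .top1 ∨ PosLe G ε x .top2 ∨ PosLe G ε x .infA ∨ PosLe G ε x .infB := by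
  cases x with
  | ver v => exact Or.inr (Or.inr (Or.inl
      ((cov_le (PosCov.verA_infA v)).head (PosCov.ver_verA v))))
  | verA v => exact Or.inr (Or.inr (Or.inl (cov_le (PosCov.verA_infA v))))
  | verB v => exact Or.inr (Or.inr (Or.inr (cov_le (PosCov.verB_infB v))))
  | edge1 e => exact Or.inl (cov_le (PosCov.edge1_top1 e))
  | edge2 e => exact Or.inl (cov_le (PosCov.edge2_top1 e))
  | top1 => exact Or.inl Relation.ReflTransGen.refl
  | top2 => exact Or.inr (Or.inl Relation.ReflTransGen.refl)
  | infA => exact Or.inr (Or.inr (Or.inl Relation.ReflTransGen.refl))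
  | infB => exact Or.inr (Or.inr (Or.inr Relation.ReflTransGen.refl))

lemma verAB_le_tops (hε : OrientOK G ε) (w : V) :
    PosLe G ε (.verA w) .top1 ∧ PosLe G ε (.verA w) .top2 ∧
      PosLe G ε (.verB w) .top1 ∧ PosLe G ε (.verB w) .top2 := by
  by_cases hw : ∀ w', ¬ G.Adj w w'
  · exact ⟨cov_le (PosCov.isolA_top1 w hw), cov_le (PosCov.isolA_top2 w hw),
      cov_le (PosCov.isolB_top1 w hw), cov_le (PosCov.isolB_top2 w hw)⟩
  · push_neg at hw
    obtain ⟨w', hww⟩ := hw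
    set f : ↥G.edgeSet := ⟨s(w, w'), (SimpleGraph.mem_edgeSet G).mpr hww⟩ with hf
    have hfe : s(w, w') = s((ε f).1, (ε f).2) := hε f
    rcases Sym2.eq_iff.mp hfe with ⟨h1, _⟩ | ⟨h1, _⟩
    · refine ⟨?_, ?_, ?_, ?_⟩
      · exact (cov_le (PosCov.edge1_top1 f)).head (h1 ▸ PosCov.ua_edge1 f)
      · exact (cov_le (PosCov.edge1_top2 f)).head (h1 ▸ PosCov.ua_edge1 f)
      · exact (cov_le (PosCov.edge2_top1 f)).head (h1 ▸ PosCov.ub_edge2 f)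
      · exact (cov_le (PosCov.edge2_top2 f)).head (h1 ▸ PosCov.ub_edge2 f)
    · refine ⟨?_, ?_, ?_, ?_⟩
      · exact (cov_le (PosCov.edge2_top1 f)).head (h1 ▸ PosCov.va_edge2 f)
      · exact (cov_le (PosCov.edge2_top2 f)).head (h1 ▸ PosCov.va_edge2 f)
      · exact (cov_le (PosCov.edge1_top1 f)).head (h1 ▸ PosCov.vb_edge1 f)
      · exact (cov_le (PosCov.edge1_top2 f)).head (h1 ▸ PosCov.vb_edge1 f)

lemma ver_le_all (hε : OrientOK G ε) (w : V) :
    PosLe G ε (.ver w) .top1 ∧ PosLe G ε (.ver w) .top2 ∧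
      PosLe G ε (.ver w) .infA ∧ PosLe G ε (.ver w) .infB := by
  obtain ⟨h1, h2, _, _⟩ := verAB_le_tops hε w
  exact ⟨h1.head (PosCov.ver_verA w), h2.head (PosCov.ver_verA w),
    (cov_le (PosCov.verA_infA w)).head (PosCov.ver_verA w),
    (cov_le (PosCov.verB_infB w)).head (PosCov.ver_verB w)⟩

lemma pigeon3 {α : Type} {p q r A B : α} (hpq : p ≠ q) (hpr : p ≠ r) (hqr : q ≠ r)
    (h1 : p = A ∨ p = B) (h2 : q = A ∨ q = B) (h3 : r = A ∨ r = B) : False := by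
  rcases h1 with h | h <;> rcases h2 with h' | h' <;> rcases h3 with h'' | h'' <;>
    first
      | exact hpq (h.trans h'.symm)
      | exact hpr (h.trans h''.symm)
      | exact hqr (h'.trans h''.symm)

end PosLemmas2
theorem edge_copies_image {VG VH : Type} [Fintype VG] [Fintype VH] [Nonempty VH]
    (G : SimpleGraph VG) (H : SimpleGraph VH)
    (εG : ↥G.edgeSet → VG × VG) (hεG : OrientOK G εG)
    (εH : ↥H.edgeSet → VH × VH) (hεH : OrientOK H εH)
    (h : PosElem VG ↥G.edgeSet → PosElem VH ↥H.edgeSet)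
    (hsurj : Function.Surjective h)
    (hpm : IsPMorphismRel (PosLe G εG) (PosLe H εH) h)
    (g : VG → VH) (hg : ∀ v : VG, h (PosElem.ver v) = PosElem.ver (g v)) :
    ∀ (u v : VG) (e : ↥G.edgeSet), (e : Sym2 VG) = s(u, v) →
      H.Adj (g u) (g v) ∧
      ∃ f : ↥H.edgeSet, (f : Sym2 VH) = s(g u, g v) ∧
        ({h (PosElem.edge1 e), h (PosElem.edge2 e)} : Set (PosElem VH ↥H.edgeSet)) =
          {PosElem.edge1 f, PosElem.edge2 f} := by
  classical
  obtain ⟨hmono, hbp⟩ := hpm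
  intro u v e he
  -- maximality transfer for the four maximal elements of Pos(G)
  have hmaxT1 : ∀ t, PosLe H εH (h .top1) t → t = h .top1 := by
    intro t ht
    obtain ⟨z, hz, hz2⟩ := hbp _ t ht
    rw [top1_le hz] at hz2; exact hz2.symm
  have hmaxT2 : ∀ t, PosLe H εH (h .top2) t → t = h .top2 := by
    intro t ht
    obtain ⟨z, hz, hz2⟩ := hbp _ t ht
    rw [top2_le hz] at hz2; exact hz2.symm
  -- every maximal element of Pos(H) is the image of one of the four maximals of Pos(G)
  have hsurjmax : ∀ m : PosElem VH ↥H.edgeSet, (∀ t, PosLe H εH m t → t = m) →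
      m = h .top1 ∨ m = h .top2 ∨ m = h .infA ∨ m = h .infB := by
    intro m hm
    obtain ⟨x, hx⟩ := hsurj m
    rcases up_to_max (G := G) (ε := εG) x with h1 | h1 | h1 | h1
    · have := hmono _ _ h1; rw [hx] at this; exact Or.inl (hm _ this).symm
    · have := hmono _ _ h1; rw [hx] at this; exact Or.inr (Or.inl (hm _ this).symm)
    · have := hmono _ _ h1; rw [hx] at this
      exact Or.inr (Or.inr (Or.inl (hm _ this).symm))
    · have := hmono _ _ h1; rw [hx] at this
      exact Or.inr (Or.inr (Or.inr (hm _ this).symm))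
  -- core lemma: elements whose up-set is contained in itself plus the two tops
  -- are mapped to edge copies
  have hcore : ∀ x : PosElem VG ↥G.edgeSet,
      PosLe G εG x .top1 → PosLe G εG x .top2 →
      (∀ z, PosLe G εG x z → z = x ∨ z = .top1 ∨ z = .top2) →
      ∃ f, h x = .edge1 f ∨ h x = .edge2 f := by
    intro x hxt1 hxt2 hupG
    have hup : ∀ t, PosLe H εH (h x) t → t = h x ∨ t = h .top1 ∨ t = h .top2 := by
      intro t ht
      obtain ⟨z, hz, hz2⟩ := hbp _ t ht
      rcases hupG z hz with h' | h' | h' <;> rw [h'] at hz2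
      · exact Or.inl hz2.symm
      · exact Or.inr (Or.inl hz2.symm)
      · exact Or.inr (Or.inr hz2.symm)
    cases hc : h x with
    | ver w =>
      exfalso
      obtain ⟨c1, c2, c3, _⟩ := ver_le_all hεH w
      rw [hc] at hup
      have m1 : (PosElem.top1 : PosElem VH ↥H.edgeSet) = h .top1 ∨ .top1 = h .top2 := by
        rcases hup _ c1 with h' | h' | h'
        · exact absurd h' (by simp)
        · exact Or.inl h'
        · exact Or.inr h'
      have m2 : (PosElem.top2 : PosElem VH ↥H.edgeSet) = h .top1 ∨ .top2 = h .top2 := by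
        rcases hup _ c2 with h' | h' | h'
        · exact absurd h' (by simp)
        · exact Or.inl h'
        · exact Or.inr h'
      have m3 : (PosElem.infA : PosElem VH ↥H.edgeSet) = h .top1 ∨ .infA = h .top2 := by
        rcases hup _ c3 with h' | h' | h'
        · exact absurd h' (by simp)
        · exact Or.inl h'
        · exact Or.inr h'
      exact pigeon3 (by simp) (by simp) (by simp) m1 m2 m3
    | verA w =>
      exfalso
      obtain ⟨c1, c2, _, _⟩ := verAB_le_tops hεH w
      rw [hc] at hup
      have m1 : (PosElem.top1 : PosElem VH ↥H.edgeSet) = h .top1 ∨ .top1 = h .top2 := by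
        rcases hup _ c1 with h' | h' | h'
        · exact absurd h' (by simp)
        · exact Or.inl h'
        · exact Or.inr h'
      have m2 : (PosElem.top2 : PosElem VH ↥H.edgeSet) = h .top1 ∨ .top2 = h .top2 := by
        rcases hup _ c2 with h' | h' | h'
        · exact absurd h' (by simp)
        · exact Or.inl h'
        · exact Or.inr h'
      have m3 : (PosElem.infA : PosElem VH ↥H.edgeSet) = h .top1 ∨ .infA = h .top2 := by
        rcases hup _ (cov_le (PosCov.verA_infA w)) with h' | h' | h'
        · exact absurd h' (by simp)
        · exact Or.inl h'
        · exact Or.inr h'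
      exact pigeon3 (by simp) (by simp) (by simp) m1 m2 m3
    | verB w =>
      exfalso
      obtain ⟨_, _, c1, c2⟩ := verAB_le_tops hεH w
      rw [hc] at hup
      have m1 : (PosElem.top1 : PosElem VH ↥H.edgeSet) = h .top1 ∨ .top1 = h .top2 := by
        rcases hup _ c1 with h' | h' | h'
        · exact absurd h' (by simp)
        · exact Or.inl h'
        · exact Or.inr h'
      have m2 : (PosElem.top2 : PosElem VH ↥H.edgeSet) = h .top1 ∨ .top2 = h .top2 := by
        rcases hup _ c2 with h' | h' | h'
        · exact absurd h' (by simp)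
        · exact Or.inl h'
        · exact Or.inr h'
      have m3 : (PosElem.infB : PosElem VH ↥H.edgeSet) = h .top1 ∨ .infB = h .top2 := by
        rcases hup _ (cov_le (PosCov.verB_infB w)) with h' | h' | h'
        · exact absurd h' (by simp)
        · exact Or.inl h'
        · exact Or.inr h'
      exact pigeon3 (by simp) (by simp) (by simp) m1 m2 m3
    | edge1 f => exact ⟨f, Or.inl rfl⟩
    | edge2 f => exact ⟨f, Or.inr rfl⟩
    | top1 =>
      exfalso
      have e1 : h (PosElem.top1 : PosElem VG ↥G.edgeSet) = .top1 := by
        have e0 := hmono _ _ hxt1; rw [hc] at e0; exact top1_le e0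
      have e2 : h (PosElem.top2 : PosElem VG ↥G.edgeSet) = .top1 := by
        have e0 := hmono _ _ hxt2; rw [hc] at e0; exact top1_le e0
      have m1 := hsurjmax .top2 (fun t ht => top2_le ht)
      have m2 := hsurjmax .infA (fun t ht => infA_le ht)
      have m3 := hsurjmax .infB (fun t ht => infB_le ht)
      rw [e1, e2] at m1 m2 m3
      have m1' : (PosElem.top2 : PosElem VH ↥H.edgeSet) = h .infA ∨ .top2 = h .infB := by
        rcases m1 with h' | h' | h' | h'
        · exact absurd h' (by simp)
        · exact absurd h' (by simp)
        · exact Or.inl h'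
        · exact Or.inr h'
      have m2' : (PosElem.infA : PosElem VH ↥H.edgeSet) = h .infA ∨ .infA = h .infB := by
        rcases m2 with h' | h' | h' | h'
        · exact absurd h' (by simp)
        · exact absurd h' (by simp)
        · exact Or.inl h'
        · exact Or.inr h'
      have m3' : (PosElem.infB : PosElem VH ↥H.edgeSet) = h .infA ∨ .infB = h .infB := by
        rcases m3 with h' | h' | h' | h'
        · exact absurd h' (by simp)
        · exact absurd h' (by simp)
        · exact Or.inl h'
        · exact Or.inr h'
      exact pigeon3 (by simp) (by simp) (by simp) m1' m2' m3'
    | top2 =>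
      exfalso
      have e1 : h (PosElem.top1 : PosElem VG ↥G.edgeSet) = .top2 := by
        have e0 := hmono _ _ hxt1; rw [hc] at e0; exact top2_le e0
      have e2 : h (PosElem.top2 : PosElem VG ↥G.edgeSet) = .top2 := by
        have e0 := hmono _ _ hxt2; rw [hc] at e0; exact top2_le e0
      have m1 := hsurjmax .top1 (fun t ht => top1_le ht)
      have m2 := hsurjmax .infA (fun t ht => infA_le ht)
      have m3 := hsurjmax .infB (fun t ht => infB_le ht)
      rw [e1, e2] at m1 m2 m3
      have m1' : (PosElem.top1 : PosElem VH ↥H.edgeSet) = h .infA ∨ .top1 = h .infB := by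
        rcases m1 with h' | h' | h' | h'
        · exact absurd h' (by simp)
        · exact absurd h' (by simp)
        · exact Or.inl h'
        · exact Or.inr h'
      have m2' : (PosElem.infA : PosElem VH ↥H.edgeSet) = h .infA ∨ .infA = h .infB := by
        rcases m2 with h' | h' | h' | h'
        · exact absurd h' (by simp)
        · exact absurd h' (by simp)
        · exact Or.inl h'
        · exact Or.inr h'
      have m3' : (PosElem.infB : PosElem VH ↥H.edgeSet) = h .infA ∨ .infB = h .infB := by
        rcases m3 with h' | h' | h' | h'
        · exact absurd h' (by simp)
        · exact absurd h' (by simp)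
        · exact Or.inl h'
        · exact Or.inr h'
      exact pigeon3 (by simp) (by simp) (by simp) m1' m2' m3'
    | infA =>
      exfalso
      have e1 : h (PosElem.top1 : PosElem VG ↥G.edgeSet) = .infA := by
        have e0 := hmono _ _ hxt1; rw [hc] at e0; exact infA_le e0
      have e2 : h (PosElem.top2 : PosElem VG ↥G.edgeSet) = .infA := by
        have e0 := hmono _ _ hxt2; rw [hc] at e0; exact infA_le e0
      have m1 := hsurjmax .top1 (fun t ht => top1_le ht)
      have m2 := hsurjmax .top2 (fun t ht => top2_le ht)
      have m3 := hsurjmax .infB (fun t ht => infB_le ht)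
      rw [e1, e2] at m1 m2 m3
      have m1' : (PosElem.top1 : PosElem VH ↥H.edgeSet) = h .infA ∨ .top1 = h .infB := by
        rcases m1 with h' | h' | h' | h'
        · exact absurd h' (by simp)
        · exact absurd h' (by simp)
        · exact Or.inl h'
        · exact Or.inr h'
      have m2' : (PosElem.top2 : PosElem VH ↥H.edgeSet) = h .infA ∨ .top2 = h .infB := by
        rcases m2 with h' | h' | h' | h'
        · exact absurd h' (by simp)
        · exact absurd h' (by simp)
        · exact Or.inl h'
        · exact Or.inr h'
      have m3' : (PosElem.infB : PosElem VH ↥H.edgeSet) = h .infA ∨ .infB = h .infB := by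
        rcases m3 with h' | h' | h' | h'
        · exact absurd h' (by simp)
        · exact absurd h' (by simp)
        · exact Or.inl h'
        · exact Or.inr h'
      exact pigeon3 (by simp) (by simp) (by simp) m1' m2' m3'
    | infB =>
      exfalso
      have e1 : h (PosElem.top1 : PosElem VG ↥G.edgeSet) = .infB := by
        have e0 := hmono _ _ hxt1; rw [hc] at e0; exact infB_le e0
      have e2 : h (PosElem.top2 : PosElem VG ↥G.edgeSet) = .infB := by
        have e0 := hmono _ _ hxt2; rw [hc] at e0; exact infB_le e0
      have m1 := hsurjmax .top1 (fun t ht => top1_le ht)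
      have m2 := hsurjmax .top2 (fun t ht => top2_le ht)
      have m3 := hsurjmax .infA (fun t ht => infA_le ht)
      rw [e1, e2] at m1 m2 m3
      have m1' : (PosElem.top1 : PosElem VH ↥H.edgeSet) = h .infA ∨ .top1 = h .infB := by
        rcases m1 with h' | h' | h' | h'
        · exact absurd h' (by simp)
        · exact absurd h' (by simp)
        · exact Or.inl h'
        · exact Or.inr h'
      have m2' : (PosElem.top2 : PosElem VH ↥H.edgeSet) = h .infA ∨ .top2 = h .infB := by
        rcases m2 with h' | h' | h' | h'
        · exact absurd h' (by simp)
        · exact absurd h' (by simp)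
        · exact Or.inl h'
        · exact Or.inr h'
      have m3' : (PosElem.infA : PosElem VH ↥H.edgeSet) = h .infA ∨ .infA = h .infB := by
        rcases m3 with h' | h' | h' | h'
        · exact absurd h' (by simp)
        · exact absurd h' (by simp)
        · exact Or.inl h'
        · exact Or.inr h'
      exact pigeon3 (by simp) (by simp) (by simp) m1' m2' m3'
  -- every edge copy of G is mapped to an edge copy of H
  have hedge : ∀ e' : ↥G.edgeSet,
      (∃ f, h (.edge1 e') = .edge1 f ∨ h (.edge1 e') = .edge2 f) ∧
      (∃ f, h (.edge2 e') = .edge1 f ∨ h (.edge2 e') = .edge2 f) := by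
    intro e'
    constructor
    · exact hcore _ (cov_le (PosCov.edge1_top1 e')) (cov_le (PosCov.edge1_top2 e'))
        (fun z hz => edge1_le hz)
    · exact hcore _ (cov_le (PosCov.edge2_top1 e')) (cov_le (PosCov.edge2_top2 e'))
        (fun z hz => edge2_le hz)
  -- the two tops of G are mapped to the two tops of H
  have hT1tops : h (PosElem.top1 : PosElem VG ↥G.edgeSet) = .top1 ∨ h .top1 = .top2 := by
    obtain ⟨f0, hf0⟩ := (hedge e).1
    have hle : PosLe H εH (h (.edge1 e)) (h .top1) := hmono _ _ (cov_le (PosCov.edge1_top1 e))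
    have hmax := hmaxT1
    rcases hf0 with hf | hf <;> rw [hf] at hle
    · rcases edge1_le hle with h' | h' | h'
      · exfalso
        have h2 : PosLe H εH (h (.top1 : PosElem VG ↥G.edgeSet)) .top1 := by
          rw [h']; exact cov_le (PosCov.edge1_top1 f0)
        have h4 := hmax _ h2
        rw [h'] at h4
        exact absurd h4 (by simp)
      · exact Or.inl h'
      · exact Or.inr h'
    · rcases edge2_le hle with h' | h' | h'
      · exfalso
        have h2 : PosLe H εH (h (.top1 : PosElem VG ↥G.edgeSet)) .top1 := by
          rw [h']; exact cov_le (PosCov.edge2_top1 f0)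
        have h4 := hmax _ h2
        rw [h'] at h4
        exact absurd h4 (by simp)
      · exact Or.inl h'
      · exact Or.inr h'
  have hT2tops : h (PosElem.top2 : PosElem VG ↥G.edgeSet) = .top1 ∨ h .top2 = .top2 := by
    obtain ⟨f0, hf0⟩ := (hedge e).1
    have hle : PosLe H εH (h (.edge1 e)) (h .top2) := hmono _ _ (cov_le (PosCov.edge1_top2 e))
    have hmax := hmaxT2
    rcases hf0 with hf | hf <;> rw [hf] at hle
    · rcases edge1_le hle with h' | h' | h'
      · exfalso
        have h2 : PosLe H εH (h (.top2 : PosElem VG ↥G.edgeSet)) .top1 := by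
          rw [h']; exact cov_le (PosCov.edge1_top1 f0)
        have h4 := hmax _ h2
        rw [h'] at h4
        exact absurd h4 (by simp)
      · exact Or.inl h'
      · exact Or.inr h'
    · rcases edge2_le hle with h' | h' | h'
      · exfalso
        have h2 : PosLe H εH (h (.top2 : PosElem VG ↥G.edgeSet)) .top1 := by
          rw [h']; exact cov_le (PosCov.edge2_top1 f0)
        have h4 := hmax _ h2
        rw [h'] at h4
        exact absurd h4 (by simp)
      · exact Or.inl h'
      · exact Or.inr h'
  -- the two infs of G are mapped to the two infs of H, in one of two ways
  have hinfs : (h (PosElem.infA : PosElem VG ↥G.edgeSet) = .infA ∧ h .infB = .infB) ∨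
      (h .infA = .infB ∧ h .infB = .infA) := by
    have mA := hsurjmax .infA (fun t ht => infA_le ht)
    have mB := hsurjmax .infB (fun t ht => infB_le ht)
    have mA' : (PosElem.infA : PosElem VH ↥H.edgeSet) = h .infA ∨ .infA = h .infB := by
      rcases mA with h' | h' | h' | h'
      · rcases hT1tops with h2 | h2 <;> rw [h2] at h' <;> exact absurd h' (by simp)
      · rcases hT2tops with h2 | h2 <;> rw [h2] at h' <;> exact absurd h' (by simp)
      · exact Or.inl h'
      · exact Or.inr h'
    have mB' : (PosElem.infB : PosElem VH ↥H.edgeSet) = h .infA ∨ .infB = h .infB := by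
      rcases mB with h' | h' | h' | h'
      · rcases hT1tops with h2 | h2 <;> rw [h2] at h' <;> exact absurd h' (by simp)
      · rcases hT2tops with h2 | h2 <;> rw [h2] at h' <;> exact absurd h' (by simp)
      · exact Or.inl h'
      · exact Or.inr h'
    rcases mA' with hA | hA <;> rcases mB' with hB | hB
    · exact absurd (hA.trans hB.symm) (by simp)
    · exact Or.inl ⟨hA.symm, hB.symm⟩
    · exact Or.inr ⟨hB.symm, hA.symm⟩
    · exact absurd (hA.trans hB.symm) (by simp)
  -- copies of vertices are never mapped to bottom vertices
  have hnoverA : ∀ (x : VG) (w : VH), h (.verA x) ≠ .ver w := by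
    intro x w hxw
    have get : ∀ m : PosElem VH ↥H.edgeSet, PosLe H εH (h (.verA x)) m →
        m = .ver w ∨ m = h .infA ∨ m = h .top1 ∨ m = h .top2 ∨
          (∃ f, m = h (.edge1 f)) ∨ (∃ f, m = h (.edge2 f)) := by
      intro m hm
      obtain ⟨z, hz, hz2⟩ := hbp _ m hm
      rcases verA_le hz with h' | h' | h' | h' | ⟨f, h'⟩ | ⟨f, h'⟩ <;> rw [h'] at hz2
      · rw [hxw] at hz2; exact Or.inl hz2.symm
      · exact Or.inr (Or.inl hz2.symm)
      · exact Or.inr (Or.inr (Or.inl hz2.symm))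
      · exact Or.inr (Or.inr (Or.inr (Or.inl hz2.symm)))
      · exact Or.inr (Or.inr (Or.inr (Or.inr (Or.inl ⟨f, hz2.symm⟩))))
      · exact Or.inr (Or.inr (Or.inr (Or.inr (Or.inr ⟨f, hz2.symm⟩))))
    have c3 : PosLe H εH (.ver w) .infA :=
      (cov_le (PosCov.verA_infA w)).head (PosCov.ver_verA w)
    have c4 : PosLe H εH (.ver w) .infB :=
      (cov_le (PosCov.verB_infB w)).head (PosCov.ver_verB w)
    have r3 := get .infA (by rw [hxw]; exact c3)
    have r4 := get .infB (by rw [hxw]; exact c4)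
    have e3 : h (PosElem.infA : PosElem VG ↥G.edgeSet) = .infA := by
      rcases r3 with h' | h' | h' | h' | ⟨f, h'⟩ | ⟨f, h'⟩
      · exact absurd h' (by simp)
      · exact h'.symm
      · rcases hT1tops with h2 | h2 <;> rw [h2] at h' <;> exact absurd h' (by simp)
      · rcases hT2tops with h2 | h2 <;> rw [h2] at h' <;> exact absurd h' (by simp)
      · obtain ⟨f1, hf1⟩ := (hedge f).1
        rcases hf1 with h2 | h2 <;> rw [h2] at h' <;> exact absurd h' (by simp)
      · obtain ⟨f1, hf1⟩ := (hedge f).2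
        rcases hf1 with h2 | h2 <;> rw [h2] at h' <;> exact absurd h' (by simp)
    have e4 : h (PosElem.infA : PosElem VG ↥G.edgeSet) = .infB := by
      rcases r4 with h' | h' | h' | h' | ⟨f, h'⟩ | ⟨f, h'⟩
      · exact absurd h' (by simp)
      · exact h'.symm
      · rcases hT1tops with h2 | h2 <;> rw [h2] at h' <;> exact absurd h' (by simp)
      · rcases hT2tops with h2 | h2 <;> rw [h2] at h' <;> exact absurd h' (by simp)
      · obtain ⟨f1, hf1⟩ := (hedge f).1
        rcases hf1 with h2 | h2 <;> rw [h2] at h' <;> exact absurd h' (by simp)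
      · obtain ⟨f1, hf1⟩ := (hedge f).2
        rcases hf1 with h2 | h2 <;> rw [h2] at h' <;> exact absurd h' (by simp)
    rw [e3] at e4
    exact absurd e4 (by simp)
  have hnoverB : ∀ (x : VG) (w : VH), h (.verB x) ≠ .ver w := by
    intro x w hxw
    have get : ∀ m : PosElem VH ↥H.edgeSet, PosLe H εH (h (.verB x)) m →
        m = .ver w ∨ m = h .infB ∨ m = h .top1 ∨ m = h .top2 ∨
          (∃ f, m = h (.edge1 f)) ∨ (∃ f, m = h (.edge2 f)) := by
      intro m hm
      obtain ⟨z, hz, hz2⟩ := hbp _ m hm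
      rcases verB_le hz with h' | h' | h' | h' | ⟨f, h'⟩ | ⟨f, h'⟩ <;> rw [h'] at hz2
      · rw [hxw] at hz2; exact Or.inl hz2.symm
      · exact Or.inr (Or.inl hz2.symm)
      · exact Or.inr (Or.inr (Or.inl hz2.symm))
      · exact Or.inr (Or.inr (Or.inr (Or.inl hz2.symm)))
      · exact Or.inr (Or.inr (Or.inr (Or.inr (Or.inl ⟨f, hz2.symm⟩))))
      · exact Or.inr (Or.inr (Or.inr (Or.inr (Or.inr ⟨f, hz2.symm⟩))))
    have c3 : PosLe H εH (.ver w) .infA :=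
      (cov_le (PosCov.verA_infA w)).head (PosCov.ver_verA w)
    have c4 : PosLe H εH (.ver w) .infB :=
      (cov_le (PosCov.verB_infB w)).head (PosCov.ver_verB w)
    have r3 := get .infA (by rw [hxw]; exact c3)
    have r4 := get .infB (by rw [hxw]; exact c4)
    have e3 : h (PosElem.infB : PosElem VG ↥G.edgeSet) = .infA := by
      rcases r3 with h' | h' | h' | h' | ⟨f, h'⟩ | ⟨f, h'⟩
      · exact absurd h' (by simp)
      · exact h'.symm
      · rcases hT1tops with h2 | h2 <;> rw [h2] at h' <;> exact absurd h' (by simp)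
      · rcases hT2tops with h2 | h2 <;> rw [h2] at h' <;> exact absurd h' (by simp)
      · obtain ⟨f1, hf1⟩ := (hedge f).1
        rcases hf1 with h2 | h2 <;> rw [h2] at h' <;> exact absurd h' (by simp)
      · obtain ⟨f1, hf1⟩ := (hedge f).2
        rcases hf1 with h2 | h2 <;> rw [h2] at h' <;> exact absurd h' (by simp)
    have e4 : h (PosElem.infB : PosElem VG ↥G.edgeSet) = .infB := by
      rcases r4 with h' | h' | h' | h' | ⟨f, h'⟩ | ⟨f, h'⟩
      · exact absurd h' (by simp)
      · exact h'.symm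
      · rcases hT1tops with h2 | h2 <;> rw [h2] at h' <;> exact absurd h' (by simp)
      · rcases hT2tops with h2 | h2 <;> rw [h2] at h' <;> exact absurd h' (by simp)
      · obtain ⟨f1, hf1⟩ := (hedge f).1
        rcases hf1 with h2 | h2 <;> rw [h2] at h' <;> exact absurd h' (by simp)
      · obtain ⟨f1, hf1⟩ := (hedge f).2
        rcases hf1 with h2 | h2 <;> rw [h2] at h' <;> exact absurd h' (by simp)
    rw [e3] at e4
    exact absurd e4 (by simp)
  -- determination of images of vertex copies lying below edge copies
  have hEA : ∀ (x : VG) (c : PosElem VH ↥H.edgeSet) (f : ↥H.edgeSet),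
      (c = .edge1 f ∨ c = .edge2 f) → PosLe H εH (h (.verA x)) c →
      (h (PosElem.infA : PosElem VG ↥G.edgeSet) = .infA ∧ h (.verA x) = .verA (g x)) ∨
      (h .infA = .infB ∧ h (.verA x) = .verB (g x)) := by
    intro x c f hcf hlec
    have h1 : PosLe H εH (h (.verA x)) (h .infA) := hmono _ _ (cov_le (PosCov.verA_infA x))
    have hdown : h (.verA x) = c ∨ (∃ w, h (.verA x) = .verA w) ∨
        (∃ w, h (.verA x) = .verB w) ∨ (∃ w, h (.verA x) = .ver w) := by
      rcases hcf with rfl | rfl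
      · rcases le_edge1 hlec with h' | h' | h' | h' | h'
        · exact Or.inl h'
        · exact Or.inr (Or.inl ⟨_, h'⟩)
        · exact Or.inr (Or.inr (Or.inl ⟨_, h'⟩))
        · exact Or.inr (Or.inr (Or.inr ⟨_, h'⟩))
        · exact Or.inr (Or.inr (Or.inr ⟨_, h'⟩))
      · rcases le_edge2 hlec with h' | h' | h' | h' | h'
        · exact Or.inl h'
        · exact Or.inr (Or.inr (Or.inl ⟨_, h'⟩))
        · exact Or.inr (Or.inl ⟨_, h'⟩)
        · exact Or.inr (Or.inr (Or.inr ⟨_, h'⟩))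
        · exact Or.inr (Or.inr (Or.inr ⟨_, h'⟩))
    rcases hinfs with ⟨hiA, _⟩ | ⟨hiA, _⟩
    · left
      refine ⟨hiA, ?_⟩
      rw [hiA] at h1
      rcases le_infA h1 with h' | ⟨w, h'⟩ | ⟨w, h'⟩
      · exfalso
        rw [h'] at hdown
        rcases hcf with rfl | rfl <;> simp at hdown
      · rw [h']
        have h2 : PosLe H εH (.ver (g x)) (.verA w) := by
          have h3 := hmono _ _ (cov_le (PosCov.ver_verA x))
          rw [hg x, h'] at h3; exact h3
        rcases le_verA h2 with h3 | h3
        · exact absurd h3 (by simp)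
        · simp only [PosElem.ver.injEq] at h3
          rw [h3]
      · exact absurd h' (hnoverA x w)
    · right
      refine ⟨hiA, ?_⟩
      rw [hiA] at h1
      rcases le_infB h1 with h' | ⟨w, h'⟩ | ⟨w, h'⟩
      · exfalso
        rw [h'] at hdown
        rcases hcf with rfl | rfl <;> simp at hdown
      · rw [h']
        have h2 : PosLe H εH (.ver (g x)) (.verB w) := by
          have h3 := hmono _ _ (cov_le (PosCov.ver_verA x))
          rw [hg x, h'] at h3; exact h3
        rcases le_verB h2 with h3 | h3
        · exact absurd h3 (by simp)
        · simp only [PosElem.ver.injEq] at h3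
          rw [h3]
      · exact absurd h' (hnoverA x w)
  have hEB : ∀ (x : VG) (c : PosElem VH ↥H.edgeSet) (f : ↥H.edgeSet),
      (c = .edge1 f ∨ c = .edge2 f) → PosLe H εH (h (.verB x)) c →
      (h (PosElem.infB : PosElem VG ↥G.edgeSet) = .infB ∧ h (.verB x) = .verB (g x)) ∨
      (h .infB = .infA ∧ h (.verB x) = .verA (g x)) := by
    intro x c f hcf hlec
    have h1 : PosLe H εH (h (.verB x)) (h .infB) := hmono _ _ (cov_le (PosCov.verB_infB x))
    have hdown : h (.verB x) = c ∨ (∃ w, h (.verB x) = .verA w) ∨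
        (∃ w, h (.verB x) = .verB w) ∨ (∃ w, h (.verB x) = .ver w) := by
      rcases hcf with rfl | rfl
      · rcases le_edge1 hlec with h' | h' | h' | h' | h'
        · exact Or.inl h'
        · exact Or.inr (Or.inl ⟨_, h'⟩)
        · exact Or.inr (Or.inr (Or.inl ⟨_, h'⟩))
        · exact Or.inr (Or.inr (Or.inr ⟨_, h'⟩))
        · exact Or.inr (Or.inr (Or.inr ⟨_, h'⟩))
      · rcases le_edge2 hlec with h' | h' | h' | h' | h'
        · exact Or.inl h'
        · exact Or.inr (Or.inr (Or.inl ⟨_, h'⟩))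
        · exact Or.inr (Or.inl ⟨_, h'⟩)
        · exact Or.inr (Or.inr (Or.inr ⟨_, h'⟩))
        · exact Or.inr (Or.inr (Or.inr ⟨_, h'⟩))
    rcases hinfs with ⟨_, hiB⟩ | ⟨_, hiB⟩
    · left
      refine ⟨hiB, ?_⟩
      rw [hiB] at h1
      rcases le_infB h1 with h' | ⟨w, h'⟩ | ⟨w, h'⟩
      · exfalso
        rw [h'] at hdown
        rcases hcf with rfl | rfl <;> simp at hdown
      · rw [h']
        have h2 : PosLe H εH (.ver (g x)) (.verB w) := by
          have h3 := hmono _ _ (cov_le (PosCov.ver_verB x))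
          rw [hg x, h'] at h3; exact h3
        rcases le_verB h2 with h3 | h3
        · exact absurd h3 (by simp)
        · simp only [PosElem.ver.injEq] at h3
          rw [h3]
      · exact absurd h' (hnoverB x w)
    · right
      refine ⟨hiB, ?_⟩
      rw [hiB] at h1
      rcases le_infA h1 with h' | ⟨w, h'⟩ | ⟨w, h'⟩
      · exfalso
        rw [h'] at hdown
        rcases hcf with rfl | rfl <;> simp at hdown
      · rw [h']
        have h2 : PosLe H εH (.ver (g x)) (.verA w) := by
          have h3 := hmono _ _ (cov_le (PosCov.ver_verB x))
          rw [hg x, h'] at h3; exact h3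
        rcases le_verA h2 with h3 | h3
        · exact absurd h3 (by simp)
        · simp only [PosElem.ver.injEq] at h3
          rw [h3]
      · exact absurd h' (hnoverB x w)
  -- endpoint extraction in Pos(H)
  have hF : ∀ (c : PosElem VH ↥H.edgeSet) (f : ↥H.edgeSet) (w1 w2 : VH),
      (c = .edge1 f ∨ c = .edge2 f) →
      PosLe H εH (.verA w1) c → PosLe H εH (.verB w2) c →
      ((εH f).1 = w1 ∧ (εH f).2 = w2 ∧ c = .edge1 f) ∨
      ((εH f).2 = w1 ∧ (εH f).1 = w2 ∧ c = .edge2 f) := by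
    intro c f w1 w2 hcf hA hB
    rcases hcf with rfl | rfl
    · left
      refine ⟨?_, ?_, rfl⟩
      · rcases le_edge1 hA with h' | h' | h' | h' | h'
        · exact absurd h' (by simp)
        · simp only [PosElem.verA.injEq] at h'; exact h'.symm
        · exact absurd h' (by simp)
        · exact absurd h' (by simp)
        · exact absurd h' (by simp)
      · rcases le_edge1 hB with h' | h' | h' | h' | h'
        · exact absurd h' (by simp)
        · exact absurd h' (by simp)
        · simp only [PosElem.verB.injEq] at h'; exact h'.symm
        · exact absurd h' (by simp)
        · exact absurd h' (by simp)
    · right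
      refine ⟨?_, ?_, rfl⟩
      · rcases le_edge2 hA with h' | h' | h' | h' | h'
        · exact absurd h' (by simp)
        · exact absurd h' (by simp)
        · simp only [PosElem.verA.injEq] at h'; exact h'.symm
        · exact absurd h' (by simp)
        · exact absurd h' (by simp)
      · rcases le_edge2 hB with h' | h' | h' | h' | h'
        · exact absurd h' (by simp)
        · simp only [PosElem.verB.injEq] at h'; exact h'.symm
        · exact absurd h' (by simp)
        · exact absurd h' (by simp)
        · exact absurd h' (by simp)
  -- assemble
  obtain ⟨f1e, hf1e⟩ := (hedge e).1
  obtain ⟨f2e, hf2e⟩ := (hedge e).2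
  have lA1 : PosLe H εH (h (.verA (εG e).1)) (h (.edge1 e)) :=
    hmono _ _ (cov_le (PosCov.ua_edge1 e))
  have lB1 : PosLe H εH (h (.verB (εG e).2)) (h (.edge1 e)) :=
    hmono _ _ (cov_le (PosCov.vb_edge1 e))
  have lB2 : PosLe H εH (h (.verB (εG e).1)) (h (.edge2 e)) :=
    hmono _ _ (cov_le (PosCov.ub_edge2 e))
  have lA2 : PosLe H εH (h (.verA (εG e).2)) (h (.edge2 e)) :=
    hmono _ _ (cov_le (PosCov.va_edge2 e))
  have EA1 := hEA (εG e).1 _ f1e hf1e lA1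
  have EB1 := hEB (εG e).2 _ f1e hf1e lB1
  have EB2 := hEB (εG e).1 _ f2e hf2e lB2
  have EA2 := hEA (εG e).2 _ f2e hf2e lA2
  have main : H.Adj (g (εG e).1) (g (εG e).2) ∧
      ∃ f : ↥H.edgeSet, (f : Sym2 VH) = s(g (εG e).1, g (εG e).2) ∧
        ({h (PosElem.edge1 e), h (PosElem.edge2 e)} : Set (PosElem VH ↥H.edgeSet)) =
          {PosElem.edge1 f, PosElem.edge2 f} := by
    rcases hinfs with ⟨hiA, hiB⟩ | ⟨hiA, hiB⟩
    · -- identity orientation on the infs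
      have eA1 : h (.verA (εG e).1) = .verA (g (εG e).1) := by
        rcases EA1 with ⟨_, h'⟩ | ⟨h2, _⟩
        · exact h'
        · rw [hiA] at h2; exact absurd h2 (by simp)
      have eB1 : h (.verB (εG e).2) = .verB (g (εG e).2) := by
        rcases EB1 with ⟨_, h'⟩ | ⟨h2, _⟩
        · exact h'
        · rw [hiB] at h2; exact absurd h2 (by simp)
      have eB2 : h (.verB (εG e).1) = .verB (g (εG e).1) := by
        rcases EB2 with ⟨_, h'⟩ | ⟨h2, _⟩
        · exact h'
        · rw [hiB] at h2; exact absurd h2 (by simp)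
      have eA2 : h (.verA (εG e).2) = .verA (g (εG e).2) := by
        rcases EA2 with ⟨_, h'⟩ | ⟨h2, _⟩
        · exact h'
        · rw [hiA] at h2; exact absurd h2 (by simp)
      have F1 := hF _ f1e (g (εG e).1) (g (εG e).2) hf1e
        (by rw [← eA1]; exact lA1) (by rw [← eB1]; exact lB1)
      have F2 := hF _ f2e (g (εG e).2) (g (εG e).1) hf2e
        (by rw [← eA2]; exact lA2) (by rw [← eB2]; exact lB2)
      have hs1 : (f1e : Sym2 VH) = s(g (εG e).1, g (εG e).2) := by
        rcases F1 with ⟨h1, h2, _⟩ | ⟨h1, h2, _⟩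
        · rw [hεH f1e, h1, h2]
        · rw [hεH f1e, h1, h2]; exact Sym2.eq_swap
      have hs2 : (f2e : Sym2 VH) = s(g (εG e).1, g (εG e).2) := by
        rcases F2 with ⟨h1, h2, _⟩ | ⟨h1, h2, _⟩
        · rw [hεH f2e, h1, h2]; exact Sym2.eq_swap
        · rw [hεH f2e, h1, h2]
      have hadj : H.Adj (g (εG e).1) (g (εG e).2) := by
        have hmem := f1e.2
        rw [hs1] at hmem
        exact (SimpleGraph.mem_edgeSet H).mp hmem
      have hne : g (εG e).1 ≠ g (εG e).2 := hadj.ne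
      have hff : f2e = f1e := Subtype.ext (hs2.trans hs1.symm)
      rw [hff] at F2
      refine ⟨hadj, f1e, hs1, ?_⟩
      rcases F1 with ⟨hp1, _, hc1⟩ | ⟨hp1, _, hc1⟩ <;>
        rcases F2 with ⟨hp2, _, hc2⟩ | ⟨hp2, _, hc2⟩
      · exact absurd (hp1.symm.trans hp2) hne
      · rw [hc1, hc2]
      · rw [hc1, hc2]; exact Set.pair_comm _ _
      · exact absurd (hp1.symm.trans hp2) hne
    · -- swapped orientation on the infs
      have eA1 : h (.verA (εG e).1) = .verB (g (εG e).1) := by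
        rcases EA1 with ⟨h2, _⟩ | ⟨_, h'⟩
        · rw [hiA] at h2; exact absurd h2 (by simp)
        · exact h'
      have eB1 : h (.verB (εG e).2) = .verA (g (εG e).2) := by
        rcases EB1 with ⟨h2, _⟩ | ⟨_, h'⟩
        · rw [hiB] at h2; exact absurd h2 (by simp)
        · exact h'
      have eB2 : h (.verB (εG e).1) = .verA (g (εG e).1) := by
        rcases EB2 with ⟨h2, _⟩ | ⟨_, h'⟩
        · rw [hiB] at h2; exact absurd h2 (by simp)
        · exact h'
      have eA2 : h (.verA (εG e).2) = .verB (g (εG e).2) := by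
        rcases EA2 with ⟨h2, _⟩ | ⟨_, h'⟩
        · rw [hiA] at h2; exact absurd h2 (by simp)
        · exact h'
      have F1 := hF _ f1e (g (εG e).2) (g (εG e).1) hf1e
        (by rw [← eB1]; exact lB1) (by rw [← eA1]; exact lA1)
      have F2 := hF _ f2e (g (εG e).1) (g (εG e).2) hf2e
        (by rw [← eB2]; exact lB2) (by rw [← eA2]; exact lA2)
      have hs1 : (f1e : Sym2 VH) = s(g (εG e).1, g (εG e).2) := by
        rcases F1 with ⟨h1, h2, _⟩ | ⟨h1, h2, _⟩
        · rw [hεH f1e, h1, h2]; exact Sym2.eq_swap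
        · rw [hεH f1e, h1, h2]
      have hs2 : (f2e : Sym2 VH) = s(g (εG e).1, g (εG e).2) := by
        rcases F2 with ⟨h1, h2, _⟩ | ⟨h1, h2, _⟩
        · rw [hεH f2e, h1, h2]
        · rw [hεH f2e, h1, h2]; exact Sym2.eq_swap
      have hadj : H.Adj (g (εG e).1) (g (εG e).2) := by
        have hmem := f1e.2
        rw [hs1] at hmem
        exact (SimpleGraph.mem_edgeSet H).mp hmem
      have hne : g (εG e).1 ≠ g (εG e).2 := hadj.ne
      have hff : f2e = f1e := Subtype.ext (hs2.trans hs1.symm)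
      rw [hff] at F2
      refine ⟨hadj, f1e, hs1, ?_⟩
      rcases F1 with ⟨hp1, _, hc1⟩ | ⟨hp1, _, hc1⟩ <;>
        rcases F2 with ⟨hp2, _, hc2⟩ | ⟨hp2, _, hc2⟩
      · exact absurd (hp2.symm.trans hp1) hne
      · rw [hc1, hc2]
      · rw [hc1, hc2]; exact Set.pair_comm _ _
      · exact absurd (hp2.symm.trans hp1) hne
  have hsuv : s(u, v) = s((εG e).1, (εG e).2) := he.symm.trans (hεG e)
  rcases Sym2.eq_iff.mp hsuv with ⟨hu, hv⟩ | ⟨hu, hv⟩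
  · subst hu; subst hv; exact main
  · subst hu; subst hv
    obtain ⟨hadj, f, hsf, hset⟩ := main
    exact ⟨hadj.symm, f, hsf.trans Sym2.eq_swap, hset⟩
end

section
/- Let G and H be finite simple graphs such that H has at least one vertex, and let h be a surjective p-morphism from Pos(G) onto Pos(H). Then the map g : V^G → V^H defined by g(v) = h(v) (which is well defined since h(V^G) ⊆ V^H) is a surjective locally surjective homomorphism from G onto H. -/
/-- A locally surjective graph homomorphism: the homomorphism property (HP) and
the backward property (BP) for graphs. -/
def IsLocallySurjHom {VG VH : Type} (G : SimpleGraph VG) (H : SimpleGraph VH)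
    (g : VG → VH) : Prop :=
  (∀ u v : VG, G.Adj u v → H.Adj (g u) (g v)) ∧
  (∀ (u : VG) (w : VH), H.Adj (g u) w → ∃ v : VG, G.Adj u v ∧ g v = w)

namespace PosRestrict
open PosElem

variable {V : Type} {G : SimpleGraph V} {ε : ↥G.edgeSet → V × V}

/-- Explicit description of the order of `Pos(G)`. -/
def ELe (G : SimpleGraph V) (ε : ↥G.edgeSet → V × V) :
    PosElem V ↥G.edgeSet → PosElem V ↥G.edgeSet → Prop
  | .ver v, .ver w => v = w
  | .ver v, .verA w => v = w
  | .ver v, .verB w => v = w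
  | .ver v, .edge1 e => v = (ε e).1 ∨ v = (ε e).2
  | .ver v, .edge2 e => v = (ε e).1 ∨ v = (ε e).2
  | .ver _, .top1 => True
  | .ver _, .top2 => True
  | .ver _, .infA => True
  | .ver _, .infB => True
  | .verA v, .verA w => v = w
  | .verA v, .edge1 e => v = (ε e).1
  | .verA v, .edge2 e => v = (ε e).2
  | .verA _, .top1 => True
  | .verA _, .top2 => True
  | .verA _, .infA => True
  | .verB v, .verB w => v = w
  | .verB v, .edge1 e => v = (ε e).2
  | .verB v, .edge2 e => v = (ε e).1
  | .verB _, .top1 => True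
  | .verB _, .top2 => True
  | .verB _, .infB => True
  | .edge1 e, .edge1 f => e = f
  | .edge1 _, .top1 => True
  | .edge1 _, .top2 => True
  | .edge2 e, .edge2 f => e = f
  | .edge2 _, .top1 => True
  | .edge2 _, .top2 => True
  | .top1, .top1 => True
  | .top2, .top2 => True
  | .infA, .infA => True
  | .infB, .infB => True
  | _, _ => False

set_option maxHeartbeats 4000000 in
lemma eleRefl (x : PosElem V ↥G.edgeSet) : ELe G ε x x := by
  cases x <;> simp [ELe]

lemma eleStep {x y z : PosElem V ↥G.edgeSet} (hxy : ELe G ε x y)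
    (hyz : PosCov G ε y z) : ELe G ε x z := by
  cases hyz <;> cases x <;> simp_all [ELe]

/-- every vertex is an endpoint of one of its edges, or isolated -/
lemma endpoint_cases (hε : OrientOK G ε) (v : V) :
    (∀ w, ¬ G.Adj v w) ∨ ∃ e : ↥G.edgeSet, (ε e).1 = v ∨ (ε e).2 = v := by
  by_cases hv : ∀ w, ¬ G.Adj v w
  · exact Or.inl hv
  · push_neg at hv
    obtain ⟨w, hw⟩ := hv
    have he : s(v, w) ∈ G.edgeSet := hw
    refine Or.inr ⟨⟨_, he⟩, ?_⟩
    have h2 := hε ⟨_, he⟩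
    simp only [Sym2.eq, Sym2.rel_iff', Prod.mk.injEq, Prod.swap_prod_mk] at h2
    rcases h2 with ⟨h1, h2⟩ | ⟨h1, h2⟩
    · exact Or.inl h1.symm
    · exact Or.inr h1.symm

lemma verA_le_top1 (hε : OrientOK G ε) (v : V) : PosLe G ε (.verA v) .top1 := by
  rcases endpoint_cases hε v with hv | ⟨e, rfl | rfl⟩
  · exact Relation.ReflTransGen.single (.isolA_top1 v hv)
  · exact .head (.ua_edge1 e) (.single (.edge1_top1 e))
  · exact .head (.va_edge2 e) (.single (.edge2_top1 e))

lemma verA_le_top2 (hε : OrientOK G ε) (v : V) : PosLe G ε (.verA v) .top2 := by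
  rcases endpoint_cases hε v with hv | ⟨e, rfl | rfl⟩
  · exact Relation.ReflTransGen.single (.isolA_top2 v hv)
  · exact .head (.ua_edge1 e) (.single (.edge1_top2 e))
  · exact .head (.va_edge2 e) (.single (.edge2_top2 e))

lemma verB_le_top1 (hε : OrientOK G ε) (v : V) : PosLe G ε (.verB v) .top1 := by
  rcases endpoint_cases hε v with hv | ⟨e, rfl | rfl⟩
  · exact Relation.ReflTransGen.single (.isolB_top1 v hv)
  · exact .head (.ub_edge2 e) (.single (.edge2_top1 e))
  · exact .head (.vb_edge1 e) (.single (.edge1_top1 e))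

lemma verB_le_top2 (hε : OrientOK G ε) (v : V) : PosLe G ε (.verB v) .top2 := by
  rcases endpoint_cases hε v with hv | ⟨e, rfl | rfl⟩
  · exact Relation.ReflTransGen.single (.isolB_top2 v hv)
  · exact .head (.ub_edge2 e) (.single (.edge2_top2 e))
  · exact .head (.vb_edge1 e) (.single (.edge1_top2 e))

lemma posLe_iff (hε : OrientOK G ε) {x y : PosElem V ↥G.edgeSet} :
    PosLe G ε x y ↔ ELe G ε x y := by
  constructor
  · intro hle
    induction hle with
    | refl => exact eleRefl x
    | tail _ hc ih => exact eleStep ih hc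
  · intro hle
    cases x <;> cases y <;> simp only [ELe] at hle
    -- ver cases
    case ver.ver v w => subst hle; exact .refl
    case ver.verA v w => subst hle; exact .single (.ver_verA _)
    case ver.verB v w => subst hle; exact .single (.ver_verB _)
    case ver.edge1 v e =>
      rcases hle with rfl | rfl
      · exact .head (.ver_verA _) (.single (.ua_edge1 e))
      · exact .head (.ver_verB _) (.single (.vb_edge1 e))
    case ver.edge2 v e =>
      rcases hle with rfl | rfl
      · exact .head (.ver_verB _) (.single (.ub_edge2 e))
      · exact .head (.ver_verA _) (.single (.va_edge2 e))
    case ver.top1 v => exact .head (.ver_verA v) (verA_le_top1 hε v)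
    case ver.top2 v => exact .head (.ver_verA v) (verA_le_top2 hε v)
    case ver.infA v => exact .head (.ver_verA v) (.single (.verA_infA v))
    case ver.infB v => exact .head (.ver_verB v) (.single (.verB_infB v))
    case verA.verA v w => subst hle; exact .refl
    case verA.edge1 v e => subst hle; exact .single (.ua_edge1 e)
    case verA.edge2 v e => subst hle; exact .single (.va_edge2 e)
    case verA.top1 v => exact verA_le_top1 hε v
    case verA.top2 v => exact verA_le_top2 hε v
    case verA.infA v => exact .single (.verA_infA v)
    case verB.verB v w => subst hle; exact .refl
    case verB.edge1 v e => subst hle; exact .single (.vb_edge1 e)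
    case verB.edge2 v e => subst hle; exact .single (.ub_edge2 e)
    case verB.top1 v => exact verB_le_top1 hε v
    case verB.top2 v => exact verB_le_top2 hε v
    case verB.infB v => exact .single (.verB_infB v)
    case edge1.edge1 e f => subst hle; exact .refl
    case edge1.top1 e => exact .single (.edge1_top1 e)
    case edge1.top2 e => exact .single (.edge1_top2 e)
    case edge2.edge2 e f => subst hle; exact .refl
    case edge2.top1 e => exact .single (.edge2_top1 e)
    case edge2.top2 e => exact .single (.edge2_top2 e)
    case top1.top1 => exact .refl
    case top2.top2 => exact .refl
    case infA.infA => exact .refl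
    case infB.infB => exact .refl



/-- Maximality in the poset. -/
def IsMax' (G : SimpleGraph V) (ε : ↥G.edgeSet → V × V) (x : PosElem V ↥G.edgeSet) : Prop :=
  ∀ y, PosLe G ε x y → y = x

lemma isMax_top1 (hε : OrientOK G ε) : IsMax' G ε .top1 := by
  intro y hy; rw [posLe_iff hε] at hy; cases y <;> simp_all [ELe]

lemma isMax_top2 (hε : OrientOK G ε) : IsMax' G ε .top2 := by
  intro y hy; rw [posLe_iff hε] at hy; cases y <;> simp_all [ELe]

lemma isMax_infA (hε : OrientOK G ε) : IsMax' G ε .infA := by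
  intro y hy; rw [posLe_iff hε] at hy; cases y <;> simp_all [ELe]

lemma isMax_infB (hε : OrientOK G ε) : IsMax' G ε .infB := by
  intro y hy; rw [posLe_iff hε] at hy; cases y <;> simp_all [ELe]

/-- a canonical maximal element above any element -/
def maxOf : PosElem V ↥G.edgeSet → PosElem V ↥G.edgeSet
  | .top2 => .top2
  | .infA => .infA
  | .infB => .infB
  | _ => .top1

lemma le_maxOf (hε : OrientOK G ε) (x : PosElem V ↥G.edgeSet) :
    PosLe G ε x (maxOf x) := by
  rw [posLe_iff hε]; cases x <;> simp [maxOf, ELe]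

lemma isMax_maxOf (hε : OrientOK G ε) (x : PosElem V ↥G.edgeSet) :
    IsMax' G ε (maxOf x) := by
  cases x
  case top2 => exact isMax_top2 hε
  case infA => exact isMax_infA hε
  case infB => exact isMax_infB hε
  all_goals exact isMax_top1 hε

lemma isMax_cases (hε : OrientOK G ε) {x : PosElem V ↥G.edgeSet} (hx : IsMax' G ε x) :
    x = .top1 ∨ x = .top2 ∨ x = .infA ∨ x = .infB := by
  cases x
  case ver v =>
    have := hx _ ((posLe_iff hε).mpr (by simp [ELe] : ELe G ε (.ver v) (.verA v)))
    simp at this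
  case verA v =>
    have := hx _ ((posLe_iff hε).mpr (by simp [ELe] : ELe G ε (.verA v) (.infA)))
    simp at this
  case verB v =>
    have := hx _ ((posLe_iff hε).mpr (by simp [ELe] : ELe G ε (.verB v) (.infB)))
    simp at this
  case edge1 e =>
    have := hx _ ((posLe_iff hε).mpr (by simp [ELe] : ELe G ε (.edge1 e) (.top1)))
    simp at this
  case edge2 e =>
    have := hx _ ((posLe_iff hε).mpr (by simp [ELe] : ELe G ε (.edge2 e) (.top1)))
    simp at this
  all_goals simp

/-- The A/B swap automorphism. -/
def swap : PosElem V E' → PosElem V E'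
  | .ver v => .ver v
  | .verA v => .verB v
  | .verB v => .verA v
  | .edge1 e => .edge2 e
  | .edge2 e => .edge1 e
  | .top1 => .top1
  | .top2 => .top2
  | .infA => .infB
  | .infB => .infA

lemma swap_swap (x : PosElem V E') : swap (swap x) = x := by
  cases x <;> rfl

lemma swap_cov {x y : PosElem V ↥G.edgeSet} (hc : PosCov G ε x y) :
    PosCov G ε (swap x) (swap y) := by
  cases hc
  case ver_verA v => exact .ver_verB v
  case ver_verB v => exact .ver_verA v
  case verA_infA v => exact .verB_infB v
  case verB_infB v => exact .verA_infA v
  case edge1_top1 e => exact .edge2_top1 e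
  case edge1_top2 e => exact .edge2_top2 e
  case edge2_top1 e => exact .edge1_top1 e
  case edge2_top2 e => exact .edge1_top2 e
  case isolA_top1 v hv => exact .isolB_top1 v hv
  case isolA_top2 v hv => exact .isolB_top2 v hv
  case isolB_top1 v hv => exact .isolA_top1 v hv
  case isolB_top2 v hv => exact .isolA_top2 v hv
  case ua_edge1 e => exact .ub_edge2 e
  case vb_edge1 e => exact .va_edge2 e
  case ub_edge2 e => exact .ua_edge1 e
  case va_edge2 e => exact .vb_edge1 e

lemma swap_le {x y : PosElem V ↥G.edgeSet} (hle : PosLe G ε x y) :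
    PosLe G ε (swap x) (swap y) := by
  induction hle with
  | refl => exact .refl
  | tail _ hc ih => exact ih.tail (swap_cov hc)

section Main

variable {VG VH : Type} {G : SimpleGraph VG} {H : SimpleGraph VH}
  {εG : ↥G.edgeSet → VG × VG} {εH : ↥H.edgeSet → VH × VH}
  {h : PosElem VG ↥G.edgeSet → PosElem VH ↥H.edgeSet}

lemma main_lemma (hεG : OrientOK G εG) (hεH : OrientOK H εH)
    (hsurj : Function.Surjective h)
    (hpm : IsPMorphismRel (PosLe G εG) (PosLe H εH) h)
    (hiA : h .infA = .infA) (hiB : h .infB = .infB) :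
    ∃ g : VG → VH, (∀ v : VG, h (PosElem.ver v) = PosElem.ver (g v)) ∧
      Function.Surjective g ∧ IsLocallySurjHom G H g := by
  obtain ⟨hmono, hback⟩ := hpm
  have leG : ∀ x y, ELe G εG x y → PosLe G εG x y := fun _ _ => (posLe_iff hεG).mpr
  have leH : ∀ x y, ELe H εH x y → PosLe H εH x y := fun _ _ => (posLe_iff hεH).mpr
  have dnG : ∀ x y, PosLe G εG x y → ELe G εG x y := fun _ _ => (posLe_iff hεG).mp
  have dnH : ∀ x y, PosLe H εH x y → ELe H εH x y := fun _ _ => (posLe_iff hεH).mp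
  -- every maximal element of Pos(H) is the image of a maximal element of Pos(G)
  have hmaxonto : ∀ y, IsMax' H εH y → ∃ m, IsMax' G εG m ∧ h m = y := by
    intro y hy
    obtain ⟨x, rfl⟩ := hsurj y
    exact ⟨maxOf x, isMax_maxOf hεG x, hy _ (hmono _ _ (le_maxOf hεG x))⟩
  -- h maps the two tops of Pos(G) onto the two tops of Pos(H)
  have htops : (h .top1 = .top1 ∧ h .top2 = .top2) ∨ (h .top1 = .top2 ∧ h .top2 = .top1) := by
    obtain ⟨m1, hm1max, hm1⟩ := hmaxonto .top1 (isMax_top1 hεH)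
    obtain ⟨m2, hm2max, hm2⟩ := hmaxonto .top2 (isMax_top2 hεH)
    rcases isMax_cases hεG hm1max with rfl | rfl | rfl | rfl <;>
      rcases isMax_cases hεG hm2max with rfl | rfl | rfl | rfl <;>
      simp_all
  have ht1 : h .top1 = .top1 ∨ h .top1 = .top2 := by
    rcases htops with ⟨a, _⟩ | ⟨a, _⟩
    exacts [Or.inl a, Or.inr a]
  have ht2 : h .top2 = .top1 ∨ h .top2 = .top2 := by
    rcases htops with ⟨_, b⟩ | ⟨_, b⟩
    exacts [Or.inr b, Or.inl b]
  -- images of A-vertices avoid infB, images of B-vertices avoid infA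
  have nA : ∀ v : VG, ¬ PosLe H εH (h (.verA v)) .infB := by
    intro v hle
    obtain ⟨z, hz, hzeq⟩ := hback _ _ hle
    have hz' := dnG _ _ hz
    cases z <;> simp only [ELe] at hz'
    case verA w =>
      subst hz'
      have h1 : PosLe H εH (h (.verA v)) .infA := hiA ▸ hmono _ _ (leG _ _ (by simp [ELe]))
      rw [hzeq] at h1
      exact absurd (dnH _ _ h1) (by simp [ELe])
    case edge1 e =>
      have h1 : PosLe H εH (h (.edge1 e)) (h .top1) := hmono _ _ (leG _ _ (by simp [ELe]))
      rw [hzeq] at h1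
      rcases ht1 with e1 | e1 <;> rw [e1] at h1 <;> exact absurd (dnH _ _ h1) (by simp [ELe])
    case edge2 e =>
      have h1 : PosLe H εH (h (.edge2 e)) (h .top1) := hmono _ _ (leG _ _ (by simp [ELe]))
      rw [hzeq] at h1
      rcases ht1 with e1 | e1 <;> rw [e1] at h1 <;> exact absurd (dnH _ _ h1) (by simp [ELe])
    case top1 => rcases ht1 with e1 | e1 <;> rw [e1] at hzeq <;> simp at hzeq
    case top2 => rcases ht2 with e1 | e1 <;> rw [e1] at hzeq <;> simp at hzeq
    case infA => rw [hiA] at hzeq; simp at hzeq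
  have nB : ∀ v : VG, ¬ PosLe H εH (h (.verB v)) .infA := by
    intro v hle
    obtain ⟨z, hz, hzeq⟩ := hback _ _ hle
    have hz' := dnG _ _ hz
    cases z <;> simp only [ELe] at hz'
    case verB w =>
      subst hz'
      have h1 : PosLe H εH (h (.verB v)) .infB := hiB ▸ hmono _ _ (leG _ _ (by simp [ELe]))
      rw [hzeq] at h1
      exact absurd (dnH _ _ h1) (by simp [ELe])
    case edge1 e =>
      have h1 : PosLe H εH (h (.edge1 e)) (h .top1) := hmono _ _ (leG _ _ (by simp [ELe]))
      rw [hzeq] at h1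
      rcases ht1 with e1 | e1 <;> rw [e1] at h1 <;> exact absurd (dnH _ _ h1) (by simp [ELe])
    case edge2 e =>
      have h1 : PosLe H εH (h (.edge2 e)) (h .top1) := hmono _ _ (leG _ _ (by simp [ELe]))
      rw [hzeq] at h1
      rcases ht1 with e1 | e1 <;> rw [e1] at h1 <;> exact absurd (dnH _ _ h1) (by simp [ELe])
    case top1 => rcases ht1 with e1 | e1 <;> rw [e1] at hzeq <;> simp at hzeq
    case top2 => rcases ht2 with e1 | e1 <;> rw [e1] at hzeq <;> simp at hzeq
    case infB => rw [hiB] at hzeq; simp at hzeq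
  -- images of edge elements avoid both infs
  have nE1 : ∀ (e : ↥G.edgeSet) (ι : PosElem VH ↥H.edgeSet), ι = .infA ∨ ι = .infB →
      ¬ PosLe H εH (h (.edge1 e)) ι := by
    intro e ι hι hle
    obtain ⟨z, hz, hzeq⟩ := hback _ _ hle
    have hz' := dnG _ _ hz
    cases z <;> simp only [ELe] at hz'
    case edge1 f =>
      subst hz'
      have h1 : PosLe H εH (h (.edge1 e)) (h .top1) := hmono _ _ (leG _ _ (by simp [ELe]))
      rw [hzeq] at h1
      rcases hι with rfl | rfl <;> rcases ht1 with e1 | e1 <;> rw [e1] at h1 <;>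
        exact absurd (dnH _ _ h1) (by simp [ELe])
    case top1 => rcases hι with rfl | rfl <;> rcases ht1 with e1 | e1 <;> rw [e1] at hzeq <;>
      simp at hzeq
    case top2 => rcases hι with rfl | rfl <;> rcases ht2 with e1 | e1 <;> rw [e1] at hzeq <;>
      simp at hzeq
  have nE2 : ∀ (e : ↥G.edgeSet) (ι : PosElem VH ↥H.edgeSet), ι = .infA ∨ ι = .infB →
      ¬ PosLe H εH (h (.edge2 e)) ι := by
    intro e ι hι hle
    obtain ⟨z, hz, hzeq⟩ := hback _ _ hle
    have hz' := dnG _ _ hz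
    cases z <;> simp only [ELe] at hz'
    case edge2 f =>
      subst hz'
      have h1 : PosLe H εH (h (.edge2 e)) (h .top1) := hmono _ _ (leG _ _ (by simp [ELe]))
      rw [hzeq] at h1
      rcases hι with rfl | rfl <;> rcases ht1 with e1 | e1 <;> rw [e1] at h1 <;>
        exact absurd (dnH _ _ h1) (by simp [ELe])
    case top1 => rcases hι with rfl | rfl <;> rcases ht1 with e1 | e1 <;> rw [e1] at hzeq <;>
      simp at hzeq
    case top2 => rcases hι with rfl | rfl <;> rcases ht2 with e1 | e1 <;> rw [e1] at hzeq <;>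
      simp at hzeq
  -- h maps vertices to vertices
  have hver : ∀ v : VG, ∃ w : VH, h (.ver v) = .ver w := by
    intro v
    have h1 : PosLe H εH (h (.ver v)) .infA := hiA ▸ hmono _ _ (leG _ _ (by simp [ELe]))
    have h2 : PosLe H εH (h (.ver v)) .infB := hiB ▸ hmono _ _ (leG _ _ (by simp [ELe]))
    cases hx : h (.ver v)
    all_goals rw [hx] at h1 h2
    case ver w => exact ⟨w, rfl⟩
    case verA w => exact absurd (dnH _ _ h2) (by simp [ELe])
    case infA => exact absurd (dnH _ _ h2) (by simp [ELe])
    all_goals exact absurd (dnH _ _ h1) (by simp [ELe])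
  choose g hg using hver
  -- h maps A-vertices to A-vertices compatibly
  have hverA : ∀ v : VG, h (.verA v) = .verA (g v) := by
    intro v
    have h1 : PosLe H εH (h (.verA v)) .infA := hiA ▸ hmono _ _ (leG _ _ (by simp [ELe]))
    have h2 := nA v
    have h3 : PosLe H εH (h (.verA v)) (h .top1) := hmono _ _ (leG _ _ (by simp [ELe]))
    have h4 : PosLe H εH (.ver (g v)) (h (.verA v)) := by
      rw [← hg v]; exact hmono _ _ (leG _ _ (by simp [ELe]))
    cases hx : h (.verA v)
    all_goals rw [hx] at h1 h2 h3 h4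
    case ver w => exact absurd (leH _ _ (by simp [ELe])) h2
    case verA w =>
      have h5 := dnH _ _ h4
      simp only [ELe] at h5
      rw [h5]
    case infA =>
      rcases ht1 with e1 | e1 <;> rw [e1] at h3 <;> exact absurd (dnH _ _ h3) (by simp [ELe])
    all_goals exact absurd (dnH _ _ h1) (by simp [ELe])
  have hverB : ∀ v : VG, h (.verB v) = .verB (g v) := by
    intro v
    have h1 : PosLe H εH (h (.verB v)) .infB := hiB ▸ hmono _ _ (leG _ _ (by simp [ELe]))
    have h2 := nB v
    have h3 : PosLe H εH (h (.verB v)) (h .top1) := hmono _ _ (leG _ _ (by simp [ELe]))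
    have h4 : PosLe H εH (.ver (g v)) (h (.verB v)) := by
      rw [← hg v]; exact hmono _ _ (leG _ _ (by simp [ELe]))
    cases hx : h (.verB v)
    all_goals rw [hx] at h1 h2 h3 h4
    case ver w => exact absurd (leH _ _ (by simp [ELe])) h2
    case verB w =>
      have h5 := dnH _ _ h4
      simp only [ELe] at h5
      rw [h5]
    case infB =>
      rcases ht1 with e1 | e1 <;> rw [e1] at h3 <;> exact absurd (dnH _ _ h3) (by simp [ELe])
    all_goals exact absurd (dnH _ _ h1) (by simp [ELe])
  -- h maps edge elements to edge elements
  have hedge1 : ∀ e : ↥G.edgeSet,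
      (∃ f, h (.edge1 e) = .edge1 f) ∨ (∃ f, h (.edge1 e) = .edge2 f) := by
    intro e
    have hA := nE1 e _ (Or.inl rfl)
    have hB := nE1 e _ (Or.inr rfl)
    have h3 : PosLe H εH (h (.edge1 e)) (h .top1) := hmono _ _ (leG _ _ (by simp [ELe]))
    have h4 : PosLe H εH (h (.edge1 e)) (h .top2) := hmono _ _ (leG _ _ (by simp [ELe]))
    cases hx : h (.edge1 e)
    all_goals rw [hx] at hA hB h3 h4
    case ver w => exact absurd (leH _ _ (by simp [ELe])) hA
    case verA w => exact absurd (leH _ _ (by simp [ELe])) hA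
    case verB w => exact absurd (leH _ _ (by simp [ELe])) hB
    case edge1 f => exact Or.inl ⟨f, rfl⟩
    case edge2 f => exact Or.inr ⟨f, rfl⟩
    case top1 =>
      rcases htops with ⟨a, b⟩ | ⟨a, b⟩
      · rw [b] at h4; exact absurd (dnH _ _ h4) (by simp [ELe])
      · rw [a] at h3; exact absurd (dnH _ _ h3) (by simp [ELe])
    case top2 =>
      rcases htops with ⟨a, b⟩ | ⟨a, b⟩
      · rw [a] at h3; exact absurd (dnH _ _ h3) (by simp [ELe])
      · rw [b] at h4; exact absurd (dnH _ _ h4) (by simp [ELe])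
    case infA =>
      rcases ht1 with e1 | e1 <;> rw [e1] at h3 <;> exact absurd (dnH _ _ h3) (by simp [ELe])
    case infB =>
      rcases ht1 with e1 | e1 <;> rw [e1] at h3 <;> exact absurd (dnH _ _ h3) (by simp [ELe])
  have hedge2 : ∀ e : ↥G.edgeSet,
      (∃ f, h (.edge2 e) = .edge1 f) ∨ (∃ f, h (.edge2 e) = .edge2 f) := by
    intro e
    have hA := nE2 e _ (Or.inl rfl)
    have hB := nE2 e _ (Or.inr rfl)
    have h3 : PosLe H εH (h (.edge2 e)) (h .top1) := hmono _ _ (leG _ _ (by simp [ELe]))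
    have h4 : PosLe H εH (h (.edge2 e)) (h .top2) := hmono _ _ (leG _ _ (by simp [ELe]))
    cases hx : h (.edge2 e)
    all_goals rw [hx] at hA hB h3 h4
    case ver w => exact absurd (leH _ _ (by simp [ELe])) hA
    case verA w => exact absurd (leH _ _ (by simp [ELe])) hA
    case verB w => exact absurd (leH _ _ (by simp [ELe])) hB
    case edge1 f => exact Or.inl ⟨f, rfl⟩
    case edge2 f => exact Or.inr ⟨f, rfl⟩
    case top1 =>
      rcases htops with ⟨a, b⟩ | ⟨a, b⟩
      · rw [b] at h4; exact absurd (dnH _ _ h4) (by simp [ELe])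
      · rw [a] at h3; exact absurd (dnH _ _ h3) (by simp [ELe])
    case top2 =>
      rcases htops with ⟨a, b⟩ | ⟨a, b⟩
      · rw [a] at h3; exact absurd (dnH _ _ h3) (by simp [ELe])
      · rw [b] at h4; exact absurd (dnH _ _ h4) (by simp [ELe])
    case infA =>
      rcases ht1 with e1 | e1 <;> rw [e1] at h3 <;> exact absurd (dnH _ _ h3) (by simp [ELe])
    case infB =>
      rcases ht1 with e1 | e1 <;> rw [e1] at h3 <;> exact absurd (dnH _ _ h3) (by simp [ELe])
  refine ⟨g, hg, ?_, ?_, ?_⟩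
  · -- surjectivity of g
    intro w
    obtain ⟨x, hx⟩ := hsurj (.ver w)
    cases x
    case ver v =>
      refine ⟨v, ?_⟩
      have := (hg v).symm.trans hx
      simpa using this
    case verA v => rw [hverA v] at hx; simp at hx
    case verB v => rw [hverB v] at hx; simp at hx
    case edge1 e => rcases hedge1 e with ⟨f, hf⟩ | ⟨f, hf⟩ <;> rw [hf] at hx <;> simp at hx
    case edge2 e => rcases hedge2 e with ⟨f, hf⟩ | ⟨f, hf⟩ <;> rw [hf] at hx <;> simp at hx
    case top1 => rcases ht1 with e1 | e1 <;> rw [e1] at hx <;> simp at hx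
    case top2 => rcases ht2 with e1 | e1 <;> rw [e1] at hx <;> simp at hx
    case infA => rw [hiA] at hx; simp at hx
    case infB => rw [hiB] at hx; simp at hx
  · -- HP
    intro u v huv
    set e : ↥G.edgeSet := ⟨s(u, v), G.mem_edgeSet.mpr huv⟩ with he
    have hends := hεG e
    simp only [he, Sym2.eq, Sym2.rel_iff', Prod.mk.injEq, Prod.swap_prod_mk] at hends
    have hadjH : ∀ f : ↥H.edgeSet, H.Adj (εH f).1 (εH f).2 := by
      intro f
      exact H.mem_edgeSet.mp ((hεH f) ▸ f.2)
    rcases hends with ⟨h1, h2⟩ | ⟨h1, h2⟩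
    · -- u = fst e, v = snd e : use edge1 e
      have hu : PosLe H εH (.verA (g u)) (h (.edge1 e)) := by
        rw [← hverA u]
        exact hmono _ _ (leG _ _ (by simp only [ELe]; exact h1))
      have hv : PosLe H εH (.verB (g v)) (h (.edge1 e)) := by
        rw [← hverB v]
        exact hmono _ _ (leG _ _ (by simp only [ELe]; exact h2))
      rcases hedge1 e with ⟨f, hf⟩ | ⟨f, hf⟩ <;> rw [hf] at hu hv
      · have eu := dnH _ _ hu; have ev := dnH _ _ hv
        simp only [ELe] at eu ev
        rw [eu, ev]; exact hadjH f
      · have eu := dnH _ _ hu; have ev := dnH _ _ hv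
        simp only [ELe] at eu ev
        rw [eu, ev]; exact (hadjH f).symm
    · -- u = snd e, v = fst e : use edge2 e
      have hu : PosLe H εH (.verA (g u)) (h (.edge2 e)) := by
        rw [← hverA u]
        exact hmono _ _ (leG _ _ (by simp only [ELe]; exact h1))
      have hv : PosLe H εH (.verB (g v)) (h (.edge2 e)) := by
        rw [← hverB v]
        exact hmono _ _ (leG _ _ (by simp only [ELe]; exact h2))
      rcases hedge2 e with ⟨f, hf⟩ | ⟨f, hf⟩ <;> rw [hf] at hu hv
      · have eu := dnH _ _ hu; have ev := dnH _ _ hv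
        simp only [ELe] at eu ev
        rw [eu, ev]; exact hadjH f
      · have eu := dnH _ _ hu; have ev := dnH _ _ hv
        simp only [ELe] at eu ev
        rw [eu, ev]; exact (hadjH f).symm
  · -- BP
    intro u w huw
    set f : ↥H.edgeSet := ⟨s(g u, w), H.mem_edgeSet.mpr huw⟩ with hf
    have hends := hεH f
    simp only [hf, Sym2.eq, Sym2.rel_iff', Prod.mk.injEq, Prod.swap_prod_mk] at hends
    have hadjG : ∀ e : ↥G.edgeSet, G.Adj (εG e).1 (εG e).2 := by
      intro e
      exact G.mem_edgeSet.mp ((hεG e) ▸ e.2)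
    rcases hends with ⟨h1, h2⟩ | ⟨h1, h2⟩
    · -- g u = fst f, w = snd f : pull back edge1 f
      have hle : PosLe H εH (h (.verA u)) (.edge1 f) := by
        rw [hverA u]
        exact leH _ _ (by simp only [ELe]; exact h1)
      obtain ⟨z, hz, hzeq⟩ := hback _ _ hle
      have hz' := dnG _ _ hz
      cases z <;> simp only [ELe] at hz'
      case verA v' => subst hz'; rw [hverA u] at hzeq; simp at hzeq
      case edge1 e =>
        refine ⟨(εG e).2, ?_, ?_⟩
        · rw [hz']; exact hadjG e
        · have hv : PosLe H εH (.verB (g (εG e).2)) (.edge1 f) := by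
            rw [← hverB, ← hzeq]
            exact hmono _ _ (leG _ _ (by simp [ELe]))
          have := dnH _ _ hv
          simp only [ELe] at this
          rw [this, ← h2]
      case edge2 e =>
        refine ⟨(εG e).1, ?_, ?_⟩
        · rw [hz']; exact (hadjG e).symm
        · have hv : PosLe H εH (.verB (g (εG e).1)) (.edge1 f) := by
            rw [← hverB, ← hzeq]
            exact hmono _ _ (leG _ _ (by simp [ELe]))
          have := dnH _ _ hv
          simp only [ELe] at this
          rw [this, ← h2]
      case top1 => rcases ht1 with e1 | e1 <;> rw [e1] at hzeq <;> simp at hzeq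
      case top2 => rcases ht2 with e1 | e1 <;> rw [e1] at hzeq <;> simp at hzeq
      case infA => rw [hiA] at hzeq; simp at hzeq
    · -- g u = snd f, w = fst f : pull back edge2 f
      have hle : PosLe H εH (h (.verA u)) (.edge2 f) := by
        rw [hverA u]
        exact leH _ _ (by simp only [ELe]; exact h1)
      obtain ⟨z, hz, hzeq⟩ := hback _ _ hle
      have hz' := dnG _ _ hz
      cases z <;> simp only [ELe] at hz'
      case verA v' => subst hz'; rw [hverA u] at hzeq; simp at hzeq
      case edge1 e =>
        refine ⟨(εG e).2, ?_, ?_⟩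
        · rw [hz']; exact hadjG e
        · have hv : PosLe H εH (.verB (g (εG e).2)) (.edge2 f) := by
            rw [← hverB, ← hzeq]
            exact hmono _ _ (leG _ _ (by simp [ELe]))
          have := dnH _ _ hv
          simp only [ELe] at this
          rw [this, ← h2]
      case edge2 e =>
        refine ⟨(εG e).1, ?_, ?_⟩
        · rw [hz']; exact (hadjG e).symm
        · have hv : PosLe H εH (.verB (g (εG e).1)) (.edge2 f) := by
            rw [← hverB, ← hzeq]
            exact hmono _ _ (leG _ _ (by simp [ELe]))
          have := dnH _ _ hv
          simp only [ELe] at this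
          rw [this, ← h2]
      case top1 => rcases ht1 with e1 | e1 <;> rw [e1] at hzeq <;> simp at hzeq
      case top2 => rcases ht2 with e1 | e1 <;> rw [e1] at hzeq <;> simp at hzeq
      case infA => rw [hiA] at hzeq; simp at hzeq

end Main

section Final

variable {VG VH : Type} {G : SimpleGraph VG} {H : SimpleGraph VH}
  {εG : ↥G.edgeSet → VG × VG} {εH : ↥H.edgeSet → VH × VH}
  {h : PosElem VG ↥G.edgeSet → PosElem VH ↥H.edgeSet}

lemma ver_le_max (hεH : OrientOK H εH) (w : VH) {y : PosElem VH ↥H.edgeSet}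
    (hy : IsMax' H εH y) : PosLe H εH (.ver w) y := by
  rcases isMax_cases hεH hy with rfl | rfl | rfl | rfl <;>
    exact (posLe_iff hεH).mpr (by simp [ELe])

lemma inj_on_max (hεG : OrientOK G εG) (hεH : OrientOK H εH)
    (hsurj : Function.Surjective h)
    (hpm : IsPMorphismRel (PosLe G εG) (PosLe H εH) h) :
    ∀ a b : PosElem VG ↥G.edgeSet,
      (a = .top1 ∨ a = .top2 ∨ a = .infA ∨ a = .infB) →
      (b = .top1 ∨ b = .top2 ∨ b = .infA ∨ b = .infB) →
      h a = h b → a = b := by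
  classical
  obtain ⟨hmono, hback⟩ := hpm
  have h_max : ∀ x, IsMax' G εG x → IsMax' H εH (h x) := by
    intro x hx y hy
    obtain ⟨z, hz, rfl⟩ := hback _ _ hy
    rw [hx _ hz]
  have hmaxonto : ∀ y, IsMax' H εH y → ∃ m, IsMax' G εG m ∧ h m = y := by
    intro y hy
    obtain ⟨x, rfl⟩ := hsurj y
    exact ⟨maxOf x, isMax_maxOf hεG x, hy _ (hmono _ _ (le_maxOf hεG x))⟩
  set S : Finset (PosElem VG ↥G.edgeSet) := {.top1, .top2, .infA, .infB} with hS
  set T : Finset (PosElem VH ↥H.edgeSet) := {.top1, .top2, .infA, .infB} with hT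
  have hScard : S.card = 4 := by
    rw [hS]
    rw [Finset.card_insert_of_notMem (by simp), Finset.card_insert_of_notMem (by simp),
      Finset.card_insert_of_notMem (by simp), Finset.card_singleton]
  have hTcard : T.card = 4 := by
    rw [hT]
    rw [Finset.card_insert_of_notMem (by simp), Finset.card_insert_of_notMem (by simp),
      Finset.card_insert_of_notMem (by simp), Finset.card_singleton]
  have hTsub : T ⊆ S.image h := by
    intro y hy
    have hymax : IsMax' H εH y := by
      rw [hT] at hy
      simp only [Finset.mem_insert, Finset.mem_singleton] at hy
      rcases hy with rfl | rfl | rfl | rfl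
      exacts [isMax_top1 hεH, isMax_top2 hεH, isMax_infA hεH, isMax_infB hεH]
    obtain ⟨m, hmmax, hm⟩ := hmaxonto y hymax
    refine Finset.mem_image.mpr ⟨m, ?_, hm⟩
    rcases isMax_cases hεG hmmax with rfl | rfl | rfl | rfl <;> simp [hS]
  have hcard : (S.image h).card = S.card := by
    have h1 : (S.image h).card ≤ 4 := hScard ▸ Finset.card_image_le
    have h2 : 4 ≤ (S.image h).card := hTcard ▸ Finset.card_le_card hTsub
    omega
  have hinj := Finset.injOn_of_card_image_eq hcard
  intro a b ha hb hab
  refine hinj ?_ ?_ hab <;> simp only [hS, Finset.coe_insert, Set.mem_insert_iff,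
    Finset.coe_singleton, Set.mem_singleton_iff] <;> tauto

lemma infs_cases (hεG : OrientOK G εG) (hεH : OrientOK H εH)
    (hsurj : Function.Surjective h)
    (hpm : IsPMorphismRel (PosLe G εG) (PosLe H εH) h) (v₀ : VG) :
    (h .infA = .infA ∧ h .infB = .infB) ∨ (h .infA = .infB ∧ h .infB = .infA) := by
  have hinj := inj_on_max hεG hεH hsurj hpm
  obtain ⟨hmono, hback⟩ := hpm
  have leG : ∀ x y, ELe G εG x y → PosLe G εG x y := fun _ _ => (posLe_iff hεG).mpr
  have leH : ∀ x y, ELe H εH x y → PosLe H εH x y := fun _ _ => (posLe_iff hεH).mpr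
  have dnG : ∀ x y, PosLe G εG x y → ELe G εG x y := fun _ _ => (posLe_iff hεG).mp
  have dnH : ∀ x y, PosLe H εH x y → ELe H εH x y := fun _ _ => (posLe_iff hεH).mp
  have h_max : ∀ x, IsMax' G εG x → IsMax' H εH (h x) := by
    intro x hx y hy
    obtain ⟨z, hz, rfl⟩ := hback _ _ hy
    rw [hx _ hz]
  have hmaxonto : ∀ y, IsMax' H εH y → ∃ m, IsMax' G εG m ∧ h m = y := by
    intro y hy
    obtain ⟨x, rfl⟩ := hsurj y
    exact ⟨maxOf x, isMax_maxOf hεG x, hy _ (hmono _ _ (le_maxOf hεG x))⟩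
  -- h (verA v₀) is not below h infB, and symmetrically
  have nA : ¬ PosLe H εH (h (.verA v₀)) (h .infB) := by
    intro hle
    obtain ⟨z, hz, hzeq⟩ := hback _ _ hle
    have hz' := dnG _ _ hz
    cases z <;> simp only [ELe] at hz'
    case verA w =>
      subst hz'
      have h1 : PosLe H εH (h (.verA v₀)) (h .infA) := hmono _ _ (leG _ _ (by simp [ELe]))
      rw [hzeq] at h1
      have := (h_max _ (isMax_infB hεG)) _ h1
      exact absurd (hinj _ _ (by tauto) (by tauto) this.symm) (by simp)
    case edge1 e =>
      have h1 : PosLe H εH (h (.edge1 e)) (h .top1) := hmono _ _ (leG _ _ (by simp [ELe]))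
      rw [hzeq] at h1
      have := (h_max _ (isMax_infB hεG)) _ h1
      exact absurd (hinj _ _ (by tauto) (by tauto) this) (by simp)
    case edge2 e =>
      have h1 : PosLe H εH (h (.edge2 e)) (h .top1) := hmono _ _ (leG _ _ (by simp [ELe]))
      rw [hzeq] at h1
      have := (h_max _ (isMax_infB hεG)) _ h1
      exact absurd (hinj _ _ (by tauto) (by tauto) this) (by simp)
    case top1 => exact absurd (hinj _ _ (by tauto) (by tauto) hzeq) (by simp)
    case top2 => exact absurd (hinj _ _ (by tauto) (by tauto) hzeq) (by simp)
    case infA => exact absurd (hinj _ _ (by tauto) (by tauto) hzeq) (by simp)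
  have nB : ¬ PosLe H εH (h (.verB v₀)) (h .infA) := by
    intro hle
    obtain ⟨z, hz, hzeq⟩ := hback _ _ hle
    have hz' := dnG _ _ hz
    cases z <;> simp only [ELe] at hz'
    case verB w =>
      subst hz'
      have h1 : PosLe H εH (h (.verB v₀)) (h .infB) := hmono _ _ (leG _ _ (by simp [ELe]))
      rw [hzeq] at h1
      have := (h_max _ (isMax_infA hεG)) _ h1
      exact absurd (hinj _ _ (by tauto) (by tauto) this.symm) (by simp)
    case edge1 e =>
      have h1 : PosLe H εH (h (.edge1 e)) (h .top1) := hmono _ _ (leG _ _ (by simp [ELe]))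
      rw [hzeq] at h1
      have := (h_max _ (isMax_infA hεG)) _ h1
      exact absurd (hinj _ _ (by tauto) (by tauto) this) (by simp)
    case edge2 e =>
      have h1 : PosLe H εH (h (.edge2 e)) (h .top1) := hmono _ _ (leG _ _ (by simp [ELe]))
      rw [hzeq] at h1
      have := (h_max _ (isMax_infA hεG)) _ h1
      exact absurd (hinj _ _ (by tauto) (by tauto) this) (by simp)
    case top1 => exact absurd (hinj _ _ (by tauto) (by tauto) hzeq) (by simp)
    case top2 => exact absurd (hinj _ _ (by tauto) (by tauto) hzeq) (by simp)
    case infB => exact absurd (hinj _ _ (by tauto) (by tauto) hzeq) (by simp)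
  -- y below both infs must be a ver, hence below every maximal: contradictions
  have classify : ∀ y : PosElem VH ↥H.edgeSet, PosLe H εH y .infA → PosLe H εH y .infB →
      ∃ w, y = .ver w := by
    intro y hA hB
    have hA' := dnH _ _ hA
    have hB' := dnH _ _ hB
    cases y <;> simp only [ELe] at hA' hB'
    exact ⟨_, rfl⟩
  have yA1 : PosLe H εH (h (.verA v₀)) (h .top1) := hmono _ _ (leG _ _ (by simp [ELe]))
  have yA2 : PosLe H εH (h (.verA v₀)) (h .top2) := hmono _ _ (leG _ _ (by simp [ELe]))
  have yAiA : PosLe H εH (h (.verA v₀)) (h .infA) := hmono _ _ (leG _ _ (by simp [ELe]))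
  have yB1 : PosLe H εH (h (.verB v₀)) (h .top1) := hmono _ _ (leG _ _ (by simp [ELe]))
  have yB2 : PosLe H εH (h (.verB v₀)) (h .top2) := hmono _ _ (leG _ _ (by simp [ELe]))
  have yBiB : PosLe H εH (h (.verB v₀)) (h .infB) := hmono _ _ (leG _ _ (by simp [ELe]))
  -- if h(verA v₀) is below both infs of Pos(H), contradiction; same for verB
  have contraA : ¬ (PosLe H εH (h (.verA v₀)) .infA ∧ PosLe H εH (h (.verA v₀)) .infB) := by
    rintro ⟨c1, c2⟩
    obtain ⟨w, hw⟩ := classify _ c1 c2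
    apply nA
    rw [hw]
    exact ver_le_max hεH w (h_max _ (isMax_infB hεG))
  have contraB : ¬ (PosLe H εH (h (.verB v₀)) .infA ∧ PosLe H εH (h (.verB v₀)) .infB) := by
    rintro ⟨c1, c2⟩
    obtain ⟨w, hw⟩ := classify _ c1 c2
    apply nB
    rw [hw]
    exact ver_le_max hεH w (h_max _ (isMax_infA hεG))
  -- the tops of Pos(G) do not map to infs
  have ntop : ∀ m : PosElem VG ↥G.edgeSet, (m = .top1 ∨ m = .top2) →
      (h m ≠ .infA ∧ h m ≠ .infB) := by
    rintro m hm
    constructor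
    · intro hmA
      obtain ⟨m', hm'max, hm'⟩ := hmaxonto .infB (isMax_infB hεH)
      rcases isMax_cases hεG hm'max with rfl | rfl | rfl | rfl
      · -- m' = top1
        rcases hm with rfl | rfl
        · rw [hmA] at hm'; simp at hm'
        · exact contraB ⟨by rw [← hmA]; exact yB2, by rw [← hm']; exact yB1⟩
      · rcases hm with rfl | rfl
        · exact contraB ⟨by rw [← hmA]; exact yB1, by rw [← hm']; exact yB2⟩
        · rw [hmA] at hm'; simp at hm'
      · -- m' = infA : h infA = infB
        rcases hm with rfl | rfl
        · exact contraA ⟨by rw [← hmA]; exact yA1, by rw [← hm']; exact yAiA⟩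
        · exact contraA ⟨by rw [← hmA]; exact yA2, by rw [← hm']; exact yAiA⟩
      · -- m' = infB : h infB = infB
        rcases hm with rfl | rfl
        · exact contraB ⟨by rw [← hmA]; exact yB1, by rw [← hm']; exact yBiB⟩
        · exact contraB ⟨by rw [← hmA]; exact yB2, by rw [← hm']; exact yBiB⟩
    · intro hmB
      obtain ⟨m', hm'max, hm'⟩ := hmaxonto .infA (isMax_infA hεH)
      rcases isMax_cases hεG hm'max with rfl | rfl | rfl | rfl
      · rcases hm with rfl | rfl
        · rw [hmB] at hm'; simp at hm'
        · exact contraA ⟨by rw [← hm']; exact yA1, by rw [← hmB]; exact yA2⟩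
      · rcases hm with rfl | rfl
        · exact contraA ⟨by rw [← hm']; exact yA2, by rw [← hmB]; exact yA1⟩
        · rw [hmB] at hm'; simp at hm'
      · -- m' = infA : h infA = infA
        rcases hm with rfl | rfl
        · exact contraA ⟨by rw [← hm']; exact yAiA, by rw [← hmB]; exact yA1⟩
        · exact contraA ⟨by rw [← hm']; exact yAiA, by rw [← hmB]; exact yA2⟩
      · -- m' = infB : h infB = infA
        rcases hm with rfl | rfl
        · exact contraB ⟨by rw [← hm']; exact yBiB, by rw [← hmB]; exact yB1⟩
        · exact contraB ⟨by rw [← hm']; exact yBiB, by rw [← hmB]; exact yB2⟩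
  -- hence the infs of Pos(H) are images of the infs of Pos(G)
  obtain ⟨mA, hmAmax, hmA⟩ := hmaxonto .infA (isMax_infA hεH)
  obtain ⟨mB, hmBmax, hmB⟩ := hmaxonto .infB (isMax_infB hεH)
  have hmA' : mA = .infA ∨ mA = .infB := by
    rcases isMax_cases hεG hmAmax with rfl | rfl | rfl | rfl
    · exact absurd hmA (ntop _ (Or.inl rfl)).1
    · exact absurd hmA (ntop _ (Or.inr rfl)).1
    · exact Or.inl rfl
    · exact Or.inr rfl
  have hmB' : mB = .infA ∨ mB = .infB := by
    rcases isMax_cases hεG hmBmax with rfl | rfl | rfl | rfl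
    · exact absurd hmB (ntop _ (Or.inl rfl)).2
    · exact absurd hmB (ntop _ (Or.inr rfl)).2
    · exact Or.inl rfl
    · exact Or.inr rfl
  rcases hmA' with rfl | rfl <;> rcases hmB' with rfl | rfl
  · rw [hmA] at hmB; simp at hmB
  · exact Or.inl ⟨hmA, hmB⟩
  · exact Or.inr ⟨hmB, hmA⟩
  · rw [hmB] at hmA; simp at hmA

end Final

end PosRestrict

open PosRestrict in
theorem restriction_is_locally_surjective {VG VH : Type} [Fintype VG] [Fintype VH] [Nonempty VH]
    (G : SimpleGraph VG) (H : SimpleGraph VH)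
    (εG : ↥G.edgeSet → VG × VG) (hεG : OrientOK G εG)
    (εH : ↥H.edgeSet → VH × VH) (hεH : OrientOK H εH)
    (h : PosElem VG ↥G.edgeSet → PosElem VH ↥H.edgeSet)
    (hsurj : Function.Surjective h)
    (hpm : IsPMorphismRel (PosLe G εG) (PosLe H εH) h) :
    ∃ g : VG → VH, (∀ v : VG, h (PosElem.ver v) = PosElem.ver (g v)) ∧
      Function.Surjective g ∧ IsLocallySurjHom G H g := by
  classical
  have h_max : ∀ x, IsMax' G εG x → IsMax' H εH (h x) := by
    intro x hx y hy
    obtain ⟨z, hz, rfl⟩ := hpm.2 _ _ hy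
    rw [hx _ hz]
  obtain ⟨w0⟩ := ‹Nonempty VH›
  obtain ⟨x0, hx0⟩ := hsurj (.ver w0)
  have hv0 : Nonempty VG := by
    cases x0
    case ver v => exact ⟨v⟩
    case verA v => exact ⟨v⟩
    case verB v => exact ⟨v⟩
    case edge1 e => exact ⟨(εG e).1⟩
    case edge2 e => exact ⟨(εG e).1⟩
    case top1 =>
      have hm := h_max _ (isMax_top1 hεG)
      rcases isMax_cases hεH hm with e | e | e | e <;> rw [hx0] at e <;> simp at e
    case top2 =>
      have hm := h_max _ (isMax_top2 hεG)
      rcases isMax_cases hεH hm with e | e | e | e <;> rw [hx0] at e <;> simp at e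
    case infA =>
      have hm := h_max _ (isMax_infA hεG)
      rcases isMax_cases hεH hm with e | e | e | e <;> rw [hx0] at e <;> simp at e
    case infB =>
      have hm := h_max _ (isMax_infB hεG)
      rcases isMax_cases hεH hm with e | e | e | e <;> rw [hx0] at e <;> simp at e
  obtain ⟨v0⟩ := hv0
  rcases infs_cases hεG hεH hsurj hpm v0 with ⟨hiA, hiB⟩ | ⟨hiA, hiB⟩
  · exact main_lemma hεG hεH hsurj hpm hiA hiB
  · -- compose with the A/B swap automorphism of Pos(H)
    have hsurj' : Function.Surjective (fun x => swap (h x)) := by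
      intro y
      obtain ⟨x, hx⟩ := hsurj (swap y)
      exact ⟨x, by simp only [hx, swap_swap]⟩
    have hpm' : IsPMorphismRel (PosLe G εG) (PosLe H εH) (fun x => swap (h x)) := by
      constructor
      · intro x y hxy
        exact swap_le (hpm.1 x y hxy)
      · intro x y hle
        have h2 := swap_le hle
        rw [swap_swap] at h2
        obtain ⟨z, hz, hzeq⟩ := hpm.2 x _ h2
        exact ⟨z, hz, by simp only [hzeq, swap_swap]⟩
    have hiA' : (fun x => swap (h x)) (PosElem.infA) = PosElem.infA := by
      show swap (h .infA) = .infA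
      rw [hiA]; rfl
    have hiB' : (fun x => swap (h x)) (PosElem.infB) = PosElem.infB := by
      show swap (h .infB) = .infB
      rw [hiB]; rfl
    obtain ⟨g, hg, hgs, hgl⟩ := main_lemma hεG hεH hsurj' hpm' hiA' hiB'
    refine ⟨g, ?_, hgs, hgl⟩
    intro v
    have h2 := congrArg swap (hg v)
    rw [swap_swap] at h2
    exact h2
end

section
/- Let G and H be finite simple graphs such that H has at least one vertex, and let g be a surjective locally surjective homomorphism from G onto H. Then there exists a surjective p-morphism h from Pos(G) onto Pos(H) such that h(x) = x for x ∈ {⊤₁, ⊤₂, ∞_a, ∞_b}, h(v) = g(v), h(v_a) = g(v)_a and h(v_b) = g(v)_b for every v ∈ V^G, and, for every edge e = uv of G with u_a, v_b ⋖ e_i in Pos(G), h(e_i) is the copy (g(u)g(v))_j of the edge g(u)g(v) of H satisfying g(u)_a, g(v)_b ⋖ (g(u)g(v))_j in Pos(H). -/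
namespace PosAux

lemma adj_orient {V : Type} (G : SimpleGraph V) (ε : ↥G.edgeSet → V × V)
    (hε : OrientOK G ε) (e : ↥G.edgeSet) : G.Adj (ε e).1 (ε e).2 := by
  have h2 := e.2
  rw [show (e : Sym2 V) = s((ε e).1, (ε e).2) from hε e, SimpleGraph.mem_edgeSet] at h2
  exact h2

lemma orient_cases {V : Type} (G : SimpleGraph V) (ε : ↥G.edgeSet → V × V)
    (hε : OrientOK G ε) (e : ↥G.edgeSet) (a b : V) (hab : (e : Sym2 V) = s(a, b)) :
    ε e = (a, b) ∨ ε e = (b, a) := by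
  have h := (hε e).symm.trans hab
  rw [Sym2.eq_iff] at h
  rcases h with ⟨h1, h2⟩ | ⟨h1, h2⟩
  · left; rw [Prod.ext_iff]; exact ⟨h1, h2⟩
  · right; rw [Prod.ext_iff]; exact ⟨h1, h2⟩

lemma inv_verA_edge1 {V : Type} {G : SimpleGraph V} {ε : ↥G.edgeSet → V × V}
    {a : V} {f : ↥G.edgeSet} (h : PosCov G ε (.verA a) (.edge1 f)) : (ε f).1 = a := by
  cases h; rfl

lemma inv_verB_edge1 {V : Type} {G : SimpleGraph V} {ε : ↥G.edgeSet → V × V}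
    {a : V} {f : ↥G.edgeSet} (h : PosCov G ε (.verB a) (.edge1 f)) : (ε f).2 = a := by
  cases h; rfl

lemma inv_verA_edge2 {V : Type} {G : SimpleGraph V} {ε : ↥G.edgeSet → V × V}
    {a : V} {f : ↥G.edgeSet} (h : PosCov G ε (.verA a) (.edge2 f)) : (ε f).2 = a := by
  cases h; rfl

lemma inv_verB_edge2 {V : Type} {G : SimpleGraph V} {ε : ↥G.edgeSet → V × V}
    {a : V} {f : ↥G.edgeSet} (h : PosCov G ε (.verB a) (.edge2 f)) : (ε f).1 = a := by
  cases h; rfl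

section

variable {VG VH : Type} {G : SimpleGraph VG} {H : SimpleGraph VH}
    (εG : ↥G.edgeSet → VG × VG) (εH : ↥H.edgeSet → VH × VH) (g : VG → VH)
    (hεG : OrientOK G εG) (hεH : OrientOK H εH)
    (hg1 : ∀ u v : VG, G.Adj u v → H.Adj (g u) (g v))
    (hg2 : ∀ (u : VG) (w : VH), H.Adj (g u) w → ∃ v : VG, G.Adj u v ∧ g v = w)

noncomputable def fmap (e : ↥G.edgeSet) : ↥H.edgeSet :=
  ⟨s(g (εG e).1, g (εG e).2),
    H.mem_edgeSet.mpr (hg1 _ _ (adj_orient G εG hεG e))⟩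

lemma fmap_coe (e : ↥G.edgeSet) :
    (fmap εG g hεG hg1 e : Sym2 VH) = s(g (εG e).1, g (εG e).2) := rfl

open Classical in
noncomputable def posMap : PosElem VG ↥G.edgeSet → PosElem VH ↥H.edgeSet
  | .ver v => .ver (g v)
  | .verA v => .verA (g v)
  | .verB v => .verB (g v)
  | .edge1 e => if (εH (fmap εG g hεG hg1 e)).1 = g (εG e).1
      then .edge1 (fmap εG g hεG hg1 e) else .edge2 (fmap εG g hεG hg1 e)
  | .edge2 e => if (εH (fmap εG g hεG hg1 e)).1 = g (εG e).1
      then .edge2 (fmap εG g hεG hg1 e) else .edge1 (fmap εG g hεG hg1 e)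
  | .top1 => .top1
  | .top2 => .top2
  | .infA => .infA
  | .infB => .infB

lemma posMap_edge1_cases (e : ↥G.edgeSet) :
    posMap εG εH g hεG hg1 (.edge1 e) = .edge1 (fmap εG g hεG hg1 e) ∨
    posMap εG εH g hεG hg1 (.edge1 e) = .edge2 (fmap εG g hεG hg1 e) := by
  simp only [posMap]
  split
  · exact Or.inl rfl
  · exact Or.inr rfl

lemma posMap_edge2_cases (e : ↥G.edgeSet) :
    posMap εG εH g hεG hg1 (.edge2 e) = .edge1 (fmap εG g hεG hg1 e) ∨
    posMap εG εH g hεG hg1 (.edge2 e) = .edge2 (fmap εG g hεG hg1 e) := by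
  simp only [posMap]
  split
  · exact Or.inr rfl
  · exact Or.inl rfl

include hg2 in
lemma isol_map (v : VG) (hv : ∀ w, ¬ G.Adj v w) : ∀ w, ¬ H.Adj (g v) w := by
  intro w hw
  obtain ⟨u, hu, -⟩ := hg2 v w hw
  exact hv u hu

include hεH hg2 in
lemma cov_map {x y : PosElem VG ↥G.edgeSet} (hxy : PosCov G εG x y) :
    PosCov H εH (posMap εG εH g hεG hg1 x) (posMap εG εH g hεG hg1 y) := by
  have hne : ∀ e : ↥G.edgeSet, g (εG e).1 ≠ g (εG e).2 :=
    fun e => (hg1 _ _ (adj_orient G εG hεG e)).ne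
  have horient : ∀ e : ↥G.edgeSet,
      εH (fmap εG g hεG hg1 e) = (g (εG e).1, g (εG e).2) ∨
      εH (fmap εG g hεG hg1 e) = (g (εG e).2, g (εG e).1) :=
    fun e => orient_cases H εH hεH _ _ _ rfl
  cases hxy with
  | ver_verA v => exact .ver_verA _
  | ver_verB v => exact .ver_verB _
  | verA_infA v => exact .verA_infA _
  | verB_infB v => exact .verB_infB _
  | edge1_top1 e =>
      rcases posMap_edge1_cases εG εH g hεG hg1 e with h | h <;> rw [h]
      · exact .edge1_top1 _
      · exact .edge2_top1 _
  | edge1_top2 e =>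
      rcases posMap_edge1_cases εG εH g hεG hg1 e with h | h <;> rw [h]
      · exact .edge1_top2 _
      · exact .edge2_top2 _
  | edge2_top1 e =>
      rcases posMap_edge2_cases εG εH g hεG hg1 e with h | h <;> rw [h]
      · exact .edge1_top1 _
      · exact .edge2_top1 _
  | edge2_top2 e =>
      rcases posMap_edge2_cases εG εH g hεG hg1 e with h | h <;> rw [h]
      · exact .edge1_top2 _
      · exact .edge2_top2 _
  | isolA_top1 v hv => exact .isolA_top1 _ (isol_map g hg2 v hv)
  | isolA_top2 v hv => exact .isolA_top2 _ (isol_map g hg2 v hv)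
  | isolB_top1 v hv => exact .isolB_top1 _ (isol_map g hg2 v hv)
  | isolB_top2 v hv => exact .isolB_top2 _ (isol_map g hg2 v hv)
  | ua_edge1 e =>
      show PosCov H εH (.verA (g (εG e).1)) (posMap εG εH g hεG hg1 (.edge1 e))
      simp only [posMap]
      rcases horient e with hc | hc
      · rw [if_pos (by rw [hc])]
        have := PosCov.ua_edge1 (G := H) (ε := εH) (fmap εG g hεG hg1 e)
        rwa [hc] at this
      · rw [if_neg (by rw [hc]; exact fun h => hne e h.symm)]
        have := PosCov.va_edge2 (G := H) (ε := εH) (fmap εG g hεG hg1 e)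
        rwa [hc] at this
  | vb_edge1 e =>
      show PosCov H εH (.verB (g (εG e).2)) (posMap εG εH g hεG hg1 (.edge1 e))
      simp only [posMap]
      rcases horient e with hc | hc
      · rw [if_pos (by rw [hc])]
        have := PosCov.vb_edge1 (G := H) (ε := εH) (fmap εG g hεG hg1 e)
        rwa [hc] at this
      · rw [if_neg (by rw [hc]; exact fun h => hne e h.symm)]
        have := PosCov.ub_edge2 (G := H) (ε := εH) (fmap εG g hεG hg1 e)
        rwa [hc] at this
  | ub_edge2 e =>
      show PosCov H εH (.verB (g (εG e).1)) (posMap εG εH g hεG hg1 (.edge2 e))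
      simp only [posMap]
      rcases horient e with hc | hc
      · rw [if_pos (by rw [hc])]
        have := PosCov.ub_edge2 (G := H) (ε := εH) (fmap εG g hεG hg1 e)
        rwa [hc] at this
      · rw [if_neg (by rw [hc]; exact fun h => hne e h.symm)]
        have := PosCov.vb_edge1 (G := H) (ε := εH) (fmap εG g hεG hg1 e)
        rwa [hc] at this
  | va_edge2 e =>
      show PosCov H εH (.verA (g (εG e).2)) (posMap εG εH g hεG hg1 (.edge2 e))
      simp only [posMap]
      rcases horient e with hc | hc
      · rw [if_pos (by rw [hc])]
        have := PosCov.va_edge2 (G := H) (ε := εH) (fmap εG g hεG hg1 e)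
        rwa [hc] at this
      · rw [if_neg (by rw [hc]; exact fun h => hne e h.symm)]
        have := PosCov.ua_edge1 (G := H) (ε := εH) (fmap εG g hεG hg1 e)
        rwa [hc] at this

include hεH hg2 in
lemma edge_lift (v w : VG) (hvw : G.Adj v w) :
    ∃ (f : ↥H.edgeSet) (z : PosElem VG ↥G.edgeSet),
      (f : Sym2 VH) = s(g v, g w) ∧
      PosCov G εG (.verA v) z ∧ PosCov G εG (.verB w) z ∧
      (posMap εG εH g hεG hg1 z = .edge1 f ∨ posMap εG εH g hεG hg1 z = .edge2 f) ∧
      PosCov H εH (.verA (g v)) (posMap εG εH g hεG hg1 z) ∧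
      PosCov H εH (.verB (g w)) (posMap εG εH g hεG hg1 z) := by
  set e : ↥G.edgeSet := ⟨s(v, w), G.mem_edgeSet.mpr hvw⟩ with he
  refine ⟨fmap εG g hεG hg1 e, ?_⟩
  rcases orient_cases G εG hεG e v w rfl with hc | hc
  · refine ⟨.edge1 e, ?_, ?_, ?_, posMap_edge1_cases εG εH g hεG hg1 e, ?_, ?_⟩
    · rw [fmap_coe, hc]
    · have := PosCov.ua_edge1 (G := G) (ε := εG) e; rwa [hc] at this
    · have := PosCov.vb_edge1 (G := G) (ε := εG) e; rwa [hc] at this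
    · have := cov_map εG εH g hεG hεH hg1 hg2 (PosCov.ua_edge1 (G := G) (ε := εG) e)
      rw [hc] at this; exact this
    · have := cov_map εG εH g hεG hεH hg1 hg2 (PosCov.vb_edge1 (G := G) (ε := εG) e)
      rw [hc] at this; exact this
  · refine ⟨.edge2 e, ?_, ?_, ?_, posMap_edge2_cases εG εH g hεG hg1 e, ?_, ?_⟩
    · rw [fmap_coe, hc]; exact Sym2.eq_swap
    · have := PosCov.va_edge2 (G := G) (ε := εG) e; rwa [hc] at this
    · have := PosCov.ub_edge2 (G := G) (ε := εG) e; rwa [hc] at this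
    · have := cov_map εG εH g hεG hεH hg1 hg2 (PosCov.va_edge2 (G := G) (ε := εG) e)
      rw [hc] at this; exact this
    · have := cov_map εG εH g hεG hεH hg1 hg2 (PosCov.ub_edge2 (G := G) (ε := εG) e)
      rw [hc] at this; exact this

include hεH hg2 in
lemma cov_back (x : PosElem VG ↥G.edgeSet) (y : PosElem VH ↥H.edgeSet)
    (h : PosCov H εH (posMap εG εH g hεG hg1 x) y) :
    ∃ z, PosCov G εG x z ∧ posMap εG εH g hεG hg1 z = y := by
  have hHne : ∀ f : ↥H.edgeSet, (εH f).1 ≠ (εH f).2 :=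
    fun f => (adj_orient H εH hεH f).ne
  cases x with
  | ver v =>
    have h' : PosCov H εH (.ver (g v)) y := h
    generalize hw : g v = a at h'
    cases h' with
    | ver_verA => exact ⟨.verA v, .ver_verA v, by show PosElem.verA (g v) = _; rw [hw]⟩
    | ver_verB => exact ⟨.verB v, .ver_verB v, by show PosElem.verB (g v) = _; rw [hw]⟩
  | verA v =>
    have h' : PosCov H εH (.verA (g v)) y := h
    generalize hw : g v = a at h'
    cases h' with
    | verA_infA => exact ⟨.infA, .verA_infA v, rfl⟩
    | isolA_top1 _ hv =>
        subst hw
        exact ⟨.top1, .isolA_top1 v (fun u hu => hv (g u) (hg1 v u hu)), rfl⟩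
    | isolA_top2 _ hv =>
        subst hw
        exact ⟨.top2, .isolA_top2 v (fun u hu => hv (g u) (hg1 v u hu)), rfl⟩
    | ua_edge1 f =>
        have hadj : H.Adj (g v) (εH f).2 := by rw [hw]; exact adj_orient H εH hεH f
        obtain ⟨w', hvw, hgw⟩ := hg2 v _ hadj
        obtain ⟨f', z, hf'c, hA, hB, hmem, hHA, hHB⟩ :=
          edge_lift εG εH g hεG hεH hg1 hg2 v w' hvw
        have hff : f' = f := Subtype.ext (by rw [hf'c, hgw, hw]; exact (hεH f).symm)
        subst hff
        refine ⟨z, hA, ?_⟩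
        rcases hmem with hm | hm
        · exact hm
        · exfalso
          rw [hm] at hHA
          have h2 := inv_verA_edge2 hHA
          exact hHne _ (hw.symm.trans h2.symm)
    | va_edge2 f =>
        have hadj : H.Adj (g v) (εH f).1 := by
          rw [hw]; exact (adj_orient H εH hεH f).symm
        obtain ⟨w', hvw, hgw⟩ := hg2 v _ hadj
        obtain ⟨f', z, hf'c, hA, hB, hmem, hHA, hHB⟩ :=
          edge_lift εG εH g hεG hεH hg1 hg2 v w' hvw
        have hff : f' = f := Subtype.ext (by
          rw [hf'c, hgw, hw]; exact Sym2.eq_swap.trans (hεH f).symm)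
        subst hff
        refine ⟨z, hA, ?_⟩
        rcases hmem with hm | hm
        · exfalso
          rw [hm] at hHA
          have h1 := inv_verA_edge1 hHA
          exact hHne _ (h1.trans hw)
        · exact hm
  | verB v =>
    have h' : PosCov H εH (.verB (g v)) y := h
    generalize hw : g v = a at h'
    cases h' with
    | verB_infB => exact ⟨.infB, .verB_infB v, rfl⟩
    | isolB_top1 _ hv =>
        subst hw
        exact ⟨.top1, .isolB_top1 v (fun u hu => hv (g u) (hg1 v u hu)), rfl⟩
    | isolB_top2 _ hv =>
        subst hw
        exact ⟨.top2, .isolB_top2 v (fun u hu => hv (g u) (hg1 v u hu)), rfl⟩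
    | vb_edge1 f =>
        have hadj : H.Adj (g v) (εH f).1 := by
          rw [hw]; exact (adj_orient H εH hεH f).symm
        obtain ⟨w', hvw, hgw⟩ := hg2 v _ hadj
        obtain ⟨f', z, hf'c, hA, hB, hmem, hHA, hHB⟩ :=
          edge_lift εG εH g hεG hεH hg1 hg2 w' v hvw.symm
        have hff : f' = f := Subtype.ext (by rw [hf'c, hgw, hw]; exact (hεH f).symm)
        subst hff
        refine ⟨z, hB, ?_⟩
        rcases hmem with hm | hm
        · exact hm
        · exfalso
          rw [hm] at hHB
          have h1 := inv_verB_edge2 hHB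
          exact hHne _ (h1.trans hw)
    | ub_edge2 f =>
        have hadj : H.Adj (g v) (εH f).2 := by rw [hw]; exact adj_orient H εH hεH f
        obtain ⟨w', hvw, hgw⟩ := hg2 v _ hadj
        obtain ⟨f', z, hf'c, hA, hB, hmem, hHA, hHB⟩ :=
          edge_lift εG εH g hεG hεH hg1 hg2 w' v hvw.symm
        have hff : f' = f := Subtype.ext (by
          rw [hf'c, hgw, hw]; exact Sym2.eq_swap.trans (hεH f).symm)
        subst hff
        refine ⟨z, hB, ?_⟩
        rcases hmem with hm | hm
        · exfalso
          rw [hm] at hHB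
          have h2 := inv_verB_edge1 hHB
          exact hHne _ (hw.symm.trans h2.symm)
        · exact hm
  | edge1 e =>
    rcases posMap_edge1_cases εG εH g hεG hg1 e with hm | hm
    · rw [hm] at h
      cases h with
      | edge1_top1 => exact ⟨.top1, .edge1_top1 e, rfl⟩
      | edge1_top2 => exact ⟨.top2, .edge1_top2 e, rfl⟩
    · rw [hm] at h
      cases h with
      | edge2_top1 => exact ⟨.top1, .edge1_top1 e, rfl⟩
      | edge2_top2 => exact ⟨.top2, .edge1_top2 e, rfl⟩
  | edge2 e =>
    rcases posMap_edge2_cases εG εH g hεG hg1 e with hm | hm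
    · rw [hm] at h
      cases h with
      | edge1_top1 => exact ⟨.top1, .edge2_top1 e, rfl⟩
      | edge1_top2 => exact ⟨.top2, .edge2_top2 e, rfl⟩
    · rw [hm] at h
      cases h with
      | edge2_top1 => exact ⟨.top1, .edge2_top1 e, rfl⟩
      | edge2_top2 => exact ⟨.top2, .edge2_top2 e, rfl⟩
  | top1 =>
    have h' : PosCov H εH .top1 y := h
    cases h'
  | top2 =>
    have h' : PosCov H εH .top2 y := h
    cases h'
  | infA =>
    have h' : PosCov H εH .infA y := h
    cases h'
  | infB =>
    have h' : PosCov H εH .infB y := h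
    cases h'

include hεH hg2 in
lemma posMap_surj (hgsurj : Function.Surjective g) :
    Function.Surjective (posMap εG εH g hεG hg1) := by
  have hHne : ∀ f : ↥H.edgeSet, (εH f).1 ≠ (εH f).2 :=
    fun f => (adj_orient H εH hεH f).ne
  intro y
  cases y with
  | ver w => obtain ⟨v, rfl⟩ := hgsurj w; exact ⟨.ver v, rfl⟩
  | verA w => obtain ⟨v, rfl⟩ := hgsurj w; exact ⟨.verA v, rfl⟩
  | verB w => obtain ⟨v, rfl⟩ := hgsurj w; exact ⟨.verB v, rfl⟩
  | top1 => exact ⟨.top1, rfl⟩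
  | top2 => exact ⟨.top2, rfl⟩
  | infA => exact ⟨.infA, rfl⟩
  | infB => exact ⟨.infB, rfl⟩
  | edge1 f =>
    obtain ⟨v, hv⟩ := hgsurj (εH f).1
    have hadj : H.Adj (g v) (εH f).2 := by rw [hv]; exact adj_orient H εH hεH f
    obtain ⟨w', hvw, hgw⟩ := hg2 v _ hadj
    obtain ⟨f', z, hf'c, hA, hB, hmem, hHA, hHB⟩ :=
      edge_lift εG εH g hεG hεH hg1 hg2 v w' hvw
    have hff : f' = f := Subtype.ext (by rw [hf'c, hgw, hv]; exact (hεH f).symm)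
    subst hff
    refine ⟨z, ?_⟩
    rcases hmem with hm | hm
    · exact hm
    · exfalso
      rw [hm] at hHA
      exact hHne _ ((inv_verA_edge2 hHA).trans hv).symm
  | edge2 f =>
    obtain ⟨v, hv⟩ := hgsurj (εH f).2
    have hadj : H.Adj (g v) (εH f).1 := by rw [hv]; exact (adj_orient H εH hεH f).symm
    obtain ⟨w', hvw, hgw⟩ := hg2 v _ hadj
    obtain ⟨f', z, hf'c, hA, hB, hmem, hHA, hHB⟩ :=
      edge_lift εG εH g hεG hεH hg1 hg2 v w' hvw
    have hff : f' = f := Subtype.ext (by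
      rw [hf'c, hgw, hv]; exact Sym2.eq_swap.trans (hεH f).symm)
    subst hff
    refine ⟨z, ?_⟩
    rcases hmem with hm | hm
    · exfalso
      rw [hm] at hHA
      exact hHne _ ((inv_verA_edge1 hHA).trans hv)
    · exact hm

end

end PosAux

theorem extension_to_pMorphism {VG VH : Type} [Fintype VG] [Fintype VH] [Nonempty VH]
    (G : SimpleGraph VG) (H : SimpleGraph VH)
    (εG : ↥G.edgeSet → VG × VG) (hεG : OrientOK G εG)
    (εH : ↥H.edgeSet → VH × VH) (hεH : OrientOK H εH)
    (g : VG → VH) (hgsurj : Function.Surjective g) (hg : IsLocallySurjHom G H g) :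
    ∃ h : PosElem VG ↥G.edgeSet → PosElem VH ↥H.edgeSet,
      Function.Surjective h ∧
      IsPMorphismRel (PosLe G εG) (PosLe H εH) h ∧
      h PosElem.top1 = PosElem.top1 ∧ h PosElem.top2 = PosElem.top2 ∧
      h PosElem.infA = PosElem.infA ∧ h PosElem.infB = PosElem.infB ∧
      (∀ v : VG, h (PosElem.ver v) = PosElem.ver (g v) ∧
        h (PosElem.verA v) = PosElem.verA (g v) ∧
        h (PosElem.verB v) = PosElem.verB (g v)) ∧
      (∀ (e : ↥G.edgeSet) (u v : VG) (x : PosElem VG ↥G.edgeSet),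
        (x = PosElem.edge1 e ∨ x = PosElem.edge2 e) →
        PosCov G εG (PosElem.verA u) x → PosCov G εG (PosElem.verB v) x →
        ∃ (f : ↥H.edgeSet) (y : PosElem VH ↥H.edgeSet),
          (f : Sym2 VH) = s(g u, g v) ∧
          (y = PosElem.edge1 f ∨ y = PosElem.edge2 f) ∧
          PosCov H εH (PosElem.verA (g u)) y ∧ PosCov H εH (PosElem.verB (g v)) y ∧
          h x = y) := by
  obtain ⟨hg1, hg2⟩ := hg
  refine ⟨PosAux.posMap εG εH g hεG hg1,
    PosAux.posMap_surj εG εH g hεG hεH hg1 hg2 hgsurj,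
    ⟨?_, ?_⟩, rfl, rfl, rfl, rfl, fun v => ⟨rfl, rfl, rfl⟩, ?_⟩
  · intro x y hxy
    have hxy' : Relation.ReflTransGen (PosCov G εG) x y := hxy
    clear hxy
    induction hxy' with
    | refl => exact Relation.ReflTransGen.refl
    | tail _ hbc ih =>
        exact Relation.ReflTransGen.tail ih
          (PosAux.cov_map εG εH g hεG hεH hg1 hg2 hbc)
  · intro x y hxy
    have hxy' : Relation.ReflTransGen (PosCov H εH)
        (PosAux.posMap εG εH g hεG hg1 x) y := hxy
    clear hxy
    induction hxy' with
    | refl => exact ⟨x, Relation.ReflTransGen.refl, rfl⟩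
    | tail _ hbc ih =>
        obtain ⟨z', hz', hze⟩ := ih
        obtain ⟨z, hcov, hzy⟩ := PosAux.cov_back εG εH g hεG hεH hg1 hg2 z' _
          (by rw [hze]; exact hbc)
        exact ⟨z, Relation.ReflTransGen.tail hz' hcov, hzy⟩
  · rintro e u v x (rfl | rfl) hA hB
    · have hu := PosAux.inv_verA_edge1 hA
      have hv := PosAux.inv_verB_edge1 hB
      subst hu; subst hv
      exact ⟨PosAux.fmap εG g hεG hg1 e, PosAux.posMap εG εH g hεG hg1 (.edge1 e), rfl,
        PosAux.posMap_edge1_cases εG εH g hεG hg1 e,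
        PosAux.cov_map εG εH g hεG hεH hg1 hg2 (PosCov.ua_edge1 e),
        PosAux.cov_map εG εH g hεG hεH hg1 hg2 (PosCov.vb_edge1 e), rfl⟩
    · have hu := PosAux.inv_verA_edge2 hA
      have hv := PosAux.inv_verB_edge2 hB
      subst hu; subst hv
      exact ⟨PosAux.fmap εG g hεG hg1 e, PosAux.posMap εG εH g hεG hg1 (.edge2 e),
        Sym2.eq_swap,
        PosAux.posMap_edge2_cases εG εH g hεG hg1 e,
        PosAux.cov_map εG εH g hεG hεH hg1 hg2 (PosCov.va_edge2 e),
        PosAux.cov_map εG εH g hεG hεH hg1 hg2 (PosCov.ub_edge2 e), rfl⟩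
end

section
/- Let G and H be finite simple graphs such that H has at least one vertex. Then there exists a surjective locally surjective homomorphism from G onto H if and only if there exists a surjective p-morphism from Pos(G) onto Pos(H). -/
namespace PosAux

open PosElem

variable {V : Type} {G : SimpleGraph V}

/-- Explicit description of the order of `Pos(G)`. -/
def ple (ε : ↥G.edgeSet → V × V) :
    PosElem V ↥G.edgeSet → PosElem V ↥G.edgeSet → Prop
  | .ver v, .ver w => v = w
  | .ver v, .verA w => v = w
  | .ver v, .verB w => v = w
  | .ver v, .edge1 e => v = (ε e).1 ∨ v = (ε e).2
  | .ver v, .edge2 e => v = (ε e).1 ∨ v = (ε e).2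
  | .ver _, .top1 => True
  | .ver _, .top2 => True
  | .ver _, .infA => True
  | .ver _, .infB => True
  | .verA v, .verA w => v = w
  | .verA v, .edge1 e => v = (ε e).1
  | .verA v, .edge2 e => v = (ε e).2
  | .verA _, .infA => True
  | .verA _, .top1 => True
  | .verA _, .top2 => True
  | .verB v, .verB w => v = w
  | .verB v, .edge1 e => v = (ε e).2
  | .verB v, .edge2 e => v = (ε e).1
  | .verB _, .infB => True
  | .verB _, .top1 => True
  | .verB _, .top2 => True
  | .edge1 e, .edge1 f => e = f
  | .edge1 _, .top1 => True
  | .edge1 _, .top2 => True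
  | .edge2 e, .edge2 f => e = f
  | .edge2 _, .top1 => True
  | .edge2 _, .top2 => True
  | .top1, .top1 => True
  | .top2, .top2 => True
  | .infA, .infA => True
  | .infB, .infB => True
  | _, _ => False

set_option maxHeartbeats 1000000 in
lemma ple_refl (ε : ↥G.edgeSet → V × V) (x : PosElem V ↥G.edgeSet) : ple ε x x := by
  cases x <;> first | rfl | trivial

set_option maxHeartbeats 2000000 in
lemma ple_of_le {ε : ↥G.edgeSet → V × V} {x y : PosElem V ↥G.edgeSet}
    (h : PosLe G ε x y) : ple ε x y := by
  induction h with
  | refl => exact ple_refl ε x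
  | tail _ hcov ih => cases hcov <;> cases x <;> simp_all [ple]


lemma adj_eps {ε : ↥G.edgeSet → V × V} (hε : OrientOK G ε) (e : ↥G.edgeSet) :
    G.Adj (ε e).1 (ε e).2 := by
  have h2 := e.2
  rw [show (e : Sym2 V) = s((ε e).1, (ε e).2) from hε e] at h2
  exact h2

lemma incident {ε : ↥G.edgeSet → V × V} (hε : OrientOK G ε) {v w : V} (h : G.Adj v w) :
    ∃ e : ↥G.edgeSet, (v = (ε e).1 ∧ w = (ε e).2) ∨ (v = (ε e).2 ∧ w = (ε e).1) := by
  refine ⟨⟨s(v, w), h⟩, ?_⟩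
  have h2 := hε ⟨s(v, w), h⟩
  rw [Sym2.eq_iff] at h2
  tauto

lemma verA_le_top1 {ε : ↥G.edgeSet → V × V} (hε : OrientOK G ε) (v : V) :
    PosLe G ε (.verA v) .top1 := by
  by_cases hiso : ∀ w, ¬ G.Adj v w
  · exact .single (.isolA_top1 v hiso)
  · push_neg at hiso
    obtain ⟨w, hw⟩ := hiso
    obtain ⟨e, he⟩ := incident hε hw
    rcases he with ⟨h1, -⟩ | ⟨h1, -⟩ <;> subst h1
    · exact .tail (.single (.ua_edge1 e)) (.edge1_top1 e)
    · exact .tail (.single (.va_edge2 e)) (.edge2_top1 e)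

lemma verA_le_top2 {ε : ↥G.edgeSet → V × V} (hε : OrientOK G ε) (v : V) :
    PosLe G ε (.verA v) .top2 := by
  by_cases hiso : ∀ w, ¬ G.Adj v w
  · exact .single (.isolA_top2 v hiso)
  · push_neg at hiso
    obtain ⟨w, hw⟩ := hiso
    obtain ⟨e, he⟩ := incident hε hw
    rcases he with ⟨h1, -⟩ | ⟨h1, -⟩ <;> subst h1
    · exact .tail (.single (.ua_edge1 e)) (.edge1_top2 e)
    · exact .tail (.single (.va_edge2 e)) (.edge2_top2 e)

lemma verB_le_top1 {ε : ↥G.edgeSet → V × V} (hε : OrientOK G ε) (v : V) :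
    PosLe G ε (.verB v) .top1 := by
  by_cases hiso : ∀ w, ¬ G.Adj v w
  · exact .single (.isolB_top1 v hiso)
  · push_neg at hiso
    obtain ⟨w, hw⟩ := hiso
    obtain ⟨e, he⟩ := incident hε hw
    rcases he with ⟨h1, -⟩ | ⟨h1, -⟩ <;> subst h1
    · exact .tail (.single (.ub_edge2 e)) (.edge2_top1 e)
    · exact .tail (.single (.vb_edge1 e)) (.edge1_top1 e)

lemma verB_le_top2 {ε : ↥G.edgeSet → V × V} (hε : OrientOK G ε) (v : V) :
    PosLe G ε (.verB v) .top2 := by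
  by_cases hiso : ∀ w, ¬ G.Adj v w
  · exact .single (.isolB_top2 v hiso)
  · push_neg at hiso
    obtain ⟨w, hw⟩ := hiso
    obtain ⟨e, he⟩ := incident hε hw
    rcases he with ⟨h1, -⟩ | ⟨h1, -⟩ <;> subst h1
    · exact .tail (.single (.ub_edge2 e)) (.edge2_top2 e)
    · exact .tail (.single (.vb_edge1 e)) (.edge1_top2 e)

lemma ver_le_top1 {ε : ↥G.edgeSet → V × V} (hε : OrientOK G ε) (v : V) :
    PosLe G ε (.ver v) .top1 := .head (.ver_verA v) (verA_le_top1 hε v)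

lemma ver_le_top2 {ε : ↥G.edgeSet → V × V} (hε : OrientOK G ε) (v : V) :
    PosLe G ε (.ver v) .top2 := .head (.ver_verA v) (verA_le_top2 hε v)

lemma ver_le_infA {ε : ↥G.edgeSet → V × V} (v : V) :
    PosLe G ε (.ver v) .infA := .head (.ver_verA v) (.single (.verA_infA v))

lemma ver_le_infB {ε : ↥G.edgeSet → V × V} (v : V) :
    PosLe G ε (.ver v) .infB := .head (.ver_verB v) (.single (.verB_infB v))


section Forward

variable {VG VH : Type} {G : SimpleGraph VG} {H : SimpleGraph VH}
  {εG : ↥G.edgeSet → VG × VG} {εH : ↥H.edgeSet → VH × VH} {g : VG → VH}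

/-- image of an edge of `G` under `g`. -/
def eImg (hadj : ∀ e : ↥G.edgeSet, H.Adj (g (εG e).1) (g (εG e).2)) (e : ↥G.edgeSet) :
    ↥H.edgeSet := ⟨s(g (εG e).1, g (εG e).2), (SimpleGraph.mem_edgeSet H).mpr (hadj e)⟩

open Classical in
/-- the induced map between the posets. -/
noncomputable def hMap (εH : ↥H.edgeSet → VH × VH) (hadj : ∀ e : ↥G.edgeSet, H.Adj (g (εG e).1) (g (εG e).2)) :
    PosElem VG ↥G.edgeSet → PosElem VH ↥H.edgeSet
  | .ver v => .ver (g v)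
  | .verA v => .verA (g v)
  | .verB v => .verB (g v)
  | .edge1 e => if g (εG e).1 = (εH (eImg hadj e)).1 then .edge1 (eImg hadj e)
      else .edge2 (eImg hadj e)
  | .edge2 e => if g (εG e).1 = (εH (eImg hadj e)).1 then .edge2 (eImg hadj e)
      else .edge1 (eImg hadj e)
  | .top1 => .top1
  | .top2 => .top2
  | .infA => .infA
  | .infB => .infB

variable (hεG : OrientOK G εG) (hεH : OrientOK H εH)
  (hadj : ∀ e : ↥G.edgeSet, H.Adj (g (εG e).1) (g (εG e).2))
  (hBPg : ∀ (u : VG) (w : VH), H.Adj (g u) w → ∃ v : VG, G.Adj u v ∧ g v = w)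

include hεH in
lemma dich (e : ↥G.edgeSet) :
    (g (εG e).1 = (εH (eImg hadj e)).1 ∧ g (εG e).2 = (εH (eImg hadj e)).2) ∨
    (g (εG e).1 = (εH (eImg hadj e)).2 ∧ g (εG e).2 = (εH (eImg hadj e)).1) := by
  have h2 := hεH (eImg hadj e)
  rw [show ((eImg hadj e : Sym2 VH)) = s(g (εG e).1, g (εG e).2) from rfl, Sym2.eq_iff] at h2
  exact h2


include hεH hadj hBPg in
lemma hMap_cov {x y : PosElem VG ↥G.edgeSet} (hcov : PosCov G εG x y) :
    PosLe H εH (hMap εH hadj x) (hMap εH hadj y) := by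
  have isol : ∀ v : VG, (∀ w, ¬ G.Adj v w) → ∀ w, ¬ H.Adj (g v) w := by
    intro v hv w hw
    obtain ⟨u, hu, -⟩ := hBPg v w hw
    exact hv u hu
  cases hcov with
  | ver_verA v => exact .single (.ver_verA (g v))
  | ver_verB v => exact .single (.ver_verB (g v))
  | verA_infA v => exact .single (.verA_infA (g v))
  | verB_infB v => exact .single (.verB_infB (g v))
  | edge1_top1 e =>
    simp only [hMap]
    split
    · exact .single (.edge1_top1 _)
    · exact .single (.edge2_top1 _)
  | edge1_top2 e =>
    simp only [hMap]
    split
    · exact .single (.edge1_top2 _)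
    · exact .single (.edge2_top2 _)
  | edge2_top1 e =>
    simp only [hMap]
    split
    · exact .single (.edge2_top1 _)
    · exact .single (.edge1_top1 _)
  | edge2_top2 e =>
    simp only [hMap]
    split
    · exact .single (.edge2_top2 _)
    · exact .single (.edge1_top2 _)
  | isolA_top1 v hv => exact .single (.isolA_top1 (g v) (isol v hv))
  | isolA_top2 v hv => exact .single (.isolA_top2 (g v) (isol v hv))
  | isolB_top1 v hv => exact .single (.isolB_top1 (g v) (isol v hv))
  | isolB_top2 v hv => exact .single (.isolB_top2 (g v) (isol v hv))
  | ua_edge1 e =>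
    simp only [hMap]
    split
    · next hc => rw [hc]; exact .single (.ua_edge1 _)
    · next hc =>
      have h2 : g (εG e).1 = (εH (eImg hadj e)).2 := ((dich hεH hadj e).resolve_left
        (fun hh => hc hh.1)).1
      rw [h2]; exact .single (.va_edge2 _)
  | vb_edge1 e =>
    simp only [hMap]
    split
    · next hc =>
      have h2 : g (εG e).2 = (εH (eImg hadj e)).2 := by
        rcases dich hεH hadj e with ⟨-, h⟩ | ⟨h1, -⟩
        · exact h
        · exact absurd (hc.symm.trans h1) (adj_eps hεH (eImg hadj e)).ne
      rw [h2]; exact .single (.vb_edge1 _)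
    · next hc =>
      have h2 : g (εG e).2 = (εH (eImg hadj e)).1 := ((dich hεH hadj e).resolve_left
        (fun hh => hc hh.1)).2
      rw [h2]; exact .single (.ub_edge2 _)
  | ub_edge2 e =>
    simp only [hMap]
    split
    · next hc => rw [hc]; exact .single (.ub_edge2 _)
    · next hc =>
      have h2 : g (εG e).1 = (εH (eImg hadj e)).2 := ((dich hεH hadj e).resolve_left
        (fun hh => hc hh.1)).1
      rw [h2]; exact .single (.vb_edge1 _)
  | va_edge2 e =>
    simp only [hMap]
    split
    · next hc =>
      have h2 : g (εG e).2 = (εH (eImg hadj e)).2 := by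
        rcases dich hεH hadj e with ⟨-, h⟩ | ⟨h1, -⟩
        · exact h
        · exact absurd (hc.symm.trans h1) (adj_eps hεH (eImg hadj e)).ne
      rw [h2]; exact .single (.va_edge2 _)
    · next hc =>
      have h2 : g (εG e).2 = (εH (eImg hadj e)).1 := ((dich hεH hadj e).resolve_left
        (fun hh => hc hh.1)).2
      rw [h2]; exact .single (.ua_edge1 _)


include hεH hadj hBPg in
lemma hMap_mono {x y : PosElem VG ↥G.edgeSet} (hle : PosLe G εG x y) :
    PosLe H εH (hMap εH hadj x) (hMap εH hadj y) := by
  induction hle with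
  | refl => exact .refl
  | tail _ hcov ih => exact ih.trans (hMap_cov hεH hadj hBPg hcov)

include hεG hεH hadj hBPg in
lemma lift_e1A {v : VG} {f : ↥H.edgeSet} (hv : g v = (εH f).1) :
    ∃ z, PosLe G εG (.verA v) z ∧ hMap εH hadj z = .edge1 f := by
  have hadj' : H.Adj (g v) ((εH f).2) := by rw [hv]; exact adj_eps hεH f
  obtain ⟨u, huv, hgu⟩ := hBPg v _ hadj'
  refine ?_
  have he : s(v, u) ∈ G.edgeSet := (SimpleGraph.mem_edgeSet G).mpr huv
  set e : ↥G.edgeSet := ⟨s(v, u), he⟩ with hedef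
  have horient : (v = (εG e).1 ∧ u = (εG e).2) ∨ (v = (εG e).2 ∧ u = (εG e).1) := by
    have h2 := hεG e
    rw [show (e : Sym2 VG) = s(v, u) from rfl, Sym2.eq_iff] at h2
    exact h2
  have himg : eImg hadj e = f := by
    apply Subtype.ext
    rw [show ((eImg hadj e : Sym2 VH)) = s(g (εG e).1, g (εG e).2) from rfl,
      show (f : Sym2 VH) = s((εH f).1, (εH f).2) from hεH f]
    rcases horient with ⟨h1, h2⟩ | ⟨h1, h2⟩
    · rw [← h1, ← h2, hv, hgu]
    · rw [← h1, ← h2, hv, hgu, Sym2.eq_swap]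
  rcases horient with ⟨h1, h2⟩ | ⟨h1, h2⟩
  · refine ⟨.edge1 e, by rw [h1]; exact .single (.ua_edge1 e), ?_⟩
    have hc : g (εG e).1 = (εH (eImg hadj e)).1 := by rw [← h1, hv, himg]
    simp only [hMap]
    rw [if_pos hc, himg]
  · refine ⟨.edge2 e, by rw [h1]; exact .single (.va_edge2 e), ?_⟩
    have hc : ¬ g (εG e).1 = (εH (eImg hadj e)).1 := by
      rw [← h2, hgu, himg]
      exact (adj_eps hεH f).ne'
    simp only [hMap]
    rw [if_neg hc, himg]

include hεG hεH hadj hBPg in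
lemma lift_e2A {v : VG} {f : ↥H.edgeSet} (hv : g v = (εH f).2) :
    ∃ z, PosLe G εG (.verA v) z ∧ hMap εH hadj z = .edge2 f := by
  have hadj' : H.Adj (g v) ((εH f).1) := by rw [hv]; exact (adj_eps hεH f).symm
  obtain ⟨u, huv, hgu⟩ := hBPg v _ hadj'
  have he : s(v, u) ∈ G.edgeSet := (SimpleGraph.mem_edgeSet G).mpr huv
  set e : ↥G.edgeSet := ⟨s(v, u), he⟩ with hedef
  have horient : (v = (εG e).1 ∧ u = (εG e).2) ∨ (v = (εG e).2 ∧ u = (εG e).1) := by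
    have h2 := hεG e
    rw [show (e : Sym2 VG) = s(v, u) from rfl, Sym2.eq_iff] at h2
    exact h2
  have himg : eImg hadj e = f := by
    apply Subtype.ext
    rw [show ((eImg hadj e : Sym2 VH)) = s(g (εG e).1, g (εG e).2) from rfl,
      show (f : Sym2 VH) = s((εH f).1, (εH f).2) from hεH f]
    rcases horient with ⟨h1, h2⟩ | ⟨h1, h2⟩
    · rw [← h1, ← h2, hv, hgu, Sym2.eq_swap]
    · rw [← h1, ← h2, hv, hgu]
  rcases horient with ⟨h1, h2⟩ | ⟨h1, h2⟩
  · refine ⟨.edge1 e, by rw [h1]; exact .single (.ua_edge1 e), ?_⟩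
    have hc : ¬ g (εG e).1 = (εH (eImg hadj e)).1 := by
      rw [← h1, hv, himg]
      exact (adj_eps hεH f).ne'
    simp only [hMap]
    rw [if_neg hc, himg]
  · refine ⟨.edge2 e, by rw [h1]; exact .single (.va_edge2 e), ?_⟩
    have hc : g (εG e).1 = (εH (eImg hadj e)).1 := by rw [← h2, hgu, himg]
    simp only [hMap]
    rw [if_pos hc, himg]

include hεG hεH hadj hBPg in
lemma lift_e1B {v : VG} {f : ↥H.edgeSet} (hv : g v = (εH f).2) :
    ∃ z, PosLe G εG (.verB v) z ∧ hMap εH hadj z = .edge1 f := by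
  have hadj' : H.Adj (g v) ((εH f).1) := by rw [hv]; exact (adj_eps hεH f).symm
  obtain ⟨u, huv, hgu⟩ := hBPg v _ hadj'
  have he : s(v, u) ∈ G.edgeSet := (SimpleGraph.mem_edgeSet G).mpr huv
  set e : ↥G.edgeSet := ⟨s(v, u), he⟩ with hedef
  have horient : (v = (εG e).1 ∧ u = (εG e).2) ∨ (v = (εG e).2 ∧ u = (εG e).1) := by
    have h2 := hεG e
    rw [show (e : Sym2 VG) = s(v, u) from rfl, Sym2.eq_iff] at h2
    exact h2
  have himg : eImg hadj e = f := by
    apply Subtype.ext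
    rw [show ((eImg hadj e : Sym2 VH)) = s(g (εG e).1, g (εG e).2) from rfl,
      show (f : Sym2 VH) = s((εH f).1, (εH f).2) from hεH f]
    rcases horient with ⟨h1, h2⟩ | ⟨h1, h2⟩
    · rw [← h1, ← h2, hv, hgu, Sym2.eq_swap]
    · rw [← h1, ← h2, hv, hgu]
  rcases horient with ⟨h1, h2⟩ | ⟨h1, h2⟩
  · refine ⟨.edge2 e, by rw [h1]; exact .single (.ub_edge2 e), ?_⟩
    have hc : ¬ g (εG e).1 = (εH (eImg hadj e)).1 := by
      rw [← h1, hv, himg]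
      exact (adj_eps hεH f).ne'
    simp only [hMap]
    rw [if_neg hc, himg]
  · refine ⟨.edge1 e, by rw [h1]; exact .single (.vb_edge1 e), ?_⟩
    have hc : g (εG e).1 = (εH (eImg hadj e)).1 := by rw [← h2, hgu, himg]
    simp only [hMap]
    rw [if_pos hc, himg]

include hεG hεH hadj hBPg in
lemma lift_e2B {v : VG} {f : ↥H.edgeSet} (hv : g v = (εH f).1) :
    ∃ z, PosLe G εG (.verB v) z ∧ hMap εH hadj z = .edge2 f := by
  have hadj' : H.Adj (g v) ((εH f).2) := by rw [hv]; exact adj_eps hεH f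
  obtain ⟨u, huv, hgu⟩ := hBPg v _ hadj'
  have he : s(v, u) ∈ G.edgeSet := (SimpleGraph.mem_edgeSet G).mpr huv
  set e : ↥G.edgeSet := ⟨s(v, u), he⟩ with hedef
  have horient : (v = (εG e).1 ∧ u = (εG e).2) ∨ (v = (εG e).2 ∧ u = (εG e).1) := by
    have h2 := hεG e
    rw [show (e : Sym2 VG) = s(v, u) from rfl, Sym2.eq_iff] at h2
    exact h2
  have himg : eImg hadj e = f := by
    apply Subtype.ext
    rw [show ((eImg hadj e : Sym2 VH)) = s(g (εG e).1, g (εG e).2) from rfl,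
      show (f : Sym2 VH) = s((εH f).1, (εH f).2) from hεH f]
    rcases horient with ⟨h1, h2⟩ | ⟨h1, h2⟩
    · rw [← h1, ← h2, hv, hgu]
    · rw [← h1, ← h2, hv, hgu, Sym2.eq_swap]
  rcases horient with ⟨h1, h2⟩ | ⟨h1, h2⟩
  · refine ⟨.edge2 e, by rw [h1]; exact .single (.ub_edge2 e), ?_⟩
    have hc : g (εG e).1 = (εH (eImg hadj e)).1 := by rw [← h1, hv, himg]
    simp only [hMap]
    rw [if_pos hc, himg]
  · refine ⟨.edge1 e, by rw [h1]; exact .single (.vb_edge1 e), ?_⟩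
    have hc : ¬ g (εG e).1 = (εH (eImg hadj e)).1 := by
      rw [← h2, hgu, himg]
      exact (adj_eps hεH f).ne'
    simp only [hMap]
    rw [if_neg hc, himg]


include hεG hεH hadj hBPg in
lemma hMap_bp (x : PosElem VG ↥G.edgeSet) (y : PosElem VH ↥H.edgeSet)
    (hle : PosLe H εH (hMap εH hadj x) y) :
    ∃ z, PosLe G εG x z ∧ hMap εH hadj z = y := by
  cases x with
  | ver v =>
    have hp : ple εH (.ver (g v)) y := ple_of_le hle
    cases y with
    | ver w => exact ⟨.ver v, .refl, congrArg PosElem.ver (hp : g v = w)⟩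
    | verA w => exact ⟨.verA v, .single (.ver_verA v), congrArg PosElem.verA (hp : g v = w)⟩
    | verB w => exact ⟨.verB v, .single (.ver_verB v), congrArg PosElem.verB (hp : g v = w)⟩
    | edge1 f =>
      rcases (hp : g v = (εH f).1 ∨ g v = (εH f).2) with hv | hv
      · obtain ⟨z, hz1, hz2⟩ := lift_e1A hεG hεH hadj hBPg hv
        exact ⟨z, .head (.ver_verA v) hz1, hz2⟩
      · obtain ⟨z, hz1, hz2⟩ := lift_e1B hεG hεH hadj hBPg hv
        exact ⟨z, .head (.ver_verB v) hz1, hz2⟩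
    | edge2 f =>
      rcases (hp : g v = (εH f).1 ∨ g v = (εH f).2) with hv | hv
      · obtain ⟨z, hz1, hz2⟩ := lift_e2B hεG hεH hadj hBPg hv
        exact ⟨z, .head (.ver_verB v) hz1, hz2⟩
      · obtain ⟨z, hz1, hz2⟩ := lift_e2A hεG hεH hadj hBPg hv
        exact ⟨z, .head (.ver_verA v) hz1, hz2⟩
    | top1 => exact ⟨.top1, ver_le_top1 hεG v, rfl⟩
    | top2 => exact ⟨.top2, ver_le_top2 hεG v, rfl⟩
    | infA => exact ⟨.infA, ver_le_infA v, rfl⟩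
    | infB => exact ⟨.infB, ver_le_infB v, rfl⟩
  | verA v =>
    have hp : ple εH (.verA (g v)) y := ple_of_le hle
    cases y with
    | ver w => exact (hp : False).elim
    | verA w => exact ⟨.verA v, .refl, congrArg PosElem.verA (hp : g v = w)⟩
    | verB w => exact (hp : False).elim
    | edge1 f => exact lift_e1A hεG hεH hadj hBPg (hp : g v = (εH f).1)
    | edge2 f => exact lift_e2A hεG hεH hadj hBPg (hp : g v = (εH f).2)
    | top1 => exact ⟨.top1, verA_le_top1 hεG v, rfl⟩
    | top2 => exact ⟨.top2, verA_le_top2 hεG v, rfl⟩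
    | infA => exact ⟨.infA, .single (.verA_infA v), rfl⟩
    | infB => exact (hp : False).elim
  | verB v =>
    have hp : ple εH (.verB (g v)) y := ple_of_le hle
    cases y with
    | ver w => exact (hp : False).elim
    | verA w => exact (hp : False).elim
    | verB w => exact ⟨.verB v, .refl, congrArg PosElem.verB (hp : g v = w)⟩
    | edge1 f => exact lift_e1B hεG hεH hadj hBPg (hp : g v = (εH f).2)
    | edge2 f => exact lift_e2B hεG hεH hadj hBPg (hp : g v = (εH f).1)
    | top1 => exact ⟨.top1, verB_le_top1 hεG v, rfl⟩
    | top2 => exact ⟨.top2, verB_le_top2 hεG v, rfl⟩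
    | infA => exact (hp : False).elim
    | infB => exact ⟨.infB, .single (.verB_infB v), rfl⟩
  | edge1 e =>
    by_cases hc : g (εG e).1 = (εH (eImg hadj e)).1
    · have hm : hMap εH hadj (.edge1 e) = .edge1 (eImg hadj e) := by
        simp only [hMap]; rw [if_pos hc]
      rw [hm] at hle
      have hp : ple εH (.edge1 (eImg hadj e)) y := ple_of_le hle
      cases y with
      | ver w => exact (hp : False).elim
      | verA w => exact (hp : False).elim
      | verB w => exact (hp : False).elim
      | edge1 f => exact ⟨.edge1 e, .refl, hm.trans (congrArg PosElem.edge1 (hp : _ = f))⟩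
      | edge2 f => exact (hp : False).elim
      | top1 => exact ⟨.top1, .single (.edge1_top1 e), rfl⟩
      | top2 => exact ⟨.top2, .single (.edge1_top2 e), rfl⟩
      | infA => exact (hp : False).elim
      | infB => exact (hp : False).elim
    · have hm : hMap εH hadj (.edge1 e) = .edge2 (eImg hadj e) := by
        simp only [hMap]; rw [if_neg hc]
      rw [hm] at hle
      have hp : ple εH (.edge2 (eImg hadj e)) y := ple_of_le hle
      cases y with
      | ver w => exact (hp : False).elim
      | verA w => exact (hp : False).elim
      | verB w => exact (hp : False).elim
      | edge1 f => exact (hp : False).elim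
      | edge2 f => exact ⟨.edge1 e, .refl, hm.trans (congrArg PosElem.edge2 (hp : _ = f))⟩
      | top1 => exact ⟨.top1, .single (.edge1_top1 e), rfl⟩
      | top2 => exact ⟨.top2, .single (.edge1_top2 e), rfl⟩
      | infA => exact (hp : False).elim
      | infB => exact (hp : False).elim
  | edge2 e =>
    by_cases hc : g (εG e).1 = (εH (eImg hadj e)).1
    · have hm : hMap εH hadj (.edge2 e) = .edge2 (eImg hadj e) := by
        simp only [hMap]; rw [if_pos hc]
      rw [hm] at hle
      have hp : ple εH (.edge2 (eImg hadj e)) y := ple_of_le hle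
      cases y with
      | ver w => exact (hp : False).elim
      | verA w => exact (hp : False).elim
      | verB w => exact (hp : False).elim
      | edge1 f => exact (hp : False).elim
      | edge2 f => exact ⟨.edge2 e, .refl, hm.trans (congrArg PosElem.edge2 (hp : _ = f))⟩
      | top1 => exact ⟨.top1, .single (.edge2_top1 e), rfl⟩
      | top2 => exact ⟨.top2, .single (.edge2_top2 e), rfl⟩
      | infA => exact (hp : False).elim
      | infB => exact (hp : False).elim
    · have hm : hMap εH hadj (.edge2 e) = .edge1 (eImg hadj e) := by
        simp only [hMap]; rw [if_neg hc]
      rw [hm] at hle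
      have hp : ple εH (.edge1 (eImg hadj e)) y := ple_of_le hle
      cases y with
      | ver w => exact (hp : False).elim
      | verA w => exact (hp : False).elim
      | verB w => exact (hp : False).elim
      | edge1 f => exact ⟨.edge2 e, .refl, hm.trans (congrArg PosElem.edge1 (hp : _ = f))⟩
      | edge2 f => exact (hp : False).elim
      | top1 => exact ⟨.top1, .single (.edge2_top1 e), rfl⟩
      | top2 => exact ⟨.top2, .single (.edge2_top2 e), rfl⟩
      | infA => exact (hp : False).elim
      | infB => exact (hp : False).elim
  | top1 =>
    have hp : ple εH .top1 y := ple_of_le hle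
    cases y with
    | top1 => exact ⟨.top1, .refl, rfl⟩
    | ver w => exact (hp : False).elim
    | verA w => exact (hp : False).elim
    | verB w => exact (hp : False).elim
    | edge1 f => exact (hp : False).elim
    | edge2 f => exact (hp : False).elim
    | top2 => exact (hp : False).elim
    | infA => exact (hp : False).elim
    | infB => exact (hp : False).elim
  | top2 =>
    have hp : ple εH .top2 y := ple_of_le hle
    cases y with
    | top2 => exact ⟨.top2, .refl, rfl⟩
    | ver w => exact (hp : False).elim
    | verA w => exact (hp : False).elim
    | verB w => exact (hp : False).elim
    | edge1 f => exact (hp : False).elim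
    | edge2 f => exact (hp : False).elim
    | top1 => exact (hp : False).elim
    | infA => exact (hp : False).elim
    | infB => exact (hp : False).elim
  | infA =>
    have hp : ple εH .infA y := ple_of_le hle
    cases y with
    | infA => exact ⟨.infA, .refl, rfl⟩
    | ver w => exact (hp : False).elim
    | verA w => exact (hp : False).elim
    | verB w => exact (hp : False).elim
    | edge1 f => exact (hp : False).elim
    | edge2 f => exact (hp : False).elim
    | top1 => exact (hp : False).elim
    | top2 => exact (hp : False).elim
    | infB => exact (hp : False).elim
  | infB =>
    have hp : ple εH .infB y := ple_of_le hle
    cases y with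
    | infB => exact ⟨.infB, .refl, rfl⟩
    | ver w => exact (hp : False).elim
    | verA w => exact (hp : False).elim
    | verB w => exact (hp : False).elim
    | edge1 f => exact (hp : False).elim
    | edge2 f => exact (hp : False).elim
    | top1 => exact (hp : False).elim
    | top2 => exact (hp : False).elim
    | infA => exact (hp : False).elim

include hεG hεH hadj hBPg in
lemma hMap_surj (hgsurj : Function.Surjective g) : Function.Surjective (hMap εH hadj) := by
  intro y
  cases y with
  | ver w => obtain ⟨v, hv⟩ := hgsurj w; exact ⟨.ver v, congrArg PosElem.ver hv⟩
  | verA w => obtain ⟨v, hv⟩ := hgsurj w; exact ⟨.verA v, congrArg PosElem.verA hv⟩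
  | verB w => obtain ⟨v, hv⟩ := hgsurj w; exact ⟨.verB v, congrArg PosElem.verB hv⟩
  | edge1 f =>
    obtain ⟨v, hv⟩ := hgsurj (εH f).1
    obtain ⟨z, -, hz⟩ := lift_e1A hεG hεH hadj hBPg hv
    exact ⟨z, hz⟩
  | edge2 f =>
    obtain ⟨v, hv⟩ := hgsurj (εH f).1
    obtain ⟨z, -, hz⟩ := lift_e2B hεG hεH hadj hBPg hv
    exact ⟨z, hz⟩
  | top1 => exact ⟨.top1, rfl⟩
  | top2 => exact ⟨.top2, rfl⟩
  | infA => exact ⟨.infA, rfl⟩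
  | infB => exact ⟨.infB, rfl⟩

end Forward

/-- membership in the four maximal elements. -/
def SFour {V E : Type} (x : PosElem V E) : Prop :=
  x = .top1 ∨ x = .top2 ∨ x = .infA ∨ x = .infB

lemma ple_top1_eq {ε : ↥G.edgeSet → V × V} {q : PosElem V ↥G.edgeSet}
    (hq : ple ε .top1 q) : q = .top1 := by
  cases q <;> first | rfl | exact (hq : False).elim

lemma ple_top2_eq {ε : ↥G.edgeSet → V × V} {q : PosElem V ↥G.edgeSet}
    (hq : ple ε .top2 q) : q = .top2 := by
  cases q <;> first | rfl | exact (hq : False).elim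

lemma ple_infA_eq {ε : ↥G.edgeSet → V × V} {q : PosElem V ↥G.edgeSet}
    (hq : ple ε .infA q) : q = .infA := by
  cases q <;> first | rfl | exact (hq : False).elim

lemma ple_infB_eq {ε : ↥G.edgeSet → V × V} {q : PosElem V ↥G.edgeSet}
    (hq : ple ε .infB q) : q = .infB := by
  cases q <;> first | rfl | exact (hq : False).elim

lemma S_max {ε : ↥G.edgeSet → V × V} {m : PosElem V ↥G.edgeSet} (hm : SFour m) :
    ∀ y, PosLe G ε m y → y = m := by
  intro y hy
  have hp := ple_of_le hy
  rcases hm with rfl | rfl | rfl | rfl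
  · exact ple_top1_eq hp
  · exact ple_top2_eq hp
  · exact ple_infA_eq hp
  · exact ple_infB_eq hp

lemma max_S {ε : ↥G.edgeSet → V × V} {m : PosElem V ↥G.edgeSet}
    (hm : ∀ y, PosLe G ε m y → y = m) : SFour m := by
  cases m with
  | ver v => exact absurd (hm _ (.single (.ver_verA v))) (by simp)
  | verA v => exact absurd (hm _ (.single (.verA_infA v))) (by simp)
  | verB v => exact absurd (hm _ (.single (.verB_infB v))) (by simp)
  | edge1 e => exact absurd (hm _ (.single (.edge1_top1 e))) (by simp)
  | edge2 e => exact absurd (hm _ (.single (.edge2_top1 e))) (by simp)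
  | top1 => exact Or.inl rfl
  | top2 => exact Or.inr (Or.inl rfl)
  | infA => exact Or.inr (Or.inr (Or.inl rfl))
  | infB => exact Or.inr (Or.inr (Or.inr rfl))

lemma exists_max_above {ε : ↥G.edgeSet → V × V} (x : PosElem V ↥G.edgeSet) :
    ∃ t, SFour t ∧ PosLe G ε x t := by
  cases x with
  | ver v => exact ⟨.infA, Or.inr (Or.inr (Or.inl rfl)), ver_le_infA v⟩
  | verA v => exact ⟨.infA, Or.inr (Or.inr (Or.inl rfl)), .single (.verA_infA v)⟩
  | verB v => exact ⟨.infB, Or.inr (Or.inr (Or.inr rfl)), .single (.verB_infB v)⟩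
  | edge1 e => exact ⟨.top1, Or.inl rfl, .single (.edge1_top1 e)⟩
  | edge2 e => exact ⟨.top1, Or.inl rfl, .single (.edge2_top1 e)⟩
  | top1 => exact ⟨.top1, Or.inl rfl, .refl⟩
  | top2 => exact ⟨.top2, Or.inr (Or.inl rfl), .refl⟩
  | infA => exact ⟨.infA, Or.inr (Or.inr (Or.inl rfl)), .refl⟩
  | infB => exact ⟨.infB, Or.inr (Or.inr (Or.inr rfl)), .refl⟩

lemma pigeon32 {α β : Type} (f : α → β) {a b t1 t2 t3 : α} {p1 p2 p3 : β}
    (m1 : t1 = a ∨ t1 = b) (m2 : t2 = a ∨ t2 = b) (m3 : t3 = a ∨ t3 = b)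
    (e1 : f t1 = p1) (e2 : f t2 = p2) (e3 : f t3 = p3)
    (d12 : p1 ≠ p2) (d13 : p1 ≠ p3) (d23 : p2 ≠ p3) : False := by
  rcases m1 with rfl | rfl <;> rcases m2 with rfl | rfl <;> rcases m3 with rfl | rfl <;>
    simp_all

lemma pigeon43 {α β : Type} (f : α → β) {a b c t1 t2 t3 t4 : α} {p1 p2 p3 p4 : β}
    (m1 : t1 = a ∨ t1 = b ∨ t1 = c) (m2 : t2 = a ∨ t2 = b ∨ t2 = c)
    (m3 : t3 = a ∨ t3 = b ∨ t3 = c) (m4 : t4 = a ∨ t4 = b ∨ t4 = c)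
    (e1 : f t1 = p1) (e2 : f t2 = p2) (e3 : f t3 = p3) (e4 : f t4 = p4)
    (d12 : p1 ≠ p2) (d13 : p1 ≠ p3) (d14 : p1 ≠ p4)
    (d23 : p2 ≠ p3) (d24 : p2 ≠ p4) (d34 : p3 ≠ p4) : False := by
  rcases m1 with rfl | rfl | rfl <;> rcases m2 with rfl | rfl | rfl <;>
    rcases m3 with rfl | rfl | rfl <;> rcases m4 with rfl | rfl | rfl <;> simp_all


section Backward

variable {VG VH : Type} {G : SimpleGraph VG} {H : SimpleGraph VH}
  {εG : ↥G.edgeSet → VG × VG} {εH : ↥H.edgeSet → VH × VH}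
  (h : PosElem VG ↥G.edgeSet → PosElem VH ↥H.edgeSet)
  (hεG : OrientOK G εG) (hεH : OrientOK H εH)
  (hHP : ∀ x y, PosLe G εG x y → PosLe H εH (h x) (h y))
  (hBP : ∀ x y, PosLe H εH (h x) y → ∃ z, PosLe G εG x z ∧ h z = y)
  (hsurj : Function.Surjective h)

include hBP in
lemma L_max_img {t : PosElem VG ↥G.edgeSet} (ht : SFour t) :
    ∀ y, PosLe H εH (h t) y → y = h t := by
  intro y hy
  obtain ⟨z, hz1, hz2⟩ := hBP t y hy
  rw [← hz2, S_max ht z hz1]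

include hBP in
lemma L_img_S {t : PosElem VG ↥G.edgeSet} (ht : SFour t) : SFour (h t) :=
  max_S (L_max_img h hBP ht)

include hHP hsurj in
lemma Lsurj' {p : PosElem VH ↥H.edgeSet} (hp : SFour p) :
    ∃ t, SFour t ∧ h t = p := by
  obtain ⟨x, hx⟩ := hsurj p
  obtain ⟨t, ht, hxt⟩ := exists_max_above x
  have h2 := hHP x t hxt
  rw [hx] at h2
  exact ⟨t, ht, S_max hp _ h2⟩

include hHP hBP hsurj in
lemma inj_S : ∀ t t', SFour t → SFour t' → h t = h t' → t = t' := by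
  classical
  intro t t' ht ht' heq
  set F : Finset (PosElem VG ↥G.edgeSet) := {.top1, .top2, .infA, .infB} with hF
  set F' : Finset (PosElem VH ↥H.edgeSet) := {.top1, .top2, .infA, .infB} with hF'
  have hmemF : ∀ s : PosElem VG ↥G.edgeSet, s ∈ F ↔ SFour s := by
    intro s; simp [hF, SFour]
  have hmemF' : ∀ s : PosElem VH ↥H.edgeSet, s ∈ F' ↔ SFour s := by
    intro s; simp [hF', SFour]
  have himg : F.image h = F' := by
    apply Finset.ext
    intro y
    constructor
    · intro hy
      obtain ⟨t0, ht0, rfl⟩ := Finset.mem_image.mp hy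
      exact (hmemF' _).mpr (L_img_S h hBP ((hmemF _).mp ht0))
    · intro hy
      obtain ⟨t0, ht0, he0⟩ := Lsurj' h hHP hsurj ((hmemF' _).mp hy)
      exact Finset.mem_image.mpr ⟨t0, (hmemF _).mpr ht0, he0⟩
  have hcardF : F.card = 4 := by
    rw [hF]
    rw [Finset.card_insert_of_notMem (by simp), Finset.card_insert_of_notMem (by simp),
      Finset.card_insert_of_notMem (by simp), Finset.card_singleton]
  have hcardF' : F'.card = 4 := by
    rw [hF']
    rw [Finset.card_insert_of_notMem (by simp), Finset.card_insert_of_notMem (by simp),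
      Finset.card_insert_of_notMem (by simp), Finset.card_singleton]
  have hinj := Finset.injOn_of_card_image_eq (by rw [himg, hcardF, hcardF'])
  exact hinj ((hmemF t).mpr ht) ((hmemF t').mpr ht') heq

include hHP hBP in
lemma L1 (x : PosElem VG ↥G.edgeSet) {p : PosElem VH ↥H.edgeSet} (hp : SFour p)
    (hle : PosLe H εH (h x) p) :
    ∃ t, SFour t ∧ PosLe G εG x t ∧ h t = p := by
  obtain ⟨z, hz1, hz2⟩ := hBP x p hle
  obtain ⟨t, ht, hzt⟩ := exists_max_above z
  have h3 := hHP z t hzt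
  rw [hz2] at h3
  exact ⟨t, ht, hz1.trans hzt, S_max hp _ h3⟩


include hBP hsurj in
lemma nonemptyVG [Nonempty VH] : Nonempty VG := by
  obtain ⟨w0⟩ := ‹Nonempty VH›
  obtain ⟨x0, hx0⟩ := hsurj (.ver w0)
  cases x0 with
  | ver v => exact ⟨v⟩
  | verA v => exact ⟨v⟩
  | verB v => exact ⟨v⟩
  | edge1 e => exact ⟨(εG e).1⟩
  | edge2 e => exact ⟨(εG e).1⟩
  | top1 =>
    have hS := L_img_S h hBP (t := .top1) (Or.inl rfl)
    rw [hx0] at hS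
    rcases hS with h1 | h1 | h1 | h1 <;> simp at h1
  | top2 =>
    have hS := L_img_S h hBP (t := .top2) (Or.inr (Or.inl rfl))
    rw [hx0] at hS
    rcases hS with h1 | h1 | h1 | h1 <;> simp at h1
  | infA =>
    have hS := L_img_S h hBP (t := .infA) (Or.inr (Or.inr (Or.inl rfl)))
    rw [hx0] at hS
    rcases hS with h1 | h1 | h1 | h1 <;> simp at h1
  | infB =>
    have hS := L_img_S h hBP (t := .infB) (Or.inr (Or.inr (Or.inr rfl)))
    rw [hx0] at hS
    rcases hS with h1 | h1 | h1 | h1 <;> simp at h1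

include hεG hεH hHP hBP hsurj in
lemma hverA_weak (v : VG) : ∃ w, h (.verA v) = .verA w ∨ h (.verA v) = .verB w := by
  have hS1 : SFour (h .infA) := L_img_S h hBP (Or.inr (Or.inr (Or.inl rfl)))
  have hS2 : SFour (h .top1) := L_img_S h hBP (Or.inl rfl)
  have hS3 : SFour (h .top2) := L_img_S h hBP (Or.inr (Or.inl rfl))
  have d12 : h .infA ≠ h .top1 := fun hh => by
    simpa using inj_S h hHP hBP hsurj _ _ (Or.inr (Or.inr (Or.inl rfl))) (Or.inl rfl) hh
  have d13 : h .infA ≠ h .top2 := fun hh => by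
    simpa using inj_S h hHP hBP hsurj _ _ (Or.inr (Or.inr (Or.inl rfl)))
      (Or.inr (Or.inl rfl)) hh
  have d23 : h .top1 ≠ h .top2 := fun hh => by
    simpa using inj_S h hHP hBP hsurj _ _ (Or.inl rfl) (Or.inr (Or.inl rfl)) hh
  have hle1 : ple εH (h (.verA v)) (h .infA) := ple_of_le (hHP _ _ (.single (.verA_infA v)))
  have hle2 : ple εH (h (.verA v)) (h .top1) := ple_of_le (hHP _ _ (verA_le_top1 hεG v))
  have hle3 : ple εH (h (.verA v)) (h .top2) := ple_of_le (hHP _ _ (verA_le_top2 hεG v))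
  cases hE : h (.verA v) with
  | ver w =>
    have hQ : ∀ p : PosElem VH ↥H.edgeSet, SFour p →
        ∃ t, (t = .top1 ∨ t = .top2 ∨ t = .infA) ∧ h t = p := by
      intro p hp
      have hlep : PosLe H εH (h (.verA v)) p := by
        rw [hE]
        rcases hp with rfl | rfl | rfl | rfl
        · exact ver_le_top1 hεH w
        · exact ver_le_top2 hεH w
        · exact ver_le_infA w
        · exact ver_le_infB w
      obtain ⟨t, ht, hlt, htp⟩ := L1 h hHP hBP _ hp hlep
      have hpt := ple_of_le hlt
      rcases ht with rfl | rfl | rfl | rfl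
      · exact ⟨.top1, by tauto, htp⟩
      · exact ⟨.top2, by tauto, htp⟩
      · exact ⟨.infA, by tauto, htp⟩
      · exact (hpt : False).elim
    obtain ⟨t1, m1, e1⟩ := hQ .top1 (Or.inl rfl)
    obtain ⟨t2, m2, e2⟩ := hQ .top2 (Or.inr (Or.inl rfl))
    obtain ⟨t3, m3, e3⟩ := hQ .infA (Or.inr (Or.inr (Or.inl rfl)))
    obtain ⟨t4, m4, e4⟩ := hQ .infB (Or.inr (Or.inr (Or.inr rfl)))
    exact (pigeon43 h m1 m2 m3 m4 e1 e2 e3 e4 (by simp) (by simp) (by simp) (by simp)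
      (by simp) (by simp)).elim
  | verA w => exact ⟨w, Or.inl rfl⟩
  | verB w => exact ⟨w, Or.inr rfl⟩
  | edge1 f =>
    rw [hE] at hle1 hle2 hle3
    have force : ∀ q : PosElem VH ↥H.edgeSet, SFour q → ple εH (.edge1 f) q →
        q = .top1 ∨ q = .top2 := by
      rintro q (rfl | rfl | rfl | rfl) hpq
      · exact Or.inl rfl
      · exact Or.inr rfl
      · exact (hpq : False).elim
      · exact (hpq : False).elim
    exact (pigeon32 (fun x => x) (force _ hS1 hle1) (force _ hS2 hle2) (force _ hS3 hle3)
      rfl rfl rfl d12 d13 d23).elim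
  | edge2 f =>
    rw [hE] at hle1 hle2 hle3
    have force : ∀ q : PosElem VH ↥H.edgeSet, SFour q → ple εH (.edge2 f) q →
        q = .top1 ∨ q = .top2 := by
      rintro q (rfl | rfl | rfl | rfl) hpq
      · exact Or.inl rfl
      · exact Or.inr rfl
      · exact (hpq : False).elim
      · exact (hpq : False).elim
    exact (pigeon32 (fun x => x) (force _ hS1 hle1) (force _ hS2 hle2) (force _ hS3 hle3)
      rfl rfl rfl d12 d13 d23).elim
  | top1 =>
    rw [hE] at hle2 hle3
    exact absurd ((ple_top1_eq hle2).trans (ple_top1_eq hle3).symm) d23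
  | top2 =>
    rw [hE] at hle2 hle3
    exact absurd ((ple_top2_eq hle2).trans (ple_top2_eq hle3).symm) d23
  | infA =>
    rw [hE] at hle2 hle3
    exact absurd ((ple_infA_eq hle2).trans (ple_infA_eq hle3).symm) d23
  | infB =>
    rw [hE] at hle2 hle3
    exact absurd ((ple_infB_eq hle2).trans (ple_infB_eq hle3).symm) d23

include hεG hεH hHP hBP hsurj in
lemma hverB_weak (v : VG) : ∃ w, h (.verB v) = .verA w ∨ h (.verB v) = .verB w := by
  have hS1 : SFour (h .infB) := L_img_S h hBP (Or.inr (Or.inr (Or.inr rfl)))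
  have hS2 : SFour (h .top1) := L_img_S h hBP (Or.inl rfl)
  have hS3 : SFour (h .top2) := L_img_S h hBP (Or.inr (Or.inl rfl))
  have d12 : h .infB ≠ h .top1 := fun hh => by
    simpa using inj_S h hHP hBP hsurj _ _ (Or.inr (Or.inr (Or.inr rfl))) (Or.inl rfl) hh
  have d13 : h .infB ≠ h .top2 := fun hh => by
    simpa using inj_S h hHP hBP hsurj _ _ (Or.inr (Or.inr (Or.inr rfl)))
      (Or.inr (Or.inl rfl)) hh
  have d23 : h .top1 ≠ h .top2 := fun hh => by
    simpa using inj_S h hHP hBP hsurj _ _ (Or.inl rfl) (Or.inr (Or.inl rfl)) hh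
  have hle1 : ple εH (h (.verB v)) (h .infB) := ple_of_le (hHP _ _ (.single (.verB_infB v)))
  have hle2 : ple εH (h (.verB v)) (h .top1) := ple_of_le (hHP _ _ (verB_le_top1 hεG v))
  have hle3 : ple εH (h (.verB v)) (h .top2) := ple_of_le (hHP _ _ (verB_le_top2 hεG v))
  cases hE : h (.verB v) with
  | ver w =>
    have hQ : ∀ p : PosElem VH ↥H.edgeSet, SFour p →
        ∃ t, (t = .top1 ∨ t = .top2 ∨ t = .infB) ∧ h t = p := by
      intro p hp
      have hlep : PosLe H εH (h (.verB v)) p := by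
        rw [hE]
        rcases hp with rfl | rfl | rfl | rfl
        · exact ver_le_top1 hεH w
        · exact ver_le_top2 hεH w
        · exact ver_le_infA w
        · exact ver_le_infB w
      obtain ⟨t, ht, hlt, htp⟩ := L1 h hHP hBP _ hp hlep
      have hpt := ple_of_le hlt
      rcases ht with rfl | rfl | rfl | rfl
      · exact ⟨.top1, by tauto, htp⟩
      · exact ⟨.top2, by tauto, htp⟩
      · exact (hpt : False).elim
      · exact ⟨.infB, by tauto, htp⟩
    obtain ⟨t1, m1, e1⟩ := hQ .top1 (Or.inl rfl)
    obtain ⟨t2, m2, e2⟩ := hQ .top2 (Or.inr (Or.inl rfl))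
    obtain ⟨t3, m3, e3⟩ := hQ .infA (Or.inr (Or.inr (Or.inl rfl)))
    obtain ⟨t4, m4, e4⟩ := hQ .infB (Or.inr (Or.inr (Or.inr rfl)))
    exact (pigeon43 h m1 m2 m3 m4 e1 e2 e3 e4 (by simp) (by simp) (by simp) (by simp)
      (by simp) (by simp)).elim
  | verA w => exact ⟨w, Or.inl rfl⟩
  | verB w => exact ⟨w, Or.inr rfl⟩
  | edge1 f =>
    rw [hE] at hle1 hle2 hle3
    have force : ∀ q : PosElem VH ↥H.edgeSet, SFour q → ple εH (.edge1 f) q →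
        q = .top1 ∨ q = .top2 := by
      rintro q (rfl | rfl | rfl | rfl) hpq
      · exact Or.inl rfl
      · exact Or.inr rfl
      · exact (hpq : False).elim
      · exact (hpq : False).elim
    exact (pigeon32 (fun x => x) (force _ hS1 hle1) (force _ hS2 hle2) (force _ hS3 hle3)
      rfl rfl rfl d12 d13 d23).elim
  | edge2 f =>
    rw [hE] at hle1 hle2 hle3
    have force : ∀ q : PosElem VH ↥H.edgeSet, SFour q → ple εH (.edge2 f) q →
        q = .top1 ∨ q = .top2 := by
      rintro q (rfl | rfl | rfl | rfl) hpq
      · exact Or.inl rfl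
      · exact Or.inr rfl
      · exact (hpq : False).elim
      · exact (hpq : False).elim
    exact (pigeon32 (fun x => x) (force _ hS1 hle1) (force _ hS2 hle2) (force _ hS3 hle3)
      rfl rfl rfl d12 d13 d23).elim
  | top1 =>
    rw [hE] at hle2 hle3
    exact absurd ((ple_top1_eq hle2).trans (ple_top1_eq hle3).symm) d23
  | top2 =>
    rw [hE] at hle2 hle3
    exact absurd ((ple_top2_eq hle2).trans (ple_top2_eq hle3).symm) d23
  | infA =>
    rw [hE] at hle2 hle3
    exact absurd ((ple_infA_eq hle2).trans (ple_infA_eq hle3).symm) d23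
  | infB =>
    rw [hE] at hle2 hle3
    exact absurd ((ple_infB_eq hle2).trans (ple_infB_eq hle3).symm) d23

include hεG hεH hHP hBP hsurj in
lemma infA_mem (v0 : VG) : h .infA = .infA ∨ h .infA = .infB := by
  have hS : SFour (h .infA) := L_img_S h hBP (Or.inr (Or.inr (Or.inl rfl)))
  rcases hS with h1 | h1 | h1 | h1
  · obtain ⟨w, hw | hw⟩ := hverB_weak h hεG hεH hHP hBP hsurj v0
    all_goals {
      have hle : PosLe H εH (h (.verB v0)) (h .infA) := by
        rw [hw, h1]
        first
          | exact verA_le_top1 hεH w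
          | exact verB_le_top1 hεH w
      obtain ⟨t, ht, hlt, hteq⟩ := L1 h hHP hBP (.verB v0)
        (p := h .infA) (by rw [h1]; exact Or.inl rfl) hle
      have htA := inj_S h hHP hBP hsurj t .infA ht (Or.inr (Or.inr (Or.inl rfl))) hteq
      rw [htA] at hlt
      exact ((ple_of_le hlt : False)).elim }
  · obtain ⟨w, hw | hw⟩ := hverB_weak h hεG hεH hHP hBP hsurj v0
    all_goals {
      have hle : PosLe H εH (h (.verB v0)) (h .infA) := by
        rw [hw, h1]
        first
          | exact verA_le_top2 hεH w
          | exact verB_le_top2 hεH w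
      obtain ⟨t, ht, hlt, hteq⟩ := L1 h hHP hBP (.verB v0)
        (p := h .infA) (by rw [h1]; exact Or.inr (Or.inl rfl)) hle
      have htA := inj_S h hHP hBP hsurj t .infA ht (Or.inr (Or.inr (Or.inl rfl))) hteq
      rw [htA] at hlt
      exact ((ple_of_le hlt : False)).elim }
  · exact Or.inl h1
  · exact Or.inr h1


include hεH hHP hBP hsurj in
lemma himg_edge (x : PosElem VG ↥G.edgeSet)
    (hfilter : ∀ t, SFour t → PosLe G εG x t → t = .top1 ∨ t = .top2)
    (hxt1 : PosLe G εG x .top1) (hxt2 : PosLe G εG x .top2) :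
    ∃ f, h x = .edge1 f ∨ h x = .edge2 f := by
  have d23 : h .top1 ≠ h .top2 := fun hh => by
    simpa using inj_S h hHP hBP hsurj _ _ (Or.inl rfl) (Or.inr (Or.inl rfl)) hh
  have hle2 : ple εH (h x) (h .top1) := ple_of_le (hHP _ _ hxt1)
  have hle3 : ple εH (h x) (h .top2) := ple_of_le (hHP _ _ hxt2)
  have hQ : ∀ p : PosElem VH ↥H.edgeSet, SFour p → PosLe H εH (h x) p →
      ∃ t, (t = .top1 ∨ t = .top2) ∧ h t = p := by
    intro p hp hlep
    obtain ⟨t, ht, hlt, htp⟩ := L1 h hHP hBP _ hp hlep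
    rcases hfilter t ht hlt with rfl | rfl
    · exact ⟨.top1, Or.inl rfl, htp⟩
    · exact ⟨.top2, Or.inr rfl, htp⟩
  cases hE : h x with
  | edge1 f => exact ⟨f, Or.inl rfl⟩
  | edge2 f => exact ⟨f, Or.inr rfl⟩
  | ver w =>
    obtain ⟨t1, m1, e1⟩ := hQ .top1 (Or.inl rfl) (by rw [hE]; exact ver_le_top1 hεH w)
    obtain ⟨t2, m2, e2⟩ := hQ .infA (Or.inr (Or.inr (Or.inl rfl)))
      (by rw [hE]; exact ver_le_infA w)
    obtain ⟨t3, m3, e3⟩ := hQ .infB (Or.inr (Or.inr (Or.inr rfl)))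
      (by rw [hE]; exact ver_le_infB w)
    exact (pigeon32 h m1 m2 m3 e1 e2 e3 (by simp) (by simp) (by simp)).elim
  | verA w =>
    obtain ⟨t1, m1, e1⟩ := hQ .top1 (Or.inl rfl) (by rw [hE]; exact verA_le_top1 hεH w)
    obtain ⟨t2, m2, e2⟩ := hQ .top2 (Or.inr (Or.inl rfl)) (by rw [hE]; exact verA_le_top2 hεH w)
    obtain ⟨t3, m3, e3⟩ := hQ .infA (Or.inr (Or.inr (Or.inl rfl)))
      (by rw [hE]; exact .single (.verA_infA w))
    exact (pigeon32 h m1 m2 m3 e1 e2 e3 (by simp) (by simp) (by simp)).elim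
  | verB w =>
    obtain ⟨t1, m1, e1⟩ := hQ .top1 (Or.inl rfl) (by rw [hE]; exact verB_le_top1 hεH w)
    obtain ⟨t2, m2, e2⟩ := hQ .top2 (Or.inr (Or.inl rfl)) (by rw [hE]; exact verB_le_top2 hεH w)
    obtain ⟨t3, m3, e3⟩ := hQ .infB (Or.inr (Or.inr (Or.inr rfl)))
      (by rw [hE]; exact .single (.verB_infB w))
    exact (pigeon32 h m1 m2 m3 e1 e2 e3 (by simp) (by simp) (by simp)).elim
  | top1 =>
    rw [hE] at hle2 hle3
    exact absurd ((ple_top1_eq hle2).trans (ple_top1_eq hle3).symm) d23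
  | top2 =>
    rw [hE] at hle2 hle3
    exact absurd ((ple_top2_eq hle2).trans (ple_top2_eq hle3).symm) d23
  | infA =>
    rw [hE] at hle2 hle3
    exact absurd ((ple_infA_eq hle2).trans (ple_infA_eq hle3).symm) d23
  | infB =>
    rw [hE] at hle2 hle3
    exact absurd ((ple_infB_eq hle2).trans (ple_infB_eq hle3).symm) d23

include hεG hεH hHP hBP hsurj in
lemma backward_aux [Nonempty VH] (hA : h .infA = .infA) :
    ∃ g : VG → VH, Function.Surjective g ∧ IsLocallySurjHom G H g := by
  have hinj := inj_S h hHP hBP hsurj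
  obtain ⟨v0⟩ : Nonempty VG := nonemptyVG h hBP hsurj
  -- vertices go to vertices
  have hver : ∀ v : VG, ∃ w, h (.ver v) = .ver w := by
    intro v
    have hp : ∀ p : PosElem VH ↥H.edgeSet, SFour p → ple εH (h (.ver v)) p := by
      intro p hp
      obtain ⟨t, ht, htp⟩ := Lsurj' h hHP hsurj hp
      have hle : PosLe G εG (.ver v) t := by
        rcases ht with rfl | rfl | rfl | rfl
        · exact ver_le_top1 hεG v
        · exact ver_le_top2 hεG v
        · exact ver_le_infA v
        · exact ver_le_infB v
      have h2 := hHP _ _ hle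
      rw [htp] at h2
      exact ple_of_le h2
    have hpA := hp .infA (Or.inr (Or.inr (Or.inl rfl)))
    have hpB := hp .infB (Or.inr (Or.inr (Or.inr rfl)))
    cases hE : h (.ver v) with
    | ver w => exact ⟨w, rfl⟩
    | verA w => rw [hE] at hpB; exact (hpB : False).elim
    | verB w => rw [hE] at hpA; exact (hpA : False).elim
    | edge1 e => rw [hE] at hpA; exact (hpA : False).elim
    | edge2 e => rw [hE] at hpA; exact (hpA : False).elim
    | top1 => rw [hE] at hpA; exact (hpA : False).elim
    | top2 => rw [hE] at hpA; exact (hpA : False).elim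
    | infA => rw [hE] at hpB; exact (hpB : False).elim
    | infB => rw [hE] at hpA; exact (hpA : False).elim
  choose g hg using hver
  -- verA goes to verA
  have hvA : ∀ v : VG, h (.verA v) = .verA (g v) := by
    intro v
    obtain ⟨w, hw | hw⟩ := hverA_weak h hεG hεH hHP hBP hsurj v
    · have hple0 : ple εH (.ver (g v)) (.verA w) := by
        have h2 := hHP _ _ (.single (.ver_verA v) : PosLe G εG (.ver v) (.verA v))
        rw [hg v, hw] at h2
        exact ple_of_le h2
      rw [hw, (hple0 : g v = w)]
    · have hle1 : ple εH (h (.verA v)) (h .infA) :=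
        ple_of_le (hHP _ _ (.single (.verA_infA v)))
      rw [hw, hA] at hle1
      exact (hle1 : False).elim
  -- infB goes to infB
  have hBinfB : h .infB = .infB := by
    have hS : SFour (h .infB) := L_img_S h hBP (Or.inr (Or.inr (Or.inr rfl)))
    rcases hS with h1 | h1 | h1 | h1
    · have hle : PosLe H εH (h (.verA v0)) (h .infB) := by
        rw [hvA v0, h1]
        exact verA_le_top1 hεH (g v0)
      obtain ⟨t, ht, hlt, hteq⟩ := L1 h hHP hBP (.verA v0)
        (p := h .infB) (by rw [h1]; exact Or.inl rfl) hle
      have htB := hinj t .infB ht (Or.inr (Or.inr (Or.inr rfl))) hteq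
      rw [htB] at hlt
      exact ((ple_of_le hlt : False)).elim
    · have hle : PosLe H εH (h (.verA v0)) (h .infB) := by
        rw [hvA v0, h1]
        exact verA_le_top2 hεH (g v0)
      obtain ⟨t, ht, hlt, hteq⟩ := L1 h hHP hBP (.verA v0)
        (p := h .infB) (by rw [h1]; exact Or.inr (Or.inl rfl)) hle
      have htB := hinj t .infB ht (Or.inr (Or.inr (Or.inr rfl))) hteq
      rw [htB] at hlt
      exact ((ple_of_le hlt : False)).elim
    · exact absurd (hinj .infB .infA (Or.inr (Or.inr (Or.inr rfl)))
        (Or.inr (Or.inr (Or.inl rfl))) (h1.trans hA.symm)) (by simp)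
    · exact h1
  -- verB goes to verB
  have hvB : ∀ v : VG, h (.verB v) = .verB (g v) := by
    intro v
    obtain ⟨w, hw | hw⟩ := hverB_weak h hεG hεH hHP hBP hsurj v
    · have hle1 : ple εH (h (.verB v)) (h .infB) :=
        ple_of_le (hHP _ _ (.single (.verB_infB v)))
      rw [hw, hBinfB] at hle1
      exact (hle1 : False).elim
    · have hple0 : ple εH (.ver (g v)) (.verB w) := by
        have h2 := hHP _ _ (.single (.ver_verB v) : PosLe G εG (.ver v) (.verB v))
        rw [hg v, hw] at h2
        exact ple_of_le h2
      rw [hw, (hple0 : g v = w)]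
  -- edges go to edges
  have d23 : h .top1 ≠ h .top2 := fun hh => by
    simpa using hinj _ _ (Or.inl rfl) (Or.inr (Or.inl rfl)) hh
  have hedge : ∀ x : PosElem VG ↥G.edgeSet, (∃ e, x = .edge1 e ∨ x = .edge2 e) →
      ∃ f, h x = .edge1 f ∨ h x = .edge2 f := by
    rintro x ⟨e, rfl | rfl⟩
    · refine himg_edge h hεH hHP hBP hsurj _ ?_ (.single (.edge1_top1 e))
        (.single (.edge1_top2 e))
      rintro t (rfl | rfl | rfl | rfl) hlt
      · exact Or.inl rfl
      · exact Or.inr rfl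
      · exact ((ple_of_le hlt : False)).elim
      · exact ((ple_of_le hlt : False)).elim
    · refine himg_edge h hεH hHP hBP hsurj _ ?_ (.single (.edge2_top1 e))
        (.single (.edge2_top2 e))
      rintro t (rfl | rfl | rfl | rfl) hlt
      · exact Or.inl rfl
      · exact Or.inr rfl
      · exact ((ple_of_le hlt : False)).elim
      · exact ((ple_of_le hlt : False)).elim
  -- g is surjective
  have hgsurj : Function.Surjective g := by
    intro w
    obtain ⟨x, hx⟩ := hsurj (.ver w)
    cases x with
    | ver v =>
      refine ⟨v, ?_⟩
      have h2 := (hg v).symm.trans hx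
      injection h2
    | verA v => rw [hvA v] at hx; exact absurd hx (by simp)
    | verB v => rw [hvB v] at hx; exact absurd hx (by simp)
    | edge1 e =>
      obtain ⟨f, hf | hf⟩ := hedge _ ⟨e, Or.inl rfl⟩ <;> rw [hf] at hx <;>
        exact absurd hx (by simp)
    | edge2 e =>
      obtain ⟨f, hf | hf⟩ := hedge _ ⟨e, Or.inr rfl⟩ <;> rw [hf] at hx <;>
        exact absurd hx (by simp)
    | top1 =>
      rcases L_img_S h hBP (t := .top1) (Or.inl rfl) with h1 | h1 | h1 | h1 <;>
        rw [hx] at h1 <;> simp at h1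
    | top2 =>
      rcases L_img_S h hBP (t := .top2) (Or.inr (Or.inl rfl)) with h1 | h1 | h1 | h1 <;>
        rw [hx] at h1 <;> simp at h1
    | infA => rw [hA] at hx; exact absurd hx (by simp)
    | infB => rw [hBinfB] at hx; exact absurd hx (by simp)
  -- g is a graph homomorphism
  have ghom : ∀ u v, G.Adj u v → H.Adj (g u) (g v) := by
    have key : ∀ e : ↥G.edgeSet, H.Adj (g (εG e).1) (g (εG e).2) := by
      intro e
      obtain ⟨f, hf | hf⟩ := hedge _ ⟨e, Or.inl rfl⟩
      · have u1 : ple εH (h (.verA (εG e).1)) (h (.edge1 e)) :=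
          ple_of_le (hHP _ _ (.single (.ua_edge1 e)))
        have u2 : ple εH (h (.verB (εG e).2)) (h (.edge1 e)) :=
          ple_of_le (hHP _ _ (.single (.vb_edge1 e)))
        rw [hvA, hf] at u1
        rw [hvB, hf] at u2
        rw [(u1 : g (εG e).1 = (εH f).1), (u2 : g (εG e).2 = (εH f).2)]
        exact adj_eps hεH f
      · have u1 : ple εH (h (.verA (εG e).1)) (h (.edge1 e)) :=
          ple_of_le (hHP _ _ (.single (.ua_edge1 e)))
        have u2 : ple εH (h (.verB (εG e).2)) (h (.edge1 e)) :=
          ple_of_le (hHP _ _ (.single (.vb_edge1 e)))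
        rw [hvA, hf] at u1
        rw [hvB, hf] at u2
        rw [(u1 : g (εG e).1 = (εH f).2), (u2 : g (εG e).2 = (εH f).1)]
        exact (adj_eps hεH f).symm
    intro u v huv
    obtain ⟨e, ⟨h1, h2⟩ | ⟨h1, h2⟩⟩ := incident hεG huv
    · rw [h1, h2]; exact key e
    · rw [h1, h2]; exact (key e).symm
  -- g is locally surjective
  have gbp : ∀ u w, H.Adj (g u) w → ∃ v, G.Adj u v ∧ g v = w := by
    intro u w huw
    obtain ⟨f, ⟨h1, h2⟩ | ⟨h1, h2⟩⟩ := incident hεH huw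
    · have hle : PosLe H εH (h (.verA u)) (.edge1 f) := by
        rw [hvA u, h1]
        exact .single (.ua_edge1 f)
      obtain ⟨z, hz1, hz2⟩ := hBP (.verA u) _ hle
      have hzp := ple_of_le hz1
      cases z with
      | ver w' => rw [hg w'] at hz2; exact absurd hz2 (by simp)
      | verA w' => rw [hvA w'] at hz2; exact absurd hz2 (by simp)
      | verB w' => exact (hzp : False).elim
      | edge1 e =>
        have hu : u = (εG e).1 := hzp
        have u2 : ple εH (.verB (g (εG e).2)) (.edge1 f) := by
          have h3 := ple_of_le (hHP _ _ (.single (.vb_edge1 e)))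
          rw [hvB, hz2] at h3
          exact h3
        exact ⟨(εG e).2, by rw [hu]; exact adj_eps hεG e,
          (u2 : g (εG e).2 = (εH f).2).trans h2.symm⟩
      | edge2 e =>
        have hu : u = (εG e).2 := hzp
        have u2 : ple εH (.verB (g (εG e).1)) (.edge1 f) := by
          have h3 := ple_of_le (hHP _ _ (.single (.ub_edge2 e)))
          rw [hvB, hz2] at h3
          exact h3
        exact ⟨(εG e).1, by rw [hu]; exact (adj_eps hεG e).symm,
          (u2 : g (εG e).1 = (εH f).2).trans h2.symm⟩
      | top1 =>
        rcases L_img_S h hBP (t := .top1) (Or.inl rfl) with hq | hq | hq | hq <;>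
          rw [hz2] at hq <;> simp at hq
      | top2 =>
        rcases L_img_S h hBP (t := .top2) (Or.inr (Or.inl rfl)) with hq | hq | hq | hq <;>
          rw [hz2] at hq <;> simp at hq
      | infA => rw [hA] at hz2; exact absurd hz2 (by simp)
      | infB => rw [hBinfB] at hz2; exact absurd hz2 (by simp)
    · have hle : PosLe H εH (h (.verA u)) (.edge2 f) := by
        rw [hvA u, h1]
        exact .single (.va_edge2 f)
      obtain ⟨z, hz1, hz2⟩ := hBP (.verA u) _ hle
      have hzp := ple_of_le hz1
      cases z with
      | ver w' => rw [hg w'] at hz2; exact absurd hz2 (by simp)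
      | verA w' => rw [hvA w'] at hz2; exact absurd hz2 (by simp)
      | verB w' => exact (hzp : False).elim
      | edge1 e =>
        have hu : u = (εG e).1 := hzp
        have u2 : ple εH (.verB (g (εG e).2)) (.edge2 f) := by
          have h3 := ple_of_le (hHP _ _ (.single (.vb_edge1 e)))
          rw [hvB, hz2] at h3
          exact h3
        exact ⟨(εG e).2, by rw [hu]; exact adj_eps hεG e,
          (u2 : g (εG e).2 = (εH f).1).trans h2.symm⟩
      | edge2 e =>
        have hu : u = (εG e).2 := hzp
        have u2 : ple εH (.verB (g (εG e).1)) (.edge2 f) := by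
          have h3 := ple_of_le (hHP _ _ (.single (.ub_edge2 e)))
          rw [hvB, hz2] at h3
          exact h3
        exact ⟨(εG e).1, by rw [hu]; exact (adj_eps hεG e).symm,
          (u2 : g (εG e).1 = (εH f).1).trans h2.symm⟩
      | top1 =>
        rcases L_img_S h hBP (t := .top1) (Or.inl rfl) with hq | hq | hq | hq <;>
          rw [hz2] at hq <;> simp at hq
      | top2 =>
        rcases L_img_S h hBP (t := .top2) (Or.inr (Or.inl rfl)) with hq | hq | hq | hq <;>
          rw [hz2] at hq <;> simp at hq
      | infA => rw [hA] at hz2; exact absurd hz2 (by simp)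
      | infB => rw [hBinfB] at hz2; exact absurd hz2 (by simp)
  exact ⟨g, hgsurj, ghom, gbp⟩


end Backward

/-- the a/b swap automorphism of `Pos(G)`. -/
def swapEl {V E : Type} : PosElem V E → PosElem V E
  | .ver v => .ver v
  | .verA v => .verB v
  | .verB v => .verA v
  | .edge1 e => .edge2 e
  | .edge2 e => .edge1 e
  | .top1 => .top1
  | .top2 => .top2
  | .infA => .infB
  | .infB => .infA

lemma swap_invol {V E : Type} (x : PosElem V E) : swapEl (swapEl x) = x := by
  cases x <;> rfl

lemma swap_cov {ε : ↥G.edgeSet → V × V} {x y : PosElem V ↥G.edgeSet}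
    (hcov : PosCov G ε x y) : PosCov G ε (swapEl x) (swapEl y) := by
  cases hcov with
  | ver_verA v => exact .ver_verB v
  | ver_verB v => exact .ver_verA v
  | verA_infA v => exact .verB_infB v
  | verB_infB v => exact .verA_infA v
  | edge1_top1 e => exact .edge2_top1 e
  | edge1_top2 e => exact .edge2_top2 e
  | edge2_top1 e => exact .edge1_top1 e
  | edge2_top2 e => exact .edge1_top2 e
  | isolA_top1 v hv => exact .isolB_top1 v hv
  | isolA_top2 v hv => exact .isolB_top2 v hv
  | isolB_top1 v hv => exact .isolA_top1 v hv
  | isolB_top2 v hv => exact .isolA_top2 v hv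
  | ua_edge1 e => exact .ub_edge2 e
  | vb_edge1 e => exact .va_edge2 e
  | ub_edge2 e => exact .ua_edge1 e
  | va_edge2 e => exact .vb_edge1 e

lemma swap_mono {ε : ↥G.edgeSet → V × V} {x y : PosElem V ↥G.edgeSet}
    (hle : PosLe G ε x y) : PosLe G ε (swapEl x) (swapEl y) := by
  induction hle with
  | refl => exact .refl
  | tail _ hcov ih => exact ih.tail (swap_cov hcov)

section Backward2

variable {VG VH : Type} {G : SimpleGraph VG} {H : SimpleGraph VH}
  {εG : ↥G.edgeSet → VG × VG} {εH : ↥H.edgeSet → VH × VH}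
  (h : PosElem VG ↥G.edgeSet → PosElem VH ↥H.edgeSet)
  (hεG : OrientOK G εG) (hεH : OrientOK H εH)
  (hHP : ∀ x y, PosLe G εG x y → PosLe H εH (h x) (h y))
  (hBP : ∀ x y, PosLe H εH (h x) y → ∃ z, PosLe G εG x z ∧ h z = y)
  (hsurj : Function.Surjective h)

include hεG hεH hHP hBP hsurj in
lemma backward [Nonempty VH] :
    ∃ g : VG → VH, Function.Surjective g ∧ IsLocallySurjHom G H g := by
  obtain ⟨v0⟩ : Nonempty VG := nonemptyVG h hBP hsurj
  have hHP' : ∀ x y, PosLe G εG x y →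
      PosLe H εH (h (swapEl x)) (h (swapEl y)) :=
    fun x y hxy => hHP _ _ (swap_mono hxy)
  have hBP' : ∀ x y, PosLe H εH (h (swapEl x)) y →
      ∃ z, PosLe G εG x z ∧ h (swapEl z) = y := by
    intro x y hle
    obtain ⟨z, hz1, hz2⟩ := hBP (swapEl x) y hle
    refine ⟨swapEl z, ?_, by rwa [swap_invol]⟩
    have h2 := swap_mono hz1
    rwa [swap_invol] at h2
  have hsurj' : Function.Surjective (fun x => h (swapEl x)) := by
    intro y
    obtain ⟨x, hx⟩ := hsurj y
    exact ⟨swapEl x, by simpa [swap_invol] using hx⟩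
  rcases infA_mem h hεG hεH hHP hBP hsurj v0 with hA | hA
  · exact backward_aux h hεG hεH hHP hBP hsurj hA
  · have hA' : h (swapEl (.infA : PosElem VG ↥G.edgeSet)) = .infA := by
      rcases infA_mem (fun x => h (swapEl x)) hεG hεH hHP' hBP' hsurj' v0 with h1 | h1
      · exact h1
      · have h2 : h .infB = .infB := h1
        have h3 : h .infA = h .infB := by rw [hA, h2]
        have := inj_S h hHP hBP hsurj .infA .infB (Or.inr (Or.inr (Or.inl rfl)))
          (Or.inr (Or.inr (Or.inr rfl))) h3
        simp at this
    exact backward_aux (fun x => h (swapEl x)) hεG hεH hHP' hBP' hsurj' hA'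

end Backward2
end PosAux

theorem lsh_iff_pMorphism {VG VH : Type} [Fintype VG] [Fintype VH] [Nonempty VH]
    (G : SimpleGraph VG) (H : SimpleGraph VH)
    (εG : ↥G.edgeSet → VG × VG) (hεG : OrientOK G εG)
    (εH : ↥H.edgeSet → VH × VH) (hεH : OrientOK H εH) :
    (∃ g : VG → VH, Function.Surjective g ∧ IsLocallySurjHom G H g) ↔
    (∃ h : PosElem VG ↥G.edgeSet → PosElem VH ↥H.edgeSet,
      Function.Surjective h ∧ IsPMorphismRel (PosLe G εG) (PosLe H εH) h) := by
  constructor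
  · rintro ⟨g, hgsurj, hlsh⟩
    have hg1 : ∀ u v : VG, G.Adj u v → H.Adj (g u) (g v) := hlsh.1
    have hg2 : ∀ (u : VG) (w : VH), H.Adj (g u) w → ∃ v : VG, G.Adj u v ∧ g v = w := hlsh.2
    have hadj : ∀ e : ↥G.edgeSet, H.Adj (g (εG e).1) (g (εG e).2) :=
      fun e => hg1 _ _ (PosAux.adj_eps hεG e)
    refine ⟨PosAux.hMap εH hadj, PosAux.hMap_surj hεG hεH hadj hg2 hgsurj, ?_, ?_⟩
    · exact fun x y hxy => PosAux.hMap_mono hεH hadj hg2 hxy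
    · exact fun x y hle => PosAux.hMap_bp hεG hεH hadj hg2 x y hle
  · rintro ⟨h, hsurj, hpm⟩
    exact PosAux.backward h hεG hεH hpm.1 hpm.2 hsurj
end
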